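/- arXiv:1105.4785 — 9 statements merged into one kernel-verified Lean document; each statement's English description precedes it below -/
import Mathlib

section
/- If Γ is a finitely generated rigid group, then Γ is FAb; that is, every finite-index subgroup Λ of Γ has finite abelianization Λ/[Λ,Λ]. -/
/-- Two `n`-dimensional complex representations are equivalent if they are
conjugate by an element of `GL_n(ℂ)`. -/
def RepEquiv {G : Type*} [Group G] {n : ℕ}
    (ρ₁ ρ₂ : G →* Matrix.GeneralLinearGroup (Fin n) ℂ) : Prop :=
  ∃ M : Matrix.GeneralLinearGroup (Fin n) ℂ, ∀ g : G, ρ₁ g = M * ρ₂ g * M⁻¹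

/-- An `n`-dimensional complex representation is irreducible if the only
invariant subspaces of `ℂ^n` are `⊥` and `⊤`. -/
def IsIrreducibleRep {G : Type*} [Group G] {n : ℕ}
    (ρ : G →* Matrix.GeneralLinearGroup (Fin n) ℂ) : Prop :=
  ∀ W : Submodule ℂ (Fin n → ℂ),
    (∀ g : G, ∀ v ∈ W, Matrix.mulVec (ρ g : Matrix (Fin n) (Fin n) ℂ) v ∈ W) →
    W = ⊥ ∨ W = ⊤

/-- A group is rigid if for every `n ≥ 1` it has, up to equivalence, only
finitely many irreducible `n`-dimensional complex representations. -/
def IsRigid (G : Type*) [Group G] : Prop :=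
  ∀ n : ℕ, 1 ≤ n →
    ∃ S : Set (G →* Matrix.GeneralLinearGroup (Fin n) ℂ), S.Finite ∧
      ∀ ρ : G →* Matrix.GeneralLinearGroup (Fin n) ℂ,
        IsIrreducibleRep ρ → ∃ σ ∈ S, RepEquiv ρ σ

/-- A group is FAb if every finite-index subgroup has finite abelianization. -/
def IsFAb (G : Type*) [Group G] : Prop :=
  ∀ Λ : Subgroup G, Λ.FiniteIndex → Finite (Abelianization Λ)


open Function Module Matrix
open scoped DirectSum
set_option linter.unusedSectionVars false



lemma aux_finite_abelianization_of_le {Γ : Type*} [Group Γ] {N Λ : Subgroup Γ}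
    (hle : N ≤ Λ) [N.FiniteIndex] (h : Finite (Abelianization ↥N)) :
    Finite (Abelianization ↥Λ) := by
  classical
  set φ : ↥N →* Abelianization ↥Λ :=
    (Abelianization.of).comp (Subgroup.inclusion hle) with hφ
  -- the range of φ is finite
  have hsub : (φ.range : Set (Abelianization ↥Λ)) ⊆ Set.range ⇑(Abelianization.lift φ) := by
    rintro _ ⟨x, rfl⟩
    exact ⟨Abelianization.of x, Abelianization.lift_apply_of φ x⟩
  have hfin : (φ.range : Set (Abelianization ↥Λ)).Finite :=
    Set.Finite.subset (Set.finite_range _) hsub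
  haveI : Finite ↥φ.range := hfin.to_subtype
  -- the range of φ has finite index
  have hrange : φ.range = (N.subgroupOf Λ).map (Abelianization.of (G := ↥Λ)) := by
    rw [← Subgroup.inclusion_range hle, hφ, MonoidHom.range_eq_map, ← Subgroup.map_map,
      ← MonoidHom.range_eq_map]
  have hofsurj : Surjective ⇑(Abelianization.of (G := ↥Λ)) := by
    intro y
    exact QuotientGroup.induction_on y fun g => ⟨g, rfl⟩
  have hidx : φ.range.index ≠ 0 := by
    intro h0
    have hdvd := Subgroup.index_map_dvd (N.subgroupOf Λ) hofsurj
    rw [← hrange, h0] at hdvd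
    exact (Subgroup.instFiniteIndex_subgroupOf N Λ).index_ne_zero (zero_dvd_iff.mp hdvd)
  have hcard : Nat.card (Abelianization ↥Λ) ≠ 0 := by
    rw [← Subgroup.index_mul_card φ.range]
    exact mul_ne_zero hidx (Nat.card_ne_zero.2 ⟨⟨1⟩, inferInstance⟩)
  exact Nat.finite_of_card_ne_zero hcard

lemma aux_exists_surj_toZ (A : Type*) [CommGroup A] [Group.FG A] [Infinite A] :
    ∃ π : A →* Multiplicative ℤ, Surjective π := by
  classical
  haveI : AddGroup.FG (Additive A) := GroupFG.iff_add_fg.mp ‹_›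
  obtain ⟨n, ι, fι, p, hp, e, ⟨f⟩⟩ :=
    AddCommGroup.equiv_free_prod_directSum_zmod (Additive A)
  haveI : ∀ i, NeZero (p i ^ e i) := fun i => ⟨pow_ne_zero _ (hp i).ne_zero⟩
  haveI : Finite (⨁ i : ι, ZMod (p i ^ e i)) :=
    Finite.of_equiv _ (DFinsupp.equivFunOnFintype (ι := ι)).symm
  have hn : n ≠ 0 := by
    rintro rfl
    haveI : Finite ((Fin 0 →₀ ℤ) × ⨁ i : ι, ZMod (p i ^ e i)) := by
      haveI : Subsingleton (Fin 0 →₀ ℤ) := ⟨fun a b => Finsupp.ext fun i => Fin.elim0 i⟩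
      infer_instance
    exact not_finite_iff_infinite.mpr ‹Infinite A› (Finite.of_equiv _ f.toEquiv.symm)
  -- the surjection onto ℤ
  let g : Additive A →+ ℤ :=
    (Finsupp.applyAddHom (⟨0, Nat.pos_of_ne_zero hn⟩ : Fin n)).comp
      ((AddMonoidHom.fst _ _).comp f.toAddMonoidHom)
  have hg : Surjective ⇑g := by
    intro z
    refine ⟨f.symm (Finsupp.single ⟨0, Nat.pos_of_ne_zero hn⟩ z, 0), ?_⟩
    simp [g]
  refine ⟨MonoidHom.mk' (fun a => Multiplicative.ofAdd (g (Additive.ofMul a))) ?_, ?_⟩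
  · intro a b
    simp [ofMul_mul, map_add, ofAdd_add]
  · intro z
    obtain ⟨a, ha⟩ := hg (Multiplicative.toAdd z)
    exact ⟨Additive.toMul a, by simp [ha]⟩



section Induced

variable {Γ : Type*} [Group Γ] (N : Subgroup Γ) [N.Normal]
variable [Fintype (Γ ⧸ N)] [DecidablePred (· ∈ N)]

/-- A representative of each coset. -/
noncomputable def repr' : (Γ ⧸ N) → Γ := Quotient.out

lemma repr'_spec (i : Γ ⧸ N) : ((repr' N i : Γ) : Γ ⧸ N) = i := QuotientGroup.out_eq' i

lemma mem_repr'_iff (g : Γ) (i j : Γ ⧸ N) :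
    (repr' N i)⁻¹ * g * repr' N j ∈ N ↔ ((g * repr' N j : Γ) : Γ ⧸ N) = i := by
  rw [mul_assoc, ← QuotientGroup.eq, repr'_spec, eq_comm]

/-- The matrix of the induced representation. -/
noncomputable def Rmat (χ : ↥N →* ℂˣ) (g : Γ) : Matrix (Γ ⧸ N) (Γ ⧸ N) ℂ :=
  fun i j => if h : (repr' N i)⁻¹ * g * repr' N j ∈ N then (χ ⟨_, h⟩ : ℂ) else 0

variable (χ : ↥N →* ℂˣ)

lemma Rmat_one [DecidableEq (Γ ⧸ N)] : Rmat N χ 1 = 1 := by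
  ext i j
  rcases eq_or_ne i j with rfl | hij
  · have h : (repr' N i)⁻¹ * 1 * repr' N i ∈ N := by
      rw [mem_repr'_iff, one_mul, repr'_spec]
    rw [Matrix.one_apply_eq, Rmat, dif_pos h]
    have : (⟨(repr' N i)⁻¹ * 1 * repr' N i, h⟩ : ↥N) = 1 := by
      ext; simp
    rw [this, _root_.map_one, Units.val_one]
  · have h : ¬ ((repr' N i)⁻¹ * 1 * repr' N j ∈ N) := by
      rw [mem_repr'_iff, one_mul, repr'_spec]
      exact fun hc => hij hc.symm
    rw [Matrix.one_apply_ne hij, Rmat, dif_neg h]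

lemma Rmat_mul [DecidableEq (Γ ⧸ N)] (g h : Γ) :
    Rmat N χ (g * h) = Rmat N χ g * Rmat N χ h := by
  ext i k
  rw [Matrix.mul_apply]
  set j₀ : Γ ⧸ N := ((h * repr' N k : Γ) : Γ ⧸ N) with hj₀
  have h2 : (repr' N j₀)⁻¹ * h * repr' N k ∈ N := by rw [mem_repr'_iff]
  rw [Finset.sum_eq_single j₀]
  · by_cases hc : (repr' N i)⁻¹ * (g * h) * repr' N k ∈ N
    · -- the (i, j₀) entry matches
      have h1 : (repr' N i)⁻¹ * g * repr' N j₀ ∈ N := by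
        rw [mem_repr'_iff]
        have e1 : ((g * repr' N j₀ : Γ) : Γ ⧸ N) = ((g * (h * repr' N k) : Γ) : Γ ⧸ N) := by
          rw [QuotientGroup.eq]
          have : (g * repr' N j₀)⁻¹ * (g * (h * repr' N k)) =
              (repr' N j₀)⁻¹ * h * repr' N k := by group
          rw [this]; exact h2
        rw [e1]
        rw [mem_repr'_iff] at hc
        rw [← hc]
        congr 1
        group
      rw [Rmat, Rmat, Rmat, dif_pos hc, dif_pos h1, dif_pos h2, ← Units.val_mul, ← _root_.map_mul]
      congr 2
      ext
      show (repr' N i)⁻¹ * (g * h) * repr' N k =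
        ((repr' N i)⁻¹ * g * repr' N j₀) * ((repr' N j₀)⁻¹ * h * repr' N k)
      group
    · -- both sides are 0
      have h1 : ¬ ((repr' N i)⁻¹ * g * repr' N j₀ ∈ N) := by
        intro h1
        apply hc
        have : (repr' N i)⁻¹ * (g * h) * repr' N k =
            ((repr' N i)⁻¹ * g * repr' N j₀) * ((repr' N j₀)⁻¹ * h * repr' N k) := by group
        rw [this]
        exact N.mul_mem h1 h2
      rw [Rmat, Rmat, dif_neg hc, dif_neg h1, zero_mul]
  · intro j _ hj
    have : ¬ ((repr' N j)⁻¹ * h * repr' N k ∈ N) := by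
      rw [mem_repr'_iff]
      exact fun hc => hj hc.symm
    rw [Rmat, Rmat, dif_neg this, mul_zero]
  · intro hmem
    exact absurd (Finset.mem_univ j₀) hmem

/-- The conjugation automorphism of `N` attached to a coset. -/
noncomputable def conjAut (i : Γ ⧸ N) : ↥N ≃* ↥N := MulAut.conjNormal (repr' N i)⁻¹

lemma conjAut_coe (i : Γ ⧸ N) (x : ↥N) :
    (conjAut N i x : Γ) = (repr' N i)⁻¹ * x * repr' N i := by
  show ((MulAut.conjNormal (repr' N i)⁻¹ x : ↥N) : Γ) = _
  rw [MulAut.conjNormal_apply, inv_inv]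

lemma Rmat_coe_diag [DecidableEq (Γ ⧸ N)] (x : ↥N) :
    Rmat N χ (x : Γ) = Matrix.diagonal (fun i => (χ (conjAut N i x) : ℂ)) := by
  ext i j
  rcases eq_or_ne i j with rfl | hij
  · have h : (repr' N i)⁻¹ * (x : Γ) * repr' N i ∈ N := by
      have := Subgroup.Normal.conj_mem ‹N.Normal› (x : Γ) x.2 (repr' N i)⁻¹
      rwa [inv_inv] at this
    rw [Matrix.diagonal_apply_eq, Rmat, dif_pos h]
    congr 2
    ext
    rw [conjAut_coe]
  · have h : ¬ ((repr' N i)⁻¹ * (x : Γ) * repr' N j ∈ N) := by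
      rw [mem_repr'_iff]
      have : (((x : Γ) * repr' N j : Γ) : Γ ⧸ N) = ((repr' N j : Γ) : Γ ⧸ N) := by
        rw [QuotientGroup.eq]
        have : ((x : Γ) * repr' N j)⁻¹ * repr' N j = (repr' N j)⁻¹ * (x : Γ)⁻¹ * repr' N j := by
          group
        rw [this]
        have := Subgroup.Normal.conj_mem ‹N.Normal› ((x : Γ))⁻¹ (N.inv_mem x.2) (repr' N j)⁻¹
        rwa [inv_inv] at this
      rw [this, repr'_spec]
      exact fun hc => hij hc.symm
    rw [Matrix.diagonal_apply_ne _ hij, Rmat, dif_neg h]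

/-- The induced representation as a monoid hom to matrices. -/
noncomputable def indRep [DecidableEq (Γ ⧸ N)] : Γ →* Matrix (Γ ⧸ N) (Γ ⧸ N) ℂ where
  toFun := Rmat N χ
  map_one' := Rmat_one N χ
  map_mul' := Rmat_mul N χ

end Induced

lemma indRep_diag {Γ : Type*} [Group Γ] (N : Subgroup Γ) [N.Normal]
    [Fintype (Γ ⧸ N)] [DecidablePred (· ∈ N)] (χ : ↥N →* ℂˣ) [DecidableEq (Γ ⧸ N)] (x : ↥N) :
    indRep N χ (x : Γ) = Matrix.diagonal (fun i => (χ (conjAut N i x) : ℂ)) :=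
  Rmat_coe_diag N χ x



lemma aux_sum_mulVec {ι α : Type*} [Fintype ι] [NonUnitalNonAssocSemiring α]
    {β : Type*} (s : Finset β) (A : β → Matrix ι ι α) (v : ι → α) :
    (∑ b ∈ s, A b) *ᵥ v = ∑ b ∈ s, (A b) *ᵥ v := by
  classical
  induction s using Finset.induction_on with
  | empty => simp [Matrix.zero_mulVec]
  | insert _ _ hb ih =>
    rw [Finset.sum_insert hb, Finset.sum_insert hb, Matrix.add_mulVec, ih]

lemma aux_diag_prod_mem {ι : Type*} [Fintype ι] [DecidableEq ι] {β : Type*}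
    (s : Finset β) (f : β → ι → ℂ) (W : Submodule ℂ (ι → ℂ))
    (hA : ∀ b ∈ s, ∀ w ∈ W, (Matrix.diagonal (f b)) *ᵥ w ∈ W) {v : ι → ℂ} (hv : v ∈ W) :
    (Matrix.diagonal (∏ b ∈ s, f b)) *ᵥ v ∈ W := by
  classical
  induction s using Finset.induction_on with
  | empty =>
    rw [Finset.prod_empty, Pi.one_def, Matrix.diagonal_one, Matrix.one_mulVec]
    exact hv
  | @insert a s ha ih =>
    rw [Finset.prod_insert ha,
      show f a * ∏ x ∈ s, f x = fun i => f a i * (∏ x ∈ s, f x) i from rfl,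
      ← Matrix.diagonal_mul_diagonal, ← Matrix.mulVec_mulVec]
    exact hA a (Finset.mem_insert_self a s)
      _ (ih fun b hb => hA b (Finset.mem_insert_of_mem hb))

lemma aux_adapted_basis {ι X : Type*} [Fintype ι] [DecidableEq ι] [Nonempty ι] [Nonempty X]
    (κ : ι → X → ℂ) (W : Submodule ℂ (ι → ℂ))
    (hW : ∀ x : X, ∀ v ∈ W, Matrix.diagonal (fun i => κ i x) *ᵥ v ∈ W) :
    ∃ (m : ℕ) (B : Basis (Fin m) ℂ ↥W) (lab : Fin m → ι),
      ∀ (k : Fin m) (x : X),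
        Matrix.diagonal (fun i => κ i x) *ᵥ ((B k : ι → ℂ)) = κ (lab k) x • (B k : ι → ℂ) := by
  classical
  set S : Set (ι → ℂ) := {w | w ∈ W ∧ ∃ i : ι,
    ∀ x, Matrix.diagonal (fun i' => κ i' x) *ᵥ w = κ i x • w} with hS
  have hSW : S ⊆ (W : Set (ι → ℂ)) := fun w hw => hw.1
  -- the projections onto the simultaneous eigenspaces
  set Φ : Finset (X → ℂ) := Finset.image κ Finset.univ with hΦ
  set P : (X → ℂ) → Matrix ι ι ℂ :=
    fun φ => Matrix.diagonal (fun i => if κ i = φ then 1 else 0) with hP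
  have hPapp : ∀ φ (v : ι → ℂ) (i : ι), (P φ *ᵥ v) i = if κ i = φ then v i else 0 := by
    intro φ v i
    simp only [hP, Matrix.mulVec_diagonal]
    rcases eq_or_ne (κ i) φ with h | h
    · rw [if_pos h, if_pos h, one_mul]
    · rw [if_neg h, if_neg h, zero_mul]
  have hPsum : ∑ φ ∈ Φ, P φ = 1 := by
    ext i j
    rw [Matrix.sum_apply]
    rcases eq_or_ne i j with rfl | hij
    · rw [Matrix.one_apply_eq]
      have h1 : ∀ φ ∈ Φ, P φ i i = if φ = κ i then 1 else 0 := by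
        intro φ _
        simp only [hP, Matrix.diagonal_apply_eq]
        simp [eq_comm]
      rw [Finset.sum_congr rfl h1, Finset.sum_ite_eq' Φ (κ i) (fun _ => (1 : ℂ))]
      simp [hΦ]
    · rw [Matrix.one_apply_ne hij]
      apply Finset.sum_eq_zero
      intro φ _
      simp only [hP]
      rw [Matrix.diagonal_apply_ne _ hij]
  have hPmem : ∀ φ ∈ Φ, ∀ w ∈ W, (P φ) *ᵥ w ∈ W := by
    intro φ hφ w hw
    have hsel : ∀ ψ ∈ Φ.erase φ, ∃ x, φ x ≠ ψ x := by
      intro ψ hψ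
      by_contra hc
      push_neg at hc
      exact (Finset.ne_of_mem_erase hψ) (funext fun x => (hc x).symm)
    choose! sel hselspec using hsel
    set f : (X → ℂ) → ι → ℂ :=
      fun ψ i => (φ (sel ψ) - ψ (sel ψ))⁻¹ * (κ i (sel ψ) - ψ (sel ψ)) with hf
    have hprod : Matrix.diagonal (∏ ψ ∈ Φ.erase φ, f ψ) = P φ := by
      simp only [hP]
      apply congrArg Matrix.diagonal
      funext i
      rw [Finset.prod_apply]
      rcases eq_or_ne (κ i) φ with hiφ | hiφ
      · rw [if_pos hiφ]
        apply Finset.prod_eq_one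
        intro ψ hψ
        simp only [hf, hiφ]
        exact inv_mul_cancel₀ (sub_ne_zero.2 (hselspec ψ hψ))
      · rw [if_neg hiφ]
        have hmem : κ i ∈ Φ.erase φ :=
          Finset.mem_erase.2 ⟨hiφ, Finset.mem_image_of_mem κ (Finset.mem_univ i)⟩
        apply Finset.prod_eq_zero hmem
        simp only [hf]
        rw [sub_self, mul_zero]
    rw [← hprod]
    apply aux_diag_prod_mem _ _ _ _ hw
    intro ψ hψ u hu
    have heq : Matrix.diagonal (f ψ) *ᵥ u = (φ (sel ψ) - ψ (sel ψ))⁻¹ •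
        (Matrix.diagonal (fun i => κ i (sel ψ)) *ᵥ u)
        - ((φ (sel ψ) - ψ (sel ψ))⁻¹ * ψ (sel ψ)) • u := by
      funext i
      simp only [hf, Matrix.mulVec_diagonal, Pi.sub_apply, Pi.smul_apply, smul_eq_mul]
      ring
    rw [heq]
    exact Submodule.sub_mem _ (Submodule.smul_mem _ _ (hW _ _ hu)) (Submodule.smul_mem _ _ hu)
  -- every element of W is a sum of simultaneous eigenvectors in W
  have hspan : (W : Set (ι → ℂ)) ⊆ (Submodule.span ℂ S : Set (ι → ℂ)) := by
    intro v hv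
    have hsum := congrArg (fun M => M *ᵥ v) hPsum
    rw [aux_sum_mulVec] at hsum
    have hv2 : v = ∑ φ ∈ Φ, (P φ) *ᵥ v := by
      rw [hsum, Matrix.one_mulVec]
    rw [hv2]
    apply Submodule.sum_mem
    intro φ hφ
    apply Submodule.subset_span
    refine ⟨hPmem φ hφ v hv, ?_⟩
    obtain ⟨i₀, _, hi₀⟩ := Finset.mem_image.1 hφ
    refine ⟨i₀, fun x => ?_⟩
    funext i
    simp only [Matrix.mulVec_diagonal, Pi.smul_apply, smul_eq_mul]
    rw [hPapp]
    split_ifs with hiφ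
    · have : κ i x = κ i₀ x := congrFun (hiφ.trans hi₀.symm) x
      rw [this]
    · rw [mul_zero, mul_zero]
  have hspanS : Submodule.span ℂ S = W :=
    le_antisymm (Submodule.span_le.2 hSW) hspan
  -- extract a basis from the eigenvectors
  obtain ⟨b, hbS, hbspan, hbli⟩ := exists_linearIndependent ℂ S
  have hbfin : b.Finite := hbli.setFinite
  haveI := hbfin.fintype
  have hrange : Submodule.span ℂ (Set.range ((↑) : b → (ι → ℂ))) = W := by
    rw [Subtype.range_coe, hbspan, hspanS]
  let B₁ : Basis b ℂ ↥W := (Basis.span hbli).map (LinearEquiv.ofEq _ _ hrange)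
  let e := Fintype.equivFin ↥b
  refine ⟨Fintype.card ↥b, B₁.reindex e, ?_⟩
  have hcoe : ∀ k : Fin (Fintype.card ↥b),
      ((B₁.reindex e) k : ι → ℂ) = ((e.symm k : b) : ι → ℂ) := by
    intro k
    rw [Basis.reindex_apply]
    show ((B₁ (e.symm k) : ↥W) : ι → ℂ) = _
    rw [show B₁ (e.symm k) = (LinearEquiv.ofEq _ _ hrange) ((Basis.span hbli) (e.symm k)) from
      Basis.map_apply _ _ _]
    rw [LinearEquiv.coe_ofEq_apply, Basis.span_apply]
  have hlab : ∀ k : Fin (Fintype.card ↥b), ∃ i : ι, ∀ x,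
      Matrix.diagonal (fun i' => κ i' x) *ᵥ ((B₁.reindex e) k : ι → ℂ)
        = κ i x • ((B₁.reindex e) k : ι → ℂ) := by
    intro k
    rw [hcoe k]
    exact (hbS (e.symm k).2).2
  choose lab hlabspec using hlab
  exact ⟨lab, hlabspec⟩



lemma aux_toMatrix_diag {m : ℕ} {Wt : Type*} [AddCommGroup Wt] [Module ℂ Wt]
    (B : Basis (Fin m) ℂ Wt) (f : Wt →ₗ[ℂ] Wt) (c : Fin m → ℂ)
    (h : ∀ k, f (B k) = c k • B k) :
    LinearMap.toMatrix B B f = Matrix.diagonal c := by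
  ext i j
  rw [LinearMap.toMatrix_apply, h j, _root_.map_smul, Basis.repr_self]
  rcases eq_or_ne i j with rfl | hij
  · rw [Matrix.diagonal_apply_eq]
    simp
  · rw [Matrix.diagonal_apply_ne _ hij]
    simp [Finsupp.single_apply, Ne.symm hij]

lemma aux_char_sum_eq {X : Type*} [Monoid X] {m₁ m₂ : ℕ} (hm : 1 ≤ m₁)
    (f : Fin m₁ → (X →* ℂ)) (g : Fin m₂ → (X →* ℂ))
    (h : ∀ x, ∑ k, f k x = ∑ l, g l x) : ∃ k l, f k = g l := by
  classical
  by_contra hno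
  push_neg at hno
  have li := linearIndependent_monoidHom X ℂ
  rw [linearIndependent_iff] at li
  set F : (X →* ℂ) →₀ ℂ :=
    (∑ k, Finsupp.single (f k) 1) - (∑ l, Finsupp.single (g l) 1) with hF
  have htot : Finsupp.linearCombination ℂ (fun φ : X →* ℂ => (φ : X → ℂ)) F = 0 := by
    rw [hF, map_sub, map_sum, map_sum]
    simp only [Finsupp.linearCombination_single, one_smul]
    funext x
    simp only [Pi.sub_apply, Finset.sum_apply, Pi.zero_apply]
    rw [h x]
    ring
  have hF0 := li F htot
  have : F (f ⟨0, hm⟩) ≠ 0 := by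
    rw [hF]
    rw [Finsupp.sub_apply, Finsupp.finset_sum_apply, Finsupp.finset_sum_apply]
    have h2 : ∀ l : Fin m₂, (Finsupp.single (g l) (1:ℂ)) (f ⟨0, hm⟩) = 0 := by
      intro l
      rw [Finsupp.single_apply, if_neg]
      exact fun hc => hno ⟨0, hm⟩ l hc.symm
    rw [Finset.sum_congr rfl (fun l _ => h2 l), Finset.sum_const_zero, sub_zero]
    have h1 : ∀ k : Fin m₁, (Finsupp.single (f k) (1:ℂ)) (f ⟨0, hm⟩)
        = if f k = f ⟨0, hm⟩ then 1 else 0 := fun k => Finsupp.single_apply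
    rw [Finset.sum_congr rfl (fun k _ => h1 k), Finset.sum_boole]
    have hne : (Finset.univ.filter (fun k => f k = f ⟨0, hm⟩)).Nonempty :=
      ⟨⟨0, hm⟩, Finset.mem_filter.2 ⟨Finset.mem_univ _, rfl⟩⟩
    exact_mod_cast Nat.cast_ne_zero.2 (Finset.card_ne_zero_of_mem hne.choose_spec)
  rw [hF0] at this
  exact this rfl

lemma aux_exponent_eq {a b : ℕ} (ha : 2 ≤ a) (hb : 2 ≤ b) {d e : ℤ}
    (h1 : (a : ℝ) = (b : ℝ) ^ d) (h2 : (a : ℝ) ^ e = (b : ℝ)) : a = b := by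
  have ha1 : (1 : ℝ) < (a : ℝ) := by exact_mod_cast ha
  have hb1 : (1 : ℝ) < (b : ℝ) := by exact_mod_cast hb
  have key : (a : ℝ) ^ (e * d) = (a : ℝ) ^ (1 : ℤ) := by
    rw [_root_.zpow_mul, h2, ← h1, zpow_one]
  have hinj : Function.Injective (fun n : ℤ => (a : ℝ) ^ n) :=
    zpow_right_injective₀ (by positivity) (ne_of_gt ha1)
  have hed : e * d = 1 := hinj key
  rcases Int.mul_eq_one_iff_eq_one_or_neg_one.mp hed with ⟨_, hd⟩ | ⟨_, hd⟩
  · rw [hd, zpow_one] at h1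
    exact_mod_cast h1
  · rw [hd] at h1
    have hab : (a : ℝ) * b = 1 := by
      rw [h1]
      have hbne : (b : ℝ) ≠ 0 := by positivity
      field_simp
    nlinarith

set_option maxHeartbeats 1600000 in
/-- A finitely generated rigid group is FAb. -/
theorem rigid_isFAb (Γ : Type*) [Group Γ] (hfg : Group.FG Γ)
    (hrigid : IsRigid Γ) : IsFAb Γ := by
  classical
  intro Λ hΛ
  haveI := hΛ
  by_contra hinf
  -- pass to the normal core N of Λ
  set N := Λ.normalCore with hNdef
  haveI hNn : N.Normal := Subgroup.normalCore_normal Λ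
  haveI : N.FiniteIndex := Subgroup.finiteIndex_normalCore Λ
  have hNinf : Infinite (Abelianization ↥N) := by
    rw [← not_finite_iff_infinite]
    intro hfin
    exact hinf (aux_finite_abelianization_of_le (Subgroup.normalCore_le Λ) hfin)
  haveI := hNinf
  -- a surjection π : N →* ℤ
  haveI : Group.FG Γ := hfg
  haveI : Group.FG ↥N := Subgroup.fg_of_index_ne_zero N
  have hofsurj : Surjective ⇑(Abelianization.of (G := ↥N)) := fun y =>
    QuotientGroup.induction_on y fun g => ⟨g, rfl⟩
  haveI : Group.FG (Abelianization ↥N) := Group.fg_of_surjective hofsurj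
  obtain ⟨π₀, hπ₀⟩ := aux_exists_surj_toZ (Abelianization ↥N)
  set π : ↥N →* Multiplicative ℤ := π₀.comp Abelianization.of with hπdef
  have hπ : Surjective ⇑π := hπ₀.comp hofsurj
  -- quotient data
  haveI : Fintype (Γ ⧸ N) := Fintype.ofFinite _
  set n := Fintype.card (Γ ⧸ N) with hncard
  -- characters
  set tC : ℕ → ℂˣ := fun u => Units.mk0 ((u + 2 : ℕ) : ℂ)
    (Nat.cast_ne_zero.mpr (by omega)) with htC
  set χf : ℕ → (↥N →* ℂˣ) := fun u => (zpowersHom ℂˣ (tC u)).comp π with hχf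
  set pch : (Γ ⧸ N) → (↥N →* Multiplicative ℤ) :=
    fun i => π.comp (conjAut N i).toMonoidHom with hpch
  set cchar : ℕ → (↥N →* Multiplicative ℤ) → (↥N →* ℂ) :=
    fun u φ => (Units.coeHom ℂ).comp ((zpowersHom ℂˣ (tC u)).comp φ) with hcchar
  have hpchsurj : ∀ i, Surjective ⇑(pch i) := fun i => hπ.comp (conjAut N i).surjective
  -- the key construction: for each u an irreducible subrepresentation of the induced rep
  have key : ∀ u : ℕ, ∃ (m : ℕ), 1 ≤ m ∧ m ≤ n ∧
      ∃ (σ : Γ →* Matrix.GeneralLinearGroup (Fin m) ℂ) (lab : Fin m → Γ ⧸ N),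
        IsIrreducibleRep σ ∧
        ∀ x : ↥N, Matrix.trace ((σ (x : Γ) : Matrix (Fin m) (Fin m) ℂ))
          = ∑ k, cchar u (pch (lab k)) x := by
    intro u
    set R : Γ →* Matrix (Γ ⧸ N) (Γ ⧸ N) ℂ := indRep N (χf u) with hR
    have hdiag : ∀ x : ↥N,
        R (x : Γ) = Matrix.diagonal (fun i => cchar u (pch i) x) :=
      fun x => indRep_diag N (χf u) x
    -- a minimal nonzero invariant subspace
    have hex : ∃ m, ∃ W : Submodule ℂ ((Γ ⧸ N) → ℂ),
        (∀ g, ∀ v ∈ W, R g *ᵥ v ∈ W) ∧ W ≠ ⊥ ∧ finrank ℂ ↥W = m := by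
      refine ⟨_, ⊤, fun g v _ => Submodule.mem_top, ?_, rfl⟩
      intro hc
      have h1 : (fun _ => (1:ℂ) : (Γ ⧸ N) → ℂ) ∈ (⊥ : Submodule ℂ ((Γ ⧸ N) → ℂ)) := by
        rw [← hc]; exact Submodule.mem_top
      rw [Submodule.mem_bot] at h1
      have := congrFun h1 (1 : Γ ⧸ N)
      simp at this
    set m₀ := Nat.find hex with hm₀
    obtain ⟨W, hWinv, hWne, hWrank⟩ := Nat.find_spec hex
    have hmin : ∀ U : Submodule ℂ ((Γ ⧸ N) → ℂ),
        (∀ g, ∀ v ∈ U, R g *ᵥ v ∈ U) → U ≠ ⊥ → m₀ ≤ finrank ℂ ↥U :=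
      fun U h1 h2 => Nat.find_min' hex ⟨U, h1, h2, rfl⟩
    -- adapted basis of W
    obtain ⟨m, B, lab, heig⟩ := aux_adapted_basis
      (fun i => ⇑(cchar u (pch i))) W
      (fun x v hv => by rw [← hdiag x]; exact hWinv (x : Γ) v hv)
    have hm : finrank ℂ ↥W = m := by
      rw [finrank_eq_card_basis B, Fintype.card_fin]
    have hm1 : 1 ≤ m := by
      rcases Nat.eq_zero_or_pos m with h | h
      · exfalso; exact hWne (Submodule.finrank_eq_zero.1 (by rw [hm, h]))
      · exact h
    have hmn : m ≤ n := by
      rw [← hm, hncard]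
      have := Submodule.finrank_le W
      rwa [Module.finrank_pi ℂ] at this
    -- the subrepresentation on W
    have hres : ∀ g : Γ, ∀ v ∈ W, (Matrix.mulVecLin (R g)) v ∈ W := by
      intro g v hv
      rw [Matrix.mulVecLin_apply]
      exact hWinv g v hv
    let τfun : Γ → Module.End ℂ ↥W := fun g => (Matrix.mulVecLin (R g)).restrict (hres g)
    have hτfuncoe : ∀ (g : Γ) (w : ↥W),
        ((τfun g w : ↥W) : (Γ ⧸ N) → ℂ) = R g *ᵥ (w : (Γ ⧸ N) → ℂ) := by
      intro g w
      rw [show τfun g = (Matrix.mulVecLin (R g)).restrict (hres g) from rfl,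
        LinearMap.restrict_coe_apply, Matrix.mulVecLin_apply]
    set τ : Γ →* Module.End ℂ ↥W :=
      { toFun := τfun
        map_one' := by
          apply LinearMap.ext
          intro v
          apply Subtype.ext
          rw [hτfuncoe, MonoidHom.map_one R, Matrix.one_mulVec]
          rfl
        map_mul' := by
          intro g h
          apply LinearMap.ext
          intro v
          apply Subtype.ext
          rw [Module.End.mul_apply, hτfuncoe, hτfuncoe, hτfuncoe,
            Matrix.mulVec_mulVec, ← MonoidHom.map_mul R] } with hτdef
    have hτcoe : ∀ (g : Γ) (w : ↥W),
        ((τ g w : ↥W) : (Γ ⧸ N) → ℂ) = R g *ᵥ (w : (Γ ⧸ N) → ℂ) := fun g w => hτfuncoe g w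
    set σmat : Γ →* Matrix (Fin m) (Fin m) ℂ :=
      { toFun := fun g => LinearMap.toMatrix B B (τ g)
        map_one' := by
          show LinearMap.toMatrix B B (τ 1) = 1
          rw [MonoidHom.map_one τ, LinearMap.toMatrix_one]
        map_mul' := by
          intro g h
          show LinearMap.toMatrix B B (τ (g * h))
            = LinearMap.toMatrix B B (τ g) * LinearMap.toMatrix B B (τ h)
          rw [MonoidHom.map_mul τ g h, LinearMap.toMatrix_mul B] } with hσmat
    set σ : Γ →* Matrix.GeneralLinearGroup (Fin m) ℂ := σmat.toHomUnits with hσ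
    have hσcoe : ∀ g : Γ, ((σ g : Matrix (Fin m) (Fin m) ℂ)) = σmat g :=
      fun g => MonoidHom.coe_toHomUnits σmat g
    -- matrix/vector compatibility
    have hrel : ∀ (g : Γ) (w : ↥W), σmat g *ᵥ (B.equivFun w) = B.equivFun (τ g w) := by
      intro g w
      have h1 := LinearMap.toMatrix_mulVec_repr B B (τ g) w
      rw [show σmat g = LinearMap.toMatrix B B (τ g) from rfl]
      simpa [Basis.equivFun_apply] using h1
    -- irreducibility
    have hirr : IsIrreducibleRep σ := by
      intro U hU
      rcases eq_or_ne U ⊥ with h | hUne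
      · exact Or.inl h
      right
      set f : (Fin m → ℂ) →ₗ[ℂ] ((Γ ⧸ N) → ℂ) :=
        W.subtype.comp (B.equivFun.symm : (Fin m → ℂ) ≃ₗ[ℂ] ↥W).toLinearMap with hf
      have hfinj : Injective ⇑f := by
        rw [hf]
        intro a b hab
        simp only [LinearMap.coe_comp, Function.comp_apply] at hab
        exact B.equivFun.symm.injective (Subtype.ext hab)
      have hfapp : ∀ uu : Fin m → ℂ, f uu = ((B.equivFun.symm uu : ↥W) : (Γ ⧸ N) → ℂ) :=
        fun uu => rfl
      set U' := U.map f with hU'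
      have hU'inv : ∀ g, ∀ v ∈ U', R g *ᵥ v ∈ U' := by
        rintro g v ⟨uu, huu, rfl⟩
        have h2 : σmat g *ᵥ uu = B.equivFun (τ g (B.equivFun.symm uu)) := by
          conv_lhs => rw [← B.equivFun.apply_symm_apply uu]
          exact hrel g _
        have h1 : R g *ᵥ (f uu) = f (σmat g *ᵥ uu) := by
          rw [h2, hfapp, hfapp, LinearEquiv.symm_apply_apply, hτcoe]
        rw [h1]
        refine ⟨σmat g *ᵥ uu, ?_, rfl⟩
        have := hU g uu huu
        rwa [hσcoe] at this
      have hU'ne : U' ≠ ⊥ := by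
        obtain ⟨x, hxU, hx0⟩ := (Submodule.ne_bot_iff U).1 hUne
        refine (Submodule.ne_bot_iff U').2 ⟨f x, ⟨x, hxU, rfl⟩, fun hc => hx0 ?_⟩
        apply hfinj
        rw [hc, map_zero]
      have hge : m₀ ≤ finrank ℂ ↥U' := hmin U' hU'inv hU'ne
      have hUrank : finrank ℂ ↥U' = finrank ℂ ↥U :=
        ((Submodule.equivMapOfInjective f hfinj U).finrank_eq).symm
      have hm₀m : m₀ = m := by rw [hm₀, ← hWrank]; exact hm
      have hUm : finrank ℂ ↥U = m := by
        refine le_antisymm ?_ ?_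
        · have := Submodule.finrank_le U
          rwa [Module.finrank_pi ℂ, Fintype.card_fin] at this
        · have h3 := hge
          rw [hUrank] at h3
          exact le_of_eq_of_le hm₀m.symm h3
      apply Submodule.eq_top_of_finrank_eq
      have hfr : finrank ℂ (Fin m → ℂ) = m := by rw [Module.finrank_pi ℂ, Fintype.card_fin]
      rw [hUm, hfr]
    -- trace computation
    have htr : ∀ x : ↥N,
        Matrix.trace (σmat (x : Γ)) = ∑ k, cchar u (pch (lab k)) x := by
      intro x
      have hτx : ∀ k, τ (x : Γ) (B k) = (cchar u (pch (lab k)) x) • B k := by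
        intro k
        apply Subtype.ext
        rw [hτcoe, hdiag x, Submodule.coe_smul]
        exact heig k x
      have : σmat (x : Γ) = LinearMap.toMatrix B B (τ (x : Γ)) := rfl
      rw [this, aux_toMatrix_diag B _ _ hτx, Matrix.trace_diagonal]
    exact ⟨m, hm1, hmn, σ, lab, hirr, fun x => by rw [hσcoe]; exact htr x⟩
  -- extract the data
  choose md hmd1 hmdn σf labf hirrf htrf using key
  -- rigidity: finite sets of representatives in each dimension
  have hSm : ∀ m : ℕ, ∃ S : Set (Γ →* Matrix.GeneralLinearGroup (Fin m) ℂ), S.Finite ∧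
      (1 ≤ m → ∀ ρ, IsIrreducibleRep ρ → ∃ s ∈ S, RepEquiv ρ s) := by
    intro m
    by_cases h : 1 ≤ m
    · obtain ⟨S, hS1, hS2⟩ := hrigid m h
      exact ⟨S, hS1, fun _ => hS2⟩
    · exact ⟨∅, Set.finite_empty, fun h' => absurd h' h⟩
  choose Sm hSmfin hSmcov using hSm
  have hrep : ∀ u : ℕ, ∃ s ∈ Sm (md u), RepEquiv (σf u) s :=
    fun u => hSmcov (md u) (hmd1 u) (σf u) (hirrf u)
  choose σh hσhmem hσhequiv using hrep
  -- pigeonhole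
  haveI : ∀ m : Fin (n + 1), Finite ↥(Sm m.val) := fun m => (hSmfin m.val).to_subtype
  have hmap : ∀ u : ℕ, md u < n + 1 := fun u => Nat.lt_succ_of_le (hmdn u)
  obtain ⟨u, v, huv, heqq⟩ := Finite.exists_ne_map_eq_of_infinite
    (fun u : ℕ => (⟨⟨md u, hmap u⟩, ⟨σh u, hσhmem u⟩⟩ :
      Σ m : Fin (n + 1), ↥(Sm m.val)))
  -- traces of σh u and σh v agree
  have hJ : ∀ x : ↥N,
      Matrix.trace ((σh u (x : Γ) : Matrix (Fin (md u)) (Fin (md u)) ℂ))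
      = Matrix.trace ((σh v (x : Γ) : Matrix (Fin (md v)) (Fin (md v)) ℂ)) := by
    intro x
    exact congrFun (congrArg (fun p : Σ m : Fin (n + 1), ↥(Sm m.val) =>
      (fun x : ↥N => Matrix.trace ((p.2.val (x : Γ) :
        Matrix (Fin p.1.val) (Fin p.1.val) ℂ)))) heqq) x
  -- traces of σf and σh agree
  have htrh : ∀ (w : ℕ) (x : ↥N),
      Matrix.trace ((σf w (x : Γ) : Matrix (Fin (md w)) (Fin (md w)) ℂ))
      = Matrix.trace ((σh w (x : Γ) : Matrix (Fin (md w)) (Fin (md w)) ℂ)) := by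
    intro w x
    obtain ⟨M, hM⟩ := hσhequiv w
    rw [hM (x : Γ)]
    have : ((M * σh w (x : Γ) * M⁻¹ : Matrix.GeneralLinearGroup (Fin (md w)) ℂ) :
        Matrix (Fin (md w)) (Fin (md w)) ℂ)
        = (M : Matrix (Fin (md w)) (Fin (md w)) ℂ) * (σh w (x : Γ) :
          Matrix (Fin (md w)) (Fin (md w)) ℂ) * ((M⁻¹ : Matrix.GeneralLinearGroup (Fin (md w)) ℂ) :
          Matrix (Fin (md w)) (Fin (md w)) ℂ) := rfl
    rw [this, Matrix.trace_units_conj]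
  -- character sums agree
  have hsum : ∀ x : ↥N, ∑ k, cchar u (pch (labf u k)) x = ∑ l, cchar v (pch (labf v l)) x := by
    intro x
    rw [← htrf u x, ← htrf v x, htrh u x, htrh v x, hJ x]
  obtain ⟨k, l, hkl⟩ := aux_char_sum_eq (hmd1 u) _ _ hsum
  -- extract the contradiction
  set φ := pch (labf u k) with hφ
  set ψ := pch (labf v l) with hψ
  obtain ⟨x, hx⟩ := hpchsurj (labf u k) (Multiplicative.ofAdd 1)
  obtain ⟨y, hy⟩ := hpchsurj (labf v l) (Multiplicative.ofAdd 1)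
  have hval : ∀ (w : ℕ) (φ' : ↥N →* Multiplicative ℤ) (z : ↥N),
      cchar w φ' z = ((w + 2 : ℕ) : ℂ) ^ (Multiplicative.toAdd (φ' z)) := by
    intro w φ' z
    rw [hcchar]
    simp only [MonoidHom.coe_comp, Function.comp_apply, Units.coeHom_apply, zpowersHom_apply]
    rw [Units.val_zpow_eq_zpow_val]
    rfl
  have h1C : ((u + 2 : ℕ) : ℂ) ^ (1 : ℤ)
      = ((v + 2 : ℕ) : ℂ) ^ (Multiplicative.toAdd (ψ x)) := by
    have := DFunLike.congr_fun hkl x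
    rw [hval, hval, hφ] at this
    rw [← this, hx]
    rfl
  have h2C : ((u + 2 : ℕ) : ℂ) ^ (Multiplicative.toAdd (φ y))
      = ((v + 2 : ℕ) : ℂ) ^ (1 : ℤ) := by
    have := DFunLike.congr_fun hkl y
    rw [hval, hval, hψ] at this
    rw [this, hy]
    rfl
  -- move to ℝ
  have h1R : ((u + 2 : ℕ) : ℝ) = ((v + 2 : ℕ) : ℝ) ^ (Multiplicative.toAdd (ψ x)) := by
    apply Complex.ofReal_injective
    rw [Complex.ofReal_zpow, Complex.ofReal_natCast, Complex.ofReal_natCast, ← h1C, zpow_one]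
  have h2R : ((u + 2 : ℕ) : ℝ) ^ (Multiplicative.toAdd (φ y)) = ((v + 2 : ℕ) : ℝ) := by
    apply Complex.ofReal_injective
    rw [Complex.ofReal_zpow, Complex.ofReal_natCast, Complex.ofReal_natCast, h2C, zpow_one]
  have := aux_exponent_eq (by omega : 2 ≤ u + 2) (by omega : 2 ≤ v + 2) h1R h2R
  omega
end

section
/- Let Γ be a finitely generated group and Λ a finite-index subgroup of Γ. Then Λ is rigid if and only if Γ is rigid. -/
open Module

namespace RigidAux

variable {G : Type*} [Group G]
variable {V : Type*} [AddCommGroup V] [Module ℂ V]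
variable {W : Type*} [AddCommGroup W] [Module ℂ W]
variable {X : Type*} [AddCommGroup X] [Module ℂ X]

/-- An invariant subspace. -/
def Inv (ρ : Representation ℂ G V) (p : Submodule ℂ V) : Prop :=
  ∀ g : G, ∀ v ∈ p, ρ g v ∈ p

/-- Isomorphism of representations. -/
def Iso (ρ : Representation ℂ G V) (σ : Representation ℂ G W) : Prop :=
  ∃ e : V ≃ₗ[ℂ] W, ∀ g v, e (ρ g v) = σ g (e v)

@[refl] theorem Iso.refl (ρ : Representation ℂ G V) : Iso ρ ρ :=
  ⟨LinearEquiv.refl ℂ V, fun _ _ => rfl⟩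

theorem Iso.symm {ρ : Representation ℂ G V} {σ : Representation ℂ G W}
    (h : Iso ρ σ) : Iso σ ρ := by
  obtain ⟨e, he⟩ := h
  refine ⟨e.symm, fun g w => ?_⟩
  apply e.injective
  rw [he, e.apply_symm_apply, e.apply_symm_apply]

theorem Iso.trans {ρ : Representation ℂ G V} {σ : Representation ℂ G W}
    {τ : Representation ℂ G X} (h1 : Iso ρ σ) (h2 : Iso σ τ) : Iso ρ τ := by
  obtain ⟨e, he⟩ := h1; obtain ⟨f, hf⟩ := h2
  exact ⟨e.trans f, fun g v => by simp [he, hf]⟩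

def Irr (ρ : Representation ℂ G V) : Prop :=
  (⊥ : Submodule ℂ V) ≠ ⊤ ∧ ∀ p : Submodule ℂ V, Inv ρ p → p = ⊥ ∨ p = ⊤

/-- Sub-representation on an invariant subspace. -/
def subRep (ρ : Representation ℂ G V) (p : Submodule ℂ V) (hp : Inv ρ p) :
    Representation ℂ G p where
  toFun g := (ρ g).restrict (hp g)
  map_one' := by ext v; simp [LinearMap.restrict_apply]
  map_mul' g h := by ext v; simp [LinearMap.restrict_apply]

@[simp] theorem subRep_apply (ρ : Representation ℂ G V) (p : Submodule ℂ V)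
    (hp : Inv ρ p) (g : G) (v : p) : (subRep ρ p hp g v : V) = ρ g (v : V) := rfl

/-- Quotient representation. -/
def quotRep (ρ : Representation ℂ G V) (p : Submodule ℂ V) (hp : Inv ρ p) :
    Representation ℂ G (V ⧸ p) where
  toFun g := p.mapQ p (ρ g) (fun v hv => hp g v hv)
  map_one' := by
    apply Submodule.linearMap_qext
    ext v
    simp
  map_mul' g h := by
    apply Submodule.linearMap_qext
    ext v
    simp [Submodule.mapQ_apply]

@[simp] theorem quotRep_mk (ρ : Representation ℂ G V) (p : Submodule ℂ V)
    (hp : Inv ρ p) (g : G) (v : V) :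
    quotRep ρ p hp g (Submodule.Quotient.mk v) = Submodule.Quotient.mk (ρ g v) := rfl

def Equiva (ρ : Representation ℂ G V) (σ : Representation ℂ G W)
    (f : V →ₗ[ℂ] W) : Prop := ∀ g v, f (ρ g v) = σ g (f v)

-- kernel and range invariance
theorem Inv_ker {ρ : Representation ℂ G V} {σ : Representation ℂ G W}
    {f : V →ₗ[ℂ] W} (hf : Equiva ρ σ f) : Inv ρ (LinearMap.ker f) := by
  intro g v hv
  simp only [LinearMap.mem_ker] at hv ⊢
  rw [hf, hv, map_zero]

theorem Inv_range {ρ : Representation ℂ G V} {σ : Representation ℂ G W}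
    {f : V →ₗ[ℂ] W} (hf : Equiva ρ σ f) : Inv σ (LinearMap.range f) := by
  rintro g w ⟨v, rfl⟩
  exact ⟨ρ g v, (hf g v)⟩

theorem Inv_map {ρ : Representation ℂ G V} {σ : Representation ℂ G W}
    {f : V →ₗ[ℂ] W} (hf : Equiva ρ σ f) {p : Submodule ℂ V} (hp : Inv ρ p) :
    Inv σ (p.map f) := by
  rintro g w ⟨v, hv, rfl⟩
  exact ⟨ρ g v, hp g v hv, hf g v⟩

theorem Inv_comap {ρ : Representation ℂ G V} {σ : Representation ℂ G W}
    {f : V →ₗ[ℂ] W} (hf : Equiva ρ σ f) {q : Submodule ℂ W} (hq : Inv σ q) :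
    Inv ρ (q.comap f) := by
  intro g v hv
  simp only [Submodule.mem_comap] at hv ⊢
  rw [hf]
  exact hq g _ hv

/-- First isomorphism theorem, equivariantly. -/
theorem iso_quotKer_range {ρ : Representation ℂ G V} {σ : Representation ℂ G W}
    {f : V →ₗ[ℂ] W} (hf : Equiva ρ σ f) :
    Iso (quotRep ρ (LinearMap.ker f) (Inv_ker hf))
      (subRep σ (LinearMap.range f) (Inv_range hf)) := by
  refine ⟨f.quotKerEquivRange, fun g x => ?_⟩
  obtain ⟨v, rfl⟩ := Submodule.Quotient.mk_surjective _ x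
  ext
  show (f.quotKerEquivRange (Submodule.Quotient.mk (ρ g v)) : W) = _
  simp only [LinearMap.quotKerEquivRange_apply_mk]
  rw [hf]
  rfl

theorem iso_quot_of_surjective {ρ : Representation ℂ G V} {σ : Representation ℂ G W}
    {f : V →ₗ[ℂ] W} (hf : Equiva ρ σ f) (hs : Function.Surjective f) :
    Iso (quotRep ρ (LinearMap.ker f) (Inv_ker hf)) σ := by
  refine ⟨f.quotKerEquivOfSurjective hs, fun g x => ?_⟩
  obtain ⟨v, rfl⟩ := Submodule.Quotient.mk_surjective _ x
  show f.quotKerEquivOfSurjective hs (Submodule.Quotient.mk (ρ g v)) = _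
  have h1 : ∀ u : V, f.quotKerEquivOfSurjective hs (Submodule.Quotient.mk u) = f u := by
    intro u; rfl
  rw [h1, h1, hf]

theorem iso_sub_of_injective {ρ : Representation ℂ G V} {σ : Representation ℂ G W}
    {f : V →ₗ[ℂ] W} (hf : Equiva ρ σ f) (hi : Function.Injective f) :
    Iso ρ (subRep σ (LinearMap.range f) (Inv_range hf)) := by
  refine ⟨LinearEquiv.ofInjective f hi, fun g v => ?_⟩
  ext
  show (f (ρ g v) : W) = σ g (f v)
  exact hf g v


/-- Transport a representation along a linear equivalence. -/
def transport (ρ : Representation ℂ G V) (e : V ≃ₗ[ℂ] W) : Representation ℂ G W where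
  toFun g := e.toLinearMap.comp ((ρ g).comp e.symm.toLinearMap)
  map_one' := by ext w; simp
  map_mul' g h := by ext w; simp

@[simp] theorem transport_apply (ρ : Representation ℂ G V) (e : V ≃ₗ[ℂ] W) (g : G) (w : W) :
    transport ρ e g w = e (ρ g (e.symm w)) := rfl

theorem iso_transport (ρ : Representation ℂ G V) (e : V ≃ₗ[ℂ] W) :
    Iso ρ (transport ρ e) := ⟨e, fun g v => by simp⟩

/-- Transport an invariant submodule along an isomorphism of representations:
the sub-representations are isomorphic. -/
theorem iso_subRep_map {ρ : Representation ℂ G V} {σ : Representation ℂ G W}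
    (e : V ≃ₗ[ℂ] W) (he : ∀ g v, e (ρ g v) = σ g (e v))
    {p : Submodule ℂ V} (hp : Inv ρ p) :
    Inv σ (p.map (e : V →ₗ[ℂ] W)) ∧
      Iso (subRep ρ p hp) (subRep σ (p.map (e : V →ₗ[ℂ] W))
        (Inv_map (f := (e : V →ₗ[ℂ] W)) he hp)) := by
  refine ⟨Inv_map (f := (e : V →ₗ[ℂ] W)) he hp, ⟨e.submoduleMap p, fun g v => ?_⟩⟩
  ext
  show e ((ρ g v : V)) = σ g (e (v : V))
  exact he g v

/-- Transport a quotient along an isomorphism of representations. -/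
theorem iso_quotRep_map {ρ : Representation ℂ G V} {σ : Representation ℂ G W}
    (e : V ≃ₗ[ℂ] W) (he : ∀ g v, e (ρ g v) = σ g (e v))
    {p : Submodule ℂ V} (hp : Inv ρ p) :
    Iso (quotRep ρ p hp) (quotRep σ (p.map (e : V →ₗ[ℂ] W))
      (Inv_map (f := (e : V →ₗ[ℂ] W)) he hp)) := by
  refine ⟨Submodule.Quotient.equiv p (p.map (e : V →ₗ[ℂ] W)) e rfl, fun g x => ?_⟩
  obtain ⟨v, rfl⟩ := Submodule.Quotient.mk_surjective _ x
  show Submodule.Quotient.equiv p (p.map (e : V →ₗ[ℂ] W)) e rfl (Submodule.Quotient.mk (ρ g v)) = _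
  have h1 : ∀ u : V, Submodule.Quotient.equiv p (p.map (e : V →ₗ[ℂ] W)) e rfl
      (Submodule.Quotient.mk u) = Submodule.Quotient.mk (e u) := fun u => rfl
  rw [h1, h1, he]
  rfl

/-- `σ` is (isomorphic to) a quotient of `ρ`. -/
def IsQuotient (σ : Representation ℂ G X) (ρ : Representation ℂ G V) : Prop :=
  ∃ (p : Submodule ℂ V) (hp : Inv ρ p), Iso σ (quotRep ρ p hp)

/-- `σ` is (isomorphic to) a subrepresentation of `ρ`. -/
def IsSub (σ : Representation ℂ G X) (ρ : Representation ℂ G V) : Prop :=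
  ∃ (p : Submodule ℂ V) (hp : Inv ρ p), Iso σ (subRep ρ p hp)

/-- `σ` is (isomorphic to) a subquotient of `ρ`. -/
def IsCons (σ : Representation ℂ G X) (ρ : Representation ℂ G V) : Prop :=
  ∃ (p : Submodule ℂ V) (hp : Inv ρ p), IsQuotient σ (subRep ρ p hp)

theorem IsQuotient.of_iso_left {σ : Representation ℂ G X} {σ' : Representation ℂ G W}
    {ρ : Representation ℂ G V} (h : Iso σ' σ) (hq : IsQuotient σ ρ) : IsQuotient σ' ρ := by
  obtain ⟨p, hp, hi⟩ := hq; exact ⟨p, hp, h.trans hi⟩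

theorem IsQuotient.of_iso_right {σ : Representation ℂ G X} {ρ : Representation ℂ G V}
    {ρ' : Representation ℂ G W} (h : Iso ρ ρ') (hq : IsQuotient σ ρ) : IsQuotient σ ρ' := by
  obtain ⟨p, hp, hi⟩ := hq
  obtain ⟨e, he⟩ := h
  exact ⟨p.map (e : V →ₗ[ℂ] W), Inv_map (f := (e : V →ₗ[ℂ] W)) he hp,
    hi.trans (iso_quotRep_map e he hp)⟩

theorem IsSub.of_iso_right {σ : Representation ℂ G X} {ρ : Representation ℂ G V}
    {ρ' : Representation ℂ G W} (h : Iso ρ ρ') (hq : IsSub σ ρ) : IsSub σ ρ' := by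
  obtain ⟨p, hp, hi⟩ := hq
  obtain ⟨e, he⟩ := h
  exact ⟨p.map (e : V →ₗ[ℂ] W), (iso_subRep_map e he hp).1,
    hi.trans (iso_subRep_map e he hp).2⟩

theorem IsCons.of_iso_left {σ : Representation ℂ G X} {σ' : Representation ℂ G W}
    {ρ : Representation ℂ G V} (h : Iso σ' σ) (hq : IsCons σ ρ) : IsCons σ' ρ := by
  obtain ⟨p, hp, hi⟩ := hq; exact ⟨p, hp, hi.of_iso_left h⟩

theorem IsCons.of_iso_right {σ : Representation ℂ G X} {ρ : Representation ℂ G V}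
    {ρ' : Representation ℂ G W} (h : Iso ρ ρ') (hq : IsCons σ ρ) : IsCons σ ρ' := by
  obtain ⟨p, hp, hi⟩ := hq
  obtain ⟨e, he⟩ := h
  exact ⟨p.map (e : V →ₗ[ℂ] W), (iso_subRep_map e he hp).1,
    hi.of_iso_right (iso_subRep_map e he hp).2⟩

/-- The subrepresentation on `⊤` is isomorphic to the representation itself. -/
theorem iso_subRep_top (ρ : Representation ℂ G V) (h : Inv ρ ⊤) :
    Iso (subRep ρ ⊤ h) ρ :=
  ⟨Submodule.topEquiv, fun g v => rfl⟩

theorem iso_quotRep_bot (ρ : Representation ℂ G V) (h : Inv ρ ⊥) :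
    Iso (quotRep ρ ⊥ h) ρ := by
  refine ⟨Submodule.quotEquivOfEqBot ⊥ rfl, fun g x => ?_⟩
  obtain ⟨v, rfl⟩ := Submodule.Quotient.mk_surjective _ x
  rfl

theorem IsQuotient.isCons {σ : Representation ℂ G X} {ρ : Representation ℂ G V}
    (h : IsQuotient σ ρ) : IsCons σ ρ := by
  have htop : Inv ρ (⊤ : Submodule ℂ V) := fun g v _ => trivial
  exact ⟨⊤, htop, h.of_iso_right (iso_subRep_top ρ htop).symm⟩

theorem IsSub.isCons {σ : Representation ℂ G X} {ρ : Representation ℂ G V}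
    (h : IsSub σ ρ) : IsCons σ ρ := by
  obtain ⟨p, hp, hi⟩ := h
  have hbot : Inv (subRep ρ p hp) (⊥ : Submodule ℂ p) := by
    intro g v hv
    simp only [Submodule.mem_bot] at hv ⊢
    rw [hv, map_zero]
  exact ⟨p, hp, ⊥, hbot, hi.trans (iso_quotRep_bot _ hbot).symm⟩

/-- Irreducibility transports along isomorphisms. -/
theorem Irr.of_iso {ρ : Representation ℂ G V} {σ : Representation ℂ G W}
    (h : Iso ρ σ) (hirr : Irr ρ) : Irr σ := by
  obtain ⟨e, he⟩ := h
  have hrange : LinearMap.range (e : V →ₗ[ℂ] W) = ⊤ := LinearMap.range_eq_top.mpr e.surjective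
  constructor
  · intro hbt
    apply hirr.1
    have := congrArg (Submodule.comap (e : V →ₗ[ℂ] W)) hbt
    rwa [Submodule.comap_bot, Submodule.comap_top, LinearMap.ker_eq_bot.mpr e.injective] at this
  · intro q hq
    have hinv : Inv ρ (q.comap (e : V →ₗ[ℂ] W)) := by
      intro g v hv
      simp only [Submodule.mem_comap, LinearEquiv.coe_coe] at hv ⊢
      rw [he]; exact hq g _ hv
    have hmc : Submodule.map (e : V →ₗ[ℂ] W) (q.comap (e : V →ₗ[ℂ] W)) = q := by
      rw [Submodule.map_comap_eq, hrange, top_inf_eq]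
    rcases hirr.2 _ hinv with h1 | h1
    · left
      rw [← hmc, h1, Submodule.map_bot]
    · right
      rw [← hmc, h1, Submodule.map_top, hrange]

theorem not_irr_of_subsingleton {ρ : Representation ℂ G V} (h : Subsingleton V) :
    ¬ Irr ρ := by
  intro hirr
  exact hirr.1 (Subsingleton.elim _ _)

theorem Irr.not_cons_of_subsingleton {σ : Representation ℂ G X} {ρ : Representation ℂ G V}
    (h : Subsingleton V) (hirr : Irr σ) (hc : IsCons σ ρ) : False := by
  obtain ⟨p, hp, q, hq, e, he⟩ := hc
  have h1 : Subsingleton p := ⟨fun a b => Subtype.ext (Subsingleton.elim _ _)⟩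
  have h2 : Subsingleton (p ⧸ q) := Quotient.instSubsingletonQuotient _
  haveI := h1
  haveI : Subsingleton (↥p ⧸ q) := Quotient.instSubsingletonQuotient _
  exact not_irr_of_subsingleton (e.toEquiv.subsingleton) hirr

theorem equivar_subtype (ρ : Representation ℂ G V) (p : Submodule ℂ V) (hp : Inv ρ p) :
    Equiva (subRep ρ p hp) ρ p.subtype := fun _ _ => rfl

theorem equivar_mkQ (ρ : Representation ℂ G V) (p : Submodule ℂ V) (hp : Inv ρ p) :
    Equiva ρ (quotRep ρ p hp) p.mkQ := fun _ _ => rfl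

theorem quotRep_congr (ρ : Representation ℂ G V) {p p' : Submodule ℂ V} (h : p = p')
    (hp : Inv ρ p) (hp' : Inv ρ p') : Iso (quotRep ρ p hp) (quotRep ρ p' hp') := by
  subst h; exact Iso.refl _

theorem subRep_congr (ρ : Representation ℂ G V) {p p' : Submodule ℂ V} (h : p = p')
    (hp : Inv ρ p) (hp' : Inv ρ p') : Iso (subRep ρ p hp) (subRep ρ p' hp') := by
  subst h; exact Iso.refl _

/-- The two ways of viewing the intersection of two invariant subspaces as a
sub-subrepresentation are isomorphic. -/
theorem iso_sub_inf (ρ : Representation ℂ G V) {p q : Submodule ℂ V}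
    (hp : Inv ρ p) (hq : Inv ρ q) :
    Iso (subRep (subRep ρ p hp) (q.comap p.subtype)
        (Inv_comap (equivar_subtype ρ p hp) hq))
      (subRep (subRep ρ q hq) (p.comap q.subtype)
        (Inv_comap (equivar_subtype ρ q hq) hp)) := by
  refine ⟨⟨⟨⟨fun x => ⟨⟨(x : ↥p), x.2⟩, (x : ↥p).2⟩, fun _ _ => rfl⟩, fun _ _ => rfl⟩,
    fun y => ⟨⟨(y : ↥q), y.2⟩, (y : ↥q).2⟩, fun _ => rfl, fun _ => rfl⟩, fun g v => rfl⟩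

/-- Key lemma: an irreducible subquotient of `ρ` is a subquotient of an invariant
subspace or of the corresponding quotient. -/
theorem cons_ses {σ : Representation ℂ G X} {ρ : Representation ℂ G V}
    (hσ : Irr σ) (hc : IsCons σ ρ) {p : Submodule ℂ V} (hp : Inv ρ p) :
    IsCons σ (subRep ρ p hp) ∨ IsCons σ (quotRep ρ p hp) := by
  obtain ⟨Wm, hW, U, hU, hiso⟩ := hc
  set T := subRep ρ Wm hW with hT
  have hX' : Inv T (p.comap Wm.subtype) := Inv_comap (equivar_subtype ρ Wm hW) hp
  set X' : Submodule ℂ ↥Wm := p.comap Wm.subtype with hX'def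
  have hmkQ : Equiva T (quotRep T U hU) U.mkQ := equivar_mkQ T U hU
  have hMinv : Inv (quotRep T U hU) (X'.map U.mkQ) := Inv_map hmkQ hX'
  have hQirr : Irr (quotRep T U hU) := Irr.of_iso hiso hσ
  rcases hQirr.2 _ hMinv with hM | hM
  · -- X' ≤ U : σ is a constituent of the quotient
    right
    have hle : X' ≤ U := by
      intro x hx
      have : U.mkQ x ∈ X'.map U.mkQ := Submodule.mem_map_of_mem hx
      rw [hM, Submodule.mem_bot] at this
      exact (Submodule.Quotient.mk_eq_zero U).mp this
    set f : ↥Wm →ₗ[ℂ] V ⧸ p := (p.mkQ).comp Wm.subtype with hf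
    have hfe : Equiva T (quotRep ρ p hp) f := fun _ _ => rfl
    have hker : LinearMap.ker f = X' := by
      ext x
      simp only [hf, LinearMap.mem_ker, LinearMap.comp_apply, Submodule.mem_comap]
      rw [show p.mkQ (Wm.subtype x) = Submodule.Quotient.mk (Wm.subtype x) from rfl,
        Submodule.Quotient.mk_eq_zero]
      rfl
    -- σ is a quotient of quotRep T X'
    set φ : (↥Wm ⧸ X') →ₗ[ℂ] (↥Wm ⧸ U) := Submodule.mapQ X' U LinearMap.id hle with hφ
    have hφe : Equiva (quotRep T X' hX') (quotRep T U hU) φ := by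
      intro g x
      obtain ⟨v, rfl⟩ := Submodule.Quotient.mk_surjective _ x
      rfl
    have hφs : Function.Surjective φ := by
      intro y
      obtain ⟨v, rfl⟩ := Submodule.Quotient.mk_surjective _ y
      exact ⟨Submodule.Quotient.mk v, rfl⟩
    have h1 : IsQuotient σ (quotRep T X' hX') :=
      ⟨LinearMap.ker φ, Inv_ker hφe, hiso.trans (iso_quot_of_surjective hφe hφs).symm⟩
    have h2 : Iso (quotRep T X' hX')
        (subRep (quotRep ρ p hp) (LinearMap.range f) (Inv_range hfe)) :=
      (quotRep_congr T hker.symm hX' (Inv_ker hfe)).trans (iso_quotKer_range hfe)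
    exact ⟨LinearMap.range f, Inv_range hfe, h1.of_iso_right h2⟩
  · -- X' ⊔ U = ⊤ : σ is a constituent of the subrepresentation
    left
    set h : ↥X' →ₗ[ℂ] (↥Wm ⧸ U) := (U.mkQ).comp X'.subtype with hh
    have hhe : Equiva (subRep T X' hX') (quotRep T U hU) h := fun _ _ => rfl
    have hhs : Function.Surjective h := by
      rw [← LinearMap.range_eq_top, hh, LinearMap.range_comp, Submodule.range_subtype]
      exact hM
    have h1 : IsQuotient σ (subRep T X' hX') :=
      ⟨LinearMap.ker h, Inv_ker hhe, hiso.trans (iso_quot_of_surjective hhe hhs).symm⟩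
    have h2 := iso_sub_inf ρ hW hp
    exact ⟨Wm.comap p.subtype, Inv_comap (equivar_subtype ρ p hp) hW,
      h1.of_iso_right h2⟩

theorem subsingleton_bot : Subsingleton (⊥ : Submodule ℂ V) :=
  ⟨fun a b => Subtype.ext (by rw [a.2, b.2])⟩

theorem bot_ne_top_of_not_subsingleton (h : ¬ Subsingleton V) :
    (⊥ : Submodule ℂ V) ≠ ⊤ := by
  intro hbt
  apply h
  refine ⟨fun a b => ?_⟩
  have ha : a ∈ (⊥ : Submodule ℂ V) := hbt ▸ Submodule.mem_top
  have hb : b ∈ (⊥ : Submodule ℂ V) := hbt ▸ Submodule.mem_top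
  rw [Submodule.mem_bot] at ha hb
  rw [ha, hb]

/-- The model of a representation on a fixed finite-dimensional space. -/
noncomputable def modelRep (ρ : Representation ℂ G V) [FiniteDimensional ℂ V] :
    Representation ℂ G (Fin (finrank ℂ V) → ℂ) :=
  transport ρ (Module.finBasis ℂ V).equivFun

theorem iso_modelRep (ρ : Representation ℂ G V) [FiniteDimensional ℂ V] :
    Iso ρ (modelRep ρ) := iso_transport ρ _

/-- An irreducible representation is the only irreducible constituent of itself. -/
theorem cons_self_of_irr {ρ : Representation ℂ G V} (hρ : Irr ρ)
    {σ : Representation ℂ G X} (hσ : Irr σ) (hc : IsCons σ ρ) : Iso σ ρ := by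
  obtain ⟨p, hp, hq⟩ := hc
  rcases hρ.2 p hp with rfl | rfl
  · exfalso
    haveI : Subsingleton (⊥ : Submodule ℂ V) := subsingleton_bot
    exact hσ.not_cons_of_subsingleton this hq.isCons
  · have hq' : IsQuotient σ ρ := hq.of_iso_right (iso_subRep_top ρ hp)
    obtain ⟨q, hqi, hiso⟩ := hq'
    rcases hρ.2 q hqi with rfl | rfl
    · exact hiso.trans (iso_quotRep_bot ρ hqi)
    · exfalso
      have : Subsingleton (V ⧸ (⊤ : Submodule ℂ V)) :=
        Submodule.Quotient.subsingleton_iff.mpr rfl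
      obtain ⟨e, _⟩ := hiso
      haveI := this
      exact absurd (e.toEquiv.subsingleton) (fun h => hσ.1 (Subsingleton.elim _ _))

universe u v

theorem cons_finite_aux (n : ℕ) : ∀ {V : Type u} [AddCommGroup V] [Module ℂ V]
    [FiniteDimensional ℂ V] (ρ : Representation ℂ G V), finrank ℂ V ≤ n →
    ∃ L : List ((m : ℕ) × Representation ℂ G (Fin m → ℂ)),
      ∀ {X : Type v} [AddCommGroup X] [Module ℂ X] (σ : Representation ℂ G X),
        Irr σ → IsCons σ ρ → ∃ τ ∈ L, Iso σ τ.2 := by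
  induction n with
  | zero =>
    intro V _ _ _ ρ hle
    refine ⟨[], fun σ hσ hc => ?_⟩
    have hss : Subsingleton V := Module.finrank_zero_iff.mp (Nat.le_zero.mp hle)
    exact absurd (hσ.not_cons_of_subsingleton hss hc) not_false
  | succ n ih =>
    intro V _ _ _ ρ hle
    by_cases hex : ∃ p : Submodule ℂ V, Inv ρ p ∧ p ≠ ⊥ ∧ p ≠ ⊤
    · obtain ⟨p, hp, hpb, hpt⟩ := hex
      have hlt1 : finrank ℂ p < finrank ℂ V :=
        Submodule.finrank_lt hpt
      have hppos : 0 < finrank ℂ p := by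
        haveI : Nontrivial p := Submodule.nontrivial_iff_ne_bot.mpr hpb
        exact Module.finrank_pos
      have hqr : finrank ℂ (V ⧸ p) + finrank ℂ p = finrank ℂ V :=
        Submodule.finrank_quotient_add_finrank p
      obtain ⟨L₁, hL₁⟩ := ih (subRep ρ p hp) (by omega)
      obtain ⟨L₂, hL₂⟩ := ih (quotRep ρ p hp) (by omega)
      refine ⟨L₁ ++ L₂, fun σ hσ hc => ?_⟩
      rcases cons_ses hσ hc hp with h | h
      · obtain ⟨τ, hτ, hi⟩ := hL₁ σ hσ h
        exact ⟨τ, List.mem_append_left _ hτ, hi⟩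
      · obtain ⟨τ, hτ, hi⟩ := hL₂ σ hσ h
        exact ⟨τ, List.mem_append_right _ hτ, hi⟩
    · push_neg at hex
      by_cases hss : Subsingleton V
      · refine ⟨[], fun σ hσ hc => ?_⟩
        exact absurd (hσ.not_cons_of_subsingleton hss hc) not_false
      · have hρirr : Irr ρ := by
          refine ⟨bot_ne_top_of_not_subsingleton hss, fun q hq => ?_⟩
          by_cases hb : q = ⊥
          · exact Or.inl hb
          · by_cases ht : q = ⊤
            · exact Or.inr ht
            · exact absurd (hex q hq hb) ht
        refine ⟨[⟨finrank ℂ V, modelRep ρ⟩], fun σ hσ hc => ?_⟩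
        exact ⟨_, List.mem_singleton_self _,
          (cons_self_of_irr hρirr hσ hc).trans (iso_modelRep ρ)⟩

/-- Every nonzero finite-dimensional representation has an irreducible quotient. -/
theorem exists_irr_quotient (ρ : Representation ℂ G V) [FiniteDimensional ℂ V]
    (hnt : ¬ Subsingleton V) :
    ∃ (p : Submodule ℂ V) (hp : Inv ρ p), p ≠ ⊤ ∧ Irr (quotRep ρ p hp) := by
  classical
  set s : Set ℕ := {m | ∃ p : Submodule ℂ V, Inv ρ p ∧ p ≠ ⊤ ∧ finrank ℂ p = m} with hs
  have hbot : Inv ρ (⊥ : Submodule ℂ V) := by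
    intro g v hv
    simp only [Submodule.mem_bot] at hv ⊢
    rw [hv, map_zero]
  have hne : s.Nonempty := ⟨finrank ℂ (⊥ : Submodule ℂ V),
    ⟨⊥, hbot, bot_ne_top_of_not_subsingleton hnt, rfl⟩⟩
  have hbdd : BddAbove s := by
    refine ⟨finrank ℂ V, fun m hm => ?_⟩
    obtain ⟨p, _, _, rfl⟩ := hm
    exact Submodule.finrank_le p
  obtain ⟨p, hp, hpt, hpr⟩ := Nat.sSup_mem hne hbdd
  refine ⟨p, hp, hpt, ?_, ?_⟩
  · -- quotient nontrivial
    haveI : Nontrivial (V ⧸ p) :=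
      (Submodule.Quotient.nontrivial_iff (p := p)).mpr hpt
    exact bot_ne_top_of_not_subsingleton (not_subsingleton _)
  · intro qbar hqbar
    have hq : Inv ρ (qbar.comap p.mkQ) := Inv_comap (equivar_mkQ ρ p hp) hqbar
    have hple : p ≤ qbar.comap p.mkQ := by
      intro x hx
      simp only [Submodule.mem_comap]
      rw [show p.mkQ x = Submodule.Quotient.mk x from rfl,
        (Submodule.Quotient.mk_eq_zero p).mpr hx]
      exact zero_mem _
    have hmap : Submodule.map p.mkQ (qbar.comap p.mkQ) = qbar := by
      rw [Submodule.map_comap_eq, Submodule.range_mkQ, top_inf_eq]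
    by_cases hqt : qbar.comap p.mkQ = ⊤
    · right
      rw [← hmap, hqt, Submodule.map_top, Submodule.range_mkQ]
    · left
      have hmem : finrank ℂ (qbar.comap p.mkQ) ∈ s := ⟨_, hq, hqt, rfl⟩
      have : finrank ℂ (qbar.comap p.mkQ) ≤ finrank ℂ p := hpr ▸ le_csSup hbdd hmem
      have hpq : p = qbar.comap p.mkQ := Submodule.eq_of_le_of_finrank_le hple this
      rw [← hmap, ← hpq]
      refine Submodule.eq_bot_iff _ |>.mpr ?_
      rintro x ⟨v, hv, rfl⟩
      exact (Submodule.Quotient.mk_eq_zero p).mpr hv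

section Coinduction

variable {Γ : Type*} [Group Γ] (Λ : Subgroup Γ)

/-- Restriction of a representation to a subgroup. -/
def resRep (ρ : Representation ℂ Γ V) : Representation ℂ Λ V := ρ.comp Λ.subtype

@[simp] theorem resRep_apply (ρ : Representation ℂ Γ V) (l : Λ) (v : V) :
    resRep Λ ρ l v = ρ (l : Γ) v := rfl

theorem iso_resRep {ρ : Representation ℂ Γ V} {ρ' : Representation ℂ Γ W}
    (h : Iso ρ ρ') : Iso (resRep Λ ρ) (resRep Λ ρ') := by
  obtain ⟨e, he⟩ := h
  exact ⟨e, fun l v => he (l : Γ) v⟩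

theorem iso_resRep_subRep (ρ : Representation ℂ Γ V) (p : Submodule ℂ V)
    (hp : Inv ρ p) (hp' : Inv (resRep Λ ρ) p) :
    Iso (subRep (resRep Λ ρ) p hp') (resRep Λ (subRep ρ p hp)) :=
  ⟨LinearEquiv.refl ℂ p, fun l v => rfl⟩

theorem iso_resRep_quotRep (ρ : Representation ℂ Γ V) (p : Submodule ℂ V)
    (hp : Inv ρ p) (hp' : Inv (resRep Λ ρ) p) :
    Iso (quotRep (resRep Λ ρ) p hp') (resRep Λ (quotRep ρ p hp)) := by
  refine ⟨LinearEquiv.refl ℂ _, fun l x => ?_⟩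
  obtain ⟨v, rfl⟩ := Submodule.Quotient.mk_surjective _ x
  rfl

theorem inv_res (ρ : Representation ℂ Γ V) {p : Submodule ℂ V} (hp : Inv ρ p) :
    Inv (resRep Λ ρ) p := fun l v hv => hp (l : Γ) v hv

variable {W : Type*} [AddCommGroup W] [Module ℂ W]

/-- The regular-type representation of `Γ` on `Γ → W`, by right translation. -/
def bigRep : Representation ℂ Γ (Γ → W) where
  toFun g :=
    { toFun := fun f x => f (x * g)
      map_add' := fun _ _ => rfl
      map_smul' := fun _ _ => rfl }
  map_one' := by ext f x; simp
  map_mul' g h := by ext f x; simp [mul_assoc]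

@[simp] theorem bigRep_apply (g : Γ) (f : Γ → W) (x : Γ) :
    (bigRep (W := W) g f) x = f (x * g) := rfl

variable (σ : Representation ℂ Λ W)

/-- The subspace of `Γ → W` underlying the coinduced representation. -/
def coindSub : Submodule ℂ (Γ → W) where
  carrier := {f | ∀ (l : Λ) (x : Γ), f ((l : Γ) * x) = σ l (f x)}
  add_mem' := by
    intro a b ha hb l x
    simp only [Pi.add_apply, ha l x, hb l x, map_add]
  zero_mem' := by
    intro l x
    simp
  smul_mem' := by
    intro c a ha l x
    simp only [Pi.smul_apply, ha l x, map_smul]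

theorem coindSub_inv : Inv (bigRep (W := W)) (coindSub Λ σ) := by
  intro g f hf l x
  simp only [bigRep_apply, mul_assoc]
  exact hf l (x * g)

/-- The coinduced representation. -/
def coindRep : Representation ℂ Γ (coindSub Λ σ) :=
  subRep bigRep (coindSub Λ σ) (coindSub_inv Λ σ)

end Coinduction

section Coinduction2

variable {Γ : Type*} [Group Γ] (Λ : Subgroup Γ)
variable {W : Type*} [AddCommGroup W] [Module ℂ W]
variable (σ : Representation ℂ Λ W)

/-- Reading off values at coset representatives. -/
noncomputable def coindRead :
    coindSub Λ σ →ₗ[ℂ] (Quotient (QuotientGroup.rightRel Λ) → W) where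
  toFun f := fun q => (f : Γ → W) q.out
  map_add' _ _ := rfl
  map_smul' _ _ := rfl

theorem coindRead_injective : Function.Injective (coindRead Λ σ) := by
  intro f1 f2 h
  ext g
  have h1 : ∀ q : Quotient (QuotientGroup.rightRel Λ),
      (f1 : Γ → W) q.out = (f2 : Γ → W) q.out := fun q => congrFun h q
  set q : Quotient (QuotientGroup.rightRel Λ) := Quotient.mk (QuotientGroup.rightRel Λ) g with hq
  have hrel : g * q.out⁻¹ ∈ Λ :=
    QuotientGroup.rightRel_apply.mp (Quotient.exact (q.out_eq.trans hq))
  set l : Λ := ⟨g * q.out⁻¹, hrel⟩ with hl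
  have hg : (l : Γ) * q.out = g := by
    simp [hl, mul_assoc]
  calc (f1 : Γ → W) g = (f1 : Γ → W) ((l : Γ) * q.out) := by rw [hg]
    _ = σ l ((f1 : Γ → W) q.out) := f1.2 l q.out
    _ = σ l ((f2 : Γ → W) q.out) := by rw [h1]
    _ = (f2 : Γ → W) ((l : Γ) * q.out) := (f2.2 l q.out).symm
    _ = (f2 : Γ → W) g := by rw [hg]

instance coindSub_finiteDimensional [FiniteDimensional ℂ W] [Λ.FiniteIndex] :
    FiniteDimensional ℂ (coindSub Λ σ) := by
  haveI : Finite (Γ ⧸ Λ) := Subgroup.finite_quotient_of_finiteIndex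
  haveI : Finite (Quotient (QuotientGroup.rightRel Λ)) :=
    Finite.of_equiv _ (QuotientGroup.quotientRightRelEquivQuotientLeftRel Λ).symm
  haveI : FiniteDimensional ℂ (Quotient (QuotientGroup.rightRel Λ) → W) := by
    haveI := Fintype.ofFinite (Quotient (QuotientGroup.rightRel Λ))
    infer_instance
  exact FiniteDimensional.of_injective (coindRead Λ σ) (coindRead_injective Λ σ)

/-- Evaluation at the identity. -/
def coindEval : coindSub Λ σ →ₗ[ℂ] W where
  toFun f := (f : Γ → W) 1
  map_add' _ _ := rfl
  map_smul' _ _ := rfl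

theorem coindEval_equivar : Equiva (resRep Λ (coindRep Λ σ)) σ (coindEval Λ σ) := by
  intro l f
  show (f : Γ → W) (1 * (l : Γ)) = σ l ((f : Γ → W) 1)
  rw [one_mul, show (l : Γ) = (l : Γ) * 1 by rw [mul_one]]
  exact f.2 l 1

theorem coindEval_surjective : Function.Surjective (coindEval Λ σ) := by
  classical
  intro w
  refine ⟨⟨fun x => if h : x ∈ Λ then σ ⟨x, h⟩ w else 0, ?_⟩, ?_⟩
  · intro l x
    by_cases hx : x ∈ Λ
    · have hlx : (l : Γ) * x ∈ Λ := mul_mem l.2 hx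
      show (if h : (l : Γ) * x ∈ Λ then σ ⟨(l : Γ) * x, h⟩ w else 0) =
        σ l (if h : x ∈ Λ then σ ⟨x, h⟩ w else 0)
      rw [dif_pos hx, dif_pos hlx,
        show (⟨(l : Γ) * x, hlx⟩ : Λ) = l * ⟨x, hx⟩ from rfl, map_mul]
      rfl
    · have hlx : (l : Γ) * x ∉ Λ := by
        intro hmem
        exact hx (by simpa using mul_mem (inv_mem l.2) hmem)
      show (if h : (l : Γ) * x ∈ Λ then σ ⟨(l : Γ) * x, h⟩ w else 0) =
        σ l (if h : x ∈ Λ then σ ⟨x, h⟩ w else 0)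
      rw [dif_neg hlx, dif_neg hx, map_zero]
  · show (if h : (1 : Γ) ∈ Λ then σ ⟨1, h⟩ w else 0) = w
    rw [dif_pos (one_mem Λ)]
    have : (⟨(1 : Γ), one_mem Λ⟩ : Λ) = 1 := rfl
    rw [this, map_one]
    rfl

end Coinduction2

section Frobenius

variable {Γ : Type*} [Group Γ] (Λ : Subgroup Γ)
variable {W : Type*} [AddCommGroup W] [Module ℂ W]

/-- An irreducible quotient of the restriction of `ρ` embeds `ρ` into a
coinduced representation (Frobenius reciprocity). -/
theorem isSub_coindRep {ρ : Representation ℂ Γ V} (hρ : Irr ρ)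
    (σ : Representation ℂ Λ W) {φ : V →ₗ[ℂ] W}
    (hφe : Equiva (resRep Λ ρ) σ φ) (hφ : φ ≠ 0) :
    IsSub ρ (coindRep Λ σ) := by
  have hmem : ∀ v : V, (fun x => φ (ρ x v)) ∈ coindSub Λ σ := by
    intro v l x
    show φ (ρ ((l : Γ) * x) v) = σ l (φ (ρ x v))
    rw [map_mul]
    exact hφe l (ρ x v)
  set Φ : V →ₗ[ℂ] coindSub Λ σ :=
    { toFun := fun v => ⟨fun x => φ (ρ x v), hmem v⟩
      map_add' := fun a b => by
        ext x
        show φ (ρ x (a + b)) = φ (ρ x a) + φ (ρ x b)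
        rw [map_add, map_add]
      map_smul' := fun c a => by
        ext x
        show φ (ρ x (c • a)) = c • φ (ρ x a)
        rw [map_smul, map_smul] } with hΦ
  have hΦe : Equiva ρ (coindRep Λ σ) Φ := by
    intro g v
    ext x
    show φ (ρ x (ρ g v)) = φ (ρ (x * g) v)
    rw [map_mul]
    rfl
  have hker : LinearMap.ker Φ ≠ ⊤ := by
    intro hk
    obtain ⟨v, hv⟩ : ∃ v, φ v ≠ 0 := by
      by_contra hall
      push_neg at hall
      exact hφ (LinearMap.ext fun v => hall v)
    have : Φ v = 0 := by
      rw [← LinearMap.mem_ker, hk]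
      trivial
    apply hv
    have h1 : φ (ρ 1 v) = 0 := congrArg (fun f : coindSub Λ σ => (f : Γ → W) 1) this
    rwa [map_one, Module.End.one_apply] at h1
  have hinj : Function.Injective Φ := by
    rw [← LinearMap.ker_eq_bot]
    rcases hρ.2 _ (Inv_ker hΦe) with h | h
    · exact h
    · exact absurd h hker
  exact ⟨LinearMap.range Φ, Inv_range hΦe, iso_sub_of_injective hΦe hinj⟩

end Frobenius

section ResCons

variable {Γ : Type*} [Group Γ] (Λ : Subgroup Γ)

/-- Any irreducible constituent of the restriction of a finite-dimensional
representation is a constituent of the restriction of an irreducible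
constituent. -/
theorem res_cons (n : ℕ) : ∀ {V : Type u} [AddCommGroup V] [Module ℂ V]
    [FiniteDimensional ℂ V] (C : Representation ℂ Γ V), finrank ℂ V ≤ n →
    ∀ {X : Type v} [AddCommGroup X] [Module ℂ X] (σ : Representation ℂ Λ X),
      Irr σ → IsCons σ (resRep Λ C) →
      ∃ τ : (m : ℕ) × Representation ℂ Γ (Fin m → ℂ), τ.1 ≤ n ∧ Irr τ.2 ∧
        IsCons σ (resRep Λ τ.2) := by
  induction n with
  | zero =>
    intro V _ _ _ C hle X _ _ σ hσ hc
    have hss : Subsingleton V := Module.finrank_zero_iff.mp (Nat.le_zero.mp hle)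
    exact absurd (hσ.not_cons_of_subsingleton hss hc) not_false
  | succ n ih =>
    intro V _ _ _ C hle X _ _ σ hσ hc
    by_cases hex : ∃ p : Submodule ℂ V, Inv C p ∧ p ≠ ⊥ ∧ p ≠ ⊤
    · obtain ⟨p, hp, hpb, hpt⟩ := hex
      have hlt1 : finrank ℂ p < finrank ℂ V :=
        Submodule.finrank_lt hpt
      have hppos : 0 < finrank ℂ p := by
        haveI : Nontrivial p := Submodule.nontrivial_iff_ne_bot.mpr hpb
        exact Module.finrank_pos
      have hqr : finrank ℂ (V ⧸ p) + finrank ℂ p = finrank ℂ V :=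
        Submodule.finrank_quotient_add_finrank p
      rcases cons_ses hσ hc (inv_res Λ C hp) with h | h
      · have h' : IsCons σ (resRep Λ (subRep C p hp)) :=
          h.of_iso_right (iso_resRep_subRep Λ C p hp (inv_res Λ C hp))
        obtain ⟨τ, hτ1, hτ2, hτ3⟩ := ih (subRep C p hp) (by omega) σ hσ h'
        exact ⟨τ, le_trans hτ1 (Nat.le_succ n), hτ2, hτ3⟩
      · have h' : IsCons σ (resRep Λ (quotRep C p hp)) :=
          h.of_iso_right (iso_resRep_quotRep Λ C p hp (inv_res Λ C hp))
        obtain ⟨τ, hτ1, hτ2, hτ3⟩ := ih (quotRep C p hp) (by omega) σ hσ h'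
        exact ⟨τ, le_trans hτ1 (Nat.le_succ n), hτ2, hτ3⟩
    · push_neg at hex
      by_cases hss : Subsingleton V
      · exact absurd (hσ.not_cons_of_subsingleton hss hc) not_false
      · have hCirr : Irr C := by
          refine ⟨bot_ne_top_of_not_subsingleton hss, fun q hq => ?_⟩
          by_cases hb : q = ⊥
          · exact Or.inl hb
          · by_cases ht : q = ⊤
            · exact Or.inr ht
            · exact absurd (hex q hq hb) ht
        refine ⟨⟨finrank ℂ V, modelRep C⟩, hle, Irr.of_iso (iso_modelRep C) hCirr, ?_⟩
        exact hc.of_iso_right (iso_resRep Λ (iso_modelRep C))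

end ResCons

section MatrixGlue

variable {n : ℕ}

/-- The representation on `Fin n → ℂ` attached to a matrix representation. -/
def toRep (ρm : G →* Matrix.GeneralLinearGroup (Fin n) ℂ) :
    Representation ℂ G (Fin n → ℂ) where
  toFun g := Matrix.mulVecLin (ρm g : Matrix (Fin n) (Fin n) ℂ)
  map_one' := by
    simp only [map_one, Matrix.GeneralLinearGroup.coe_one, Matrix.mulVecLin_one]
    rfl
  map_mul' g h := by
    simp only [map_mul, Matrix.GeneralLinearGroup.coe_mul, Matrix.mulVecLin_mul]
    rfl

@[simp] theorem toRep_apply (ρm : G →* Matrix.GeneralLinearGroup (Fin n) ℂ)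
    (g : G) (v : Fin n → ℂ) :
    toRep ρm g v = Matrix.mulVec (ρm g : Matrix (Fin n) (Fin n) ℂ) v := rfl

/-- The matrix representation attached to a representation on `Fin n → ℂ`. -/
noncomputable def matRep (ρ : Representation ℂ G (Fin n → ℂ)) :
    G →* Matrix.GeneralLinearGroup (Fin n) ℂ where
  toFun g :=
    ⟨LinearMap.toMatrix' (ρ g), LinearMap.toMatrix' (ρ g⁻¹),
      by rw [← LinearMap.toMatrix'_mul, ← map_mul, mul_inv_cancel, map_one,
        LinearMap.toMatrix'_one],
      by rw [← LinearMap.toMatrix'_mul, ← map_mul, inv_mul_cancel, map_one,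
        LinearMap.toMatrix'_one]⟩
  map_one' := by
    apply Units.ext
    show LinearMap.toMatrix' (ρ 1) = 1
    rw [map_one, LinearMap.toMatrix'_one]
  map_mul' g h := by
    apply Units.ext
    show LinearMap.toMatrix' (ρ (g * h)) =
      LinearMap.toMatrix' (ρ g) * LinearMap.toMatrix' (ρ h)
    rw [map_mul, LinearMap.toMatrix'_mul]

@[simp] theorem toRep_matRep (ρ : Representation ℂ G (Fin n → ℂ)) :
    toRep (matRep ρ) = ρ := by
  ext g : 1
  show Matrix.mulVecLin (LinearMap.toMatrix' (ρ g)) = ρ g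
  rw [← Matrix.toLin'_apply', Matrix.toLin'_toMatrix']

/-- Irreducibility of a matrix representation matches `Irr` of `toRep`. -/
theorem isIrreducibleRep_iff_irr (hn : 1 ≤ n)
    (ρm : G →* Matrix.GeneralLinearGroup (Fin n) ℂ) :
    IsIrreducibleRep ρm ↔ Irr (toRep ρm) := by
  haveI : Nonempty (Fin n) := ⟨⟨0, hn⟩⟩
  constructor
  · intro h
    refine ⟨bot_ne_top_of_not_subsingleton (not_subsingleton _), fun p hp => ?_⟩
    exact h p (fun g v hv => hp g v hv)
  · intro h p hp
    exact h.2 p (fun g v hv => hp g v hv)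

set_option maxHeartbeats 1000000 in
/-- Equivalence of matrix representations matches `Iso` of `toRep`s. -/
theorem repEquiv_iff_iso (ρ₁ ρ₂ : G →* Matrix.GeneralLinearGroup (Fin n) ℂ) :
    RepEquiv ρ₁ ρ₂ ↔ Iso (toRep ρ₁) (toRep ρ₂) := by
  constructor
  · rintro ⟨M, hM⟩
    refine ⟨LinearEquiv.ofLinear
      (Matrix.mulVecLin (((M⁻¹ : Matrix.GeneralLinearGroup (Fin n) ℂ) : Matrix (Fin n) (Fin n) ℂ)))
      (Matrix.mulVecLin ((M : Matrix (Fin n) (Fin n) ℂ))) ?_ ?_, ?_⟩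
    · rw [← Matrix.mulVecLin_mul, ← Matrix.GeneralLinearGroup.coe_mul, inv_mul_cancel,
        Matrix.GeneralLinearGroup.coe_one, Matrix.mulVecLin_one]
    · rw [← Matrix.mulVecLin_mul, ← Matrix.GeneralLinearGroup.coe_mul, mul_inv_cancel,
        Matrix.GeneralLinearGroup.coe_one, Matrix.mulVecLin_one]
    · intro g v
      show Matrix.mulVec ((M⁻¹ : Matrix.GeneralLinearGroup (Fin n) ℂ) : Matrix (Fin n) (Fin n) ℂ)
          (Matrix.mulVec (((ρ₁ g) : Matrix (Fin n) (Fin n) ℂ)) v) =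
        Matrix.mulVec (((ρ₂ g) : Matrix (Fin n) (Fin n) ℂ))
          (Matrix.mulVec ((M⁻¹ : Matrix.GeneralLinearGroup (Fin n) ℂ) : Matrix (Fin n) (Fin n) ℂ) v)
      rw [Matrix.mulVec_mulVec, Matrix.mulVec_mulVec]
      have hugl : M⁻¹ * ρ₁ g = ρ₂ g * M⁻¹ := by
        rw [hM g]
        group
      have hmat : ((M⁻¹ : Matrix.GeneralLinearGroup (Fin n) ℂ) : Matrix (Fin n) (Fin n) ℂ) *
          ((ρ₁ g : Matrix (Fin n) (Fin n) ℂ)) =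
          ((ρ₂ g : Matrix (Fin n) (Fin n) ℂ)) *
          ((M⁻¹ : Matrix.GeneralLinearGroup (Fin n) ℂ) : Matrix (Fin n) (Fin n) ℂ) := by
        rw [← Matrix.GeneralLinearGroup.coe_mul, ← Matrix.GeneralLinearGroup.coe_mul, hugl]
      rw [hmat]
  · rintro ⟨e, he⟩
    refine ⟨⟨LinearMap.toMatrix' (e.symm : (Fin n → ℂ) →ₗ[ℂ] (Fin n → ℂ)),
      LinearMap.toMatrix' (e : (Fin n → ℂ) →ₗ[ℂ] (Fin n → ℂ)), ?_, ?_⟩, ?_⟩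
    · rw [← LinearMap.toMatrix'_mul]
      have : ((e.symm : (Fin n → ℂ) →ₗ[ℂ] _) * (e : (Fin n → ℂ) →ₗ[ℂ] _)) = LinearMap.id := by
        ext v
        simp [Module.End.mul_apply]
      rw [this, LinearMap.toMatrix'_id]
    · rw [← LinearMap.toMatrix'_mul]
      have : ((e : (Fin n → ℂ) →ₗ[ℂ] _) * (e.symm : (Fin n → ℂ) →ₗ[ℂ] _)) = LinearMap.id := by
        ext v
        simp [Module.End.mul_apply]
      rw [this, LinearMap.toMatrix'_id]
    · intro g
      apply Units.ext
      show (ρ₁ g : Matrix (Fin n) (Fin n) ℂ) =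
        LinearMap.toMatrix' (e.symm : (Fin n → ℂ) →ₗ[ℂ] _) * (ρ₂ g : Matrix (Fin n) (Fin n) ℂ) *
          LinearMap.toMatrix' (e : (Fin n → ℂ) →ₗ[ℂ] _)
      have h2 : (ρ₂ g : Matrix (Fin n) (Fin n) ℂ) = LinearMap.toMatrix' (toRep ρ₂ g) := by
        show _ = LinearMap.toMatrix' (Matrix.mulVecLin _)
        rw [← Matrix.toLin'_apply', LinearMap.toMatrix'_toLin']
      have h1 : (ρ₁ g : Matrix (Fin n) (Fin n) ℂ) = LinearMap.toMatrix' (toRep ρ₁ g) := by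
        show _ = LinearMap.toMatrix' (Matrix.mulVecLin _)
        rw [← Matrix.toLin'_apply', LinearMap.toMatrix'_toLin']
      rw [h1, h2, ← LinearMap.toMatrix'_mul, ← LinearMap.toMatrix'_mul]
      congr 1
      refine LinearMap.ext fun v => ?_
      show toRep ρ₁ g v = e.symm (toRep ρ₂ g (e v))
      rw [← he g v, e.symm_apply_apply]
  
end MatrixGlue

section Assembly

/-- The (at most one-element) set of `n`-dimensional matrix representations
attached to a bundled model representation. -/
noncomputable def sigmaToMat (n : ℕ) (τ : (m : ℕ) × Representation ℂ G (Fin m → ℂ)) :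
    Set (G →* Matrix.GeneralLinearGroup (Fin n) ℂ) :=
  {ρ' | ∃ h : τ.1 = n, ρ' = matRep (h ▸ τ.2)}

theorem sigmaToMat_finite (n : ℕ) (τ : (m : ℕ) × Representation ℂ G (Fin m → ℂ)) :
    (sigmaToMat n τ).Finite := by
  apply Set.Subsingleton.finite
  rintro a ⟨h1, rfl⟩ b ⟨h2, rfl⟩
  rfl

theorem exists_mem_sigmaToMat {n : ℕ} {σ : Representation ℂ G (Fin n → ℂ)}
    {τ : (m : ℕ) × Representation ℂ G (Fin m → ℂ)} (h : Iso σ τ.2) :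
    ∃ ρ' ∈ sigmaToMat n τ, Iso σ (toRep ρ') := by
  obtain ⟨m, ρτ⟩ := τ
  obtain ⟨e, he⟩ := h
  have hmn : m = n := by
    have h1 : finrank ℂ (Fin n → ℂ) = finrank ℂ (Fin m → ℂ) := e.finrank_eq
    rw [Module.finrank_fin_fun, Module.finrank_fin_fun] at h1
    omega
  subst hmn
  refine ⟨matRep ρτ, ⟨rfl, rfl⟩, ?_⟩
  rw [toRep_matRep]
  exact ⟨e, he⟩

theorem nontrivial_of_bot_ne_top (h : (⊥ : Submodule ℂ V) ≠ ⊤) : Nontrivial V := by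
  rcases subsingleton_or_nontrivial V with hs | hn
  · exact absurd (Subsingleton.elim _ _) h
  · exact hn

end Assembly

section DirectionA

variable {Γ : Type*} [Group Γ]

theorem rigid_of_rigid_subgroup (Λ : Subgroup Γ) [Λ.FiniteIndex]
    (hΛ : IsRigid Λ) : IsRigid Γ := by
  classical
  intro n hn
  -- finite sets of Λ-irreducibles in each dimension m
  have hSm : ∀ m : ℕ, ∃ S : Set (↥Λ →* Matrix.GeneralLinearGroup (Fin m) ℂ),
      S.Finite ∧ (1 ≤ m → ∀ ρ, IsIrreducibleRep ρ → ∃ σ ∈ S, RepEquiv ρ σ) := by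
    intro m
    by_cases h : 1 ≤ m
    · obtain ⟨S, h1, h2⟩ := hΛ m h
      exact ⟨S, h1, fun _ => h2⟩
    · exact ⟨∅, Set.finite_empty, fun h' => absurd h' h⟩
  choose SΛ hSΛfin hSΛ using hSm
  have hL : ∀ (m : ℕ) (μ : ↥Λ →* Matrix.GeneralLinearGroup (Fin m) ℂ),
      ∃ L : List ((k : ℕ) × Representation ℂ Γ (Fin k → ℂ)),
        ∀ (σ' : Representation ℂ Γ (Fin n → ℂ)),
          Irr σ' → IsCons σ' (coindRep Λ (toRep μ)) → ∃ τ ∈ L, Iso σ' τ.2 := by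
    intro m μ
    obtain ⟨L, hL⟩ := cons_finite_aux (G := Γ)
      (finrank ℂ (coindSub Λ (toRep μ))) (coindRep Λ (toRep μ)) le_rfl
    exact ⟨L, fun σ' h1 h2 => hL σ' h1 h2⟩
  choose L hLspec using hL
  refine ⟨⋃ m ∈ Set.Icc 1 n, ⋃ μ ∈ SΛ m, ⋃ τ ∈ {x | x ∈ L m μ}, sigmaToMat n τ,
    ?_, ?_⟩
  · refine Set.Finite.biUnion (Set.finite_Icc _ _) fun m _ => ?_
    refine Set.Finite.biUnion (hSΛfin m) fun μ _ => ?_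
    exact Set.Finite.biUnion ((L m μ).finite_toSet) fun τ _ => sigmaToMat_finite n τ
  · intro ρm hρm
    set ρ : Representation ℂ Γ (Fin n → ℂ) := toRep ρm with hρdef
    have hρirr : Irr ρ := (isIrreducibleRep_iff_irr hn ρm).mp hρm
    haveI : Nonempty (Fin n) := ⟨⟨0, hn⟩⟩
    have hnt : ¬ Subsingleton (Fin n → ℂ) := not_subsingleton _
    obtain ⟨p, hp, hpt, hσ₀⟩ := exists_irr_quotient (resRep Λ ρ) hnt
    set σ₀ := quotRep (resRep Λ ρ) p hp with hσ₀def
    set m := finrank ℂ ((Fin n → ℂ) ⧸ p) with hmdef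
    have hm1 : 1 ≤ m := by
      haveI : Nontrivial ((Fin n → ℂ) ⧸ p) := nontrivial_of_bot_ne_top hσ₀.1
      exact Module.finrank_pos
    have hmn : m ≤ n := by
      have := Submodule.finrank_quotient_le p
      rwa [Module.finrank_fin_fun] at this
    have hirrmat : IsIrreducibleRep (matRep (modelRep σ₀)) := by
      refine (isIrreducibleRep_iff_irr hm1 _).mpr ?_
      rw [toRep_matRep]
      exact Irr.of_iso (iso_modelRep σ₀) hσ₀
    obtain ⟨μ, hμmem, hμeq⟩ := hSΛ m hm1 (matRep (modelRep σ₀)) hirrmat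
    have hIso1 : Iso (modelRep σ₀) (toRep μ) := by
      have := (repEquiv_iff_iso _ _).mp hμeq
      rwa [toRep_matRep] at this
    obtain ⟨e₂, he₂⟩ := (iso_modelRep σ₀).trans hIso1
    set φ : (Fin n → ℂ) →ₗ[ℂ] (Fin m → ℂ) := e₂.toLinearMap ∘ₗ p.mkQ with hφdef
    have hφe : Equiva (resRep Λ ρ) (toRep μ) φ := by
      intro l v
      exact he₂ l (Submodule.Quotient.mk v)
    have hφ0 : φ ≠ 0 := by
      obtain ⟨v, hv⟩ : ∃ v, v ∉ p := by
        by_contra hall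
        push_neg at hall
        exact hpt (Submodule.eq_top_iff'.mpr hall)
      intro h0
      apply hv
      have : φ v = 0 := by rw [h0]; rfl
      have h1 : e₂ (Submodule.Quotient.mk v) = 0 := this
      rw [LinearEquiv.map_eq_zero_iff] at h1
      exact (Submodule.Quotient.mk_eq_zero p).mp h1
    have hsub : IsSub ρ (coindRep Λ (toRep μ)) :=
      isSub_coindRep Λ hρirr (toRep μ) hφe hφ0
    obtain ⟨τ, hτL, hτiso⟩ := hLspec m μ ρ hρirr hsub.isCons
    obtain ⟨ρ', hρ'mem, hρ'iso⟩ := exists_mem_sigmaToMat hτiso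
    refine ⟨ρ', ?_, (repEquiv_iff_iso ρm ρ').mpr hρ'iso⟩
    simp only [Set.mem_iUnion, Set.mem_setOf_eq]
    exact ⟨m, ⟨hm1, hmn⟩, μ, hμmem, τ, hτL, hρ'mem⟩

end DirectionA

section DirectionB

variable {Γ : Type*} [Group Γ]

theorem rigid_subgroup_of_rigid (Λ : Subgroup Γ) [Λ.FiniteIndex]
    (hΓ : IsRigid Γ) : IsRigid ↥Λ := by
  classical
  intro n hn
  set N := Λ.index * n with hNdef
  have hSm : ∀ m : ℕ, ∃ S : Set (Γ →* Matrix.GeneralLinearGroup (Fin m) ℂ),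
      S.Finite ∧ (1 ≤ m → ∀ ρ, IsIrreducibleRep ρ → ∃ σ ∈ S, RepEquiv ρ σ) := by
    intro m
    by_cases h : 1 ≤ m
    · obtain ⟨S, h1, h2⟩ := hΓ m h
      exact ⟨S, h1, fun _ => h2⟩
    · exact ⟨∅, Set.finite_empty, fun h' => absurd h' h⟩
  choose SΓ hSΓfin hSΓ using hSm
  have hL : ∀ (m : ℕ) (μ : Γ →* Matrix.GeneralLinearGroup (Fin m) ℂ),
      ∃ L : List ((k : ℕ) × Representation ℂ ↥Λ (Fin k → ℂ)),
        ∀ (σ' : Representation ℂ ↥Λ (Fin n → ℂ)),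
          Irr σ' → IsCons σ' (resRep Λ (toRep μ)) → ∃ τ ∈ L, Iso σ' τ.2 := by
    intro m μ
    obtain ⟨L, hL⟩ := cons_finite_aux (G := ↥Λ)
      (finrank ℂ (Fin m → ℂ)) (resRep Λ (toRep μ)) le_rfl
    exact ⟨L, fun σ' h1 h2 => hL σ' h1 h2⟩
  choose L hLspec using hL
  refine ⟨⋃ m ∈ Set.Icc 1 N, ⋃ μ ∈ SΓ m, ⋃ τ ∈ {x | x ∈ L m μ}, sigmaToMat n τ,
    ?_, ?_⟩
  · refine Set.Finite.biUnion (Set.finite_Icc _ _) fun m _ => ?_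
    refine Set.Finite.biUnion (hSΓfin m) fun μ _ => ?_
    exact Set.Finite.biUnion ((L m μ).finite_toSet) fun τ _ => sigmaToMat_finite n τ
  · intro ρm hρm
    set σ : Representation ℂ ↥Λ (Fin n → ℂ) := toRep ρm with hσdef
    have hσirr : Irr σ := (isIrreducibleRep_iff_irr hn ρm).mp hρm
    have hquot : IsQuotient σ (resRep Λ (coindRep Λ σ)) :=
      ⟨LinearMap.ker (coindEval Λ σ), Inv_ker (coindEval_equivar Λ σ),
        (iso_quot_of_surjective (coindEval_equivar Λ σ) (coindEval_surjective Λ σ)).symm⟩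
    -- bound on the dimension of the coinduced representation
    haveI hfinQ : Finite (Γ ⧸ Λ) := Subgroup.finite_quotient_of_finiteIndex
    haveI : Finite (Quotient (QuotientGroup.rightRel Λ)) :=
      Finite.of_equiv _ (QuotientGroup.quotientRightRelEquivQuotientLeftRel Λ).symm
    haveI := Fintype.ofFinite (Quotient (QuotientGroup.rightRel Λ))
    have hbound : finrank ℂ (coindSub Λ σ) ≤ N := by
      have h1 : finrank ℂ (coindSub Λ σ) ≤
          finrank ℂ (Quotient (QuotientGroup.rightRel Λ) → (Fin n → ℂ)) :=
        LinearMap.finrank_le_finrank_of_injective (coindRead_injective Λ σ)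
      have h2 : finrank ℂ (Quotient (QuotientGroup.rightRel Λ) → (Fin n → ℂ)) =
          Fintype.card (Quotient (QuotientGroup.rightRel Λ)) * n := by
        rw [Module.finrank_pi_fintype]
        simp [Module.finrank_fin_fun]
      have h3 : Fintype.card (Quotient (QuotientGroup.rightRel Λ)) = Λ.index := by
        rw [← Nat.card_eq_fintype_card]
        rw [Nat.card_congr (QuotientGroup.quotientRightRelEquivQuotientLeftRel Λ)]
        rfl
      rw [h2, h3] at h1
      exact h1
    obtain ⟨τΓ, hτ1, hτirr, hτcons⟩ :=
      res_cons Λ N (coindRep Λ σ) hbound σ hσirr hquot.isCons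
    have hm1 : 1 ≤ τΓ.1 := by
      haveI : Nontrivial (Fin τΓ.1 → ℂ) := nontrivial_of_bot_ne_top hτirr.1
      have := Module.finrank_pos (R := ℂ) (M := Fin τΓ.1 → ℂ)
      rwa [Module.finrank_fin_fun] at this
    have hirrmat : IsIrreducibleRep (matRep τΓ.2) := by
      refine (isIrreducibleRep_iff_irr hm1 _).mpr ?_
      rw [toRep_matRep]
      exact hτirr
    obtain ⟨μ, hμmem, hμeq⟩ := hSΓ τΓ.1 hm1 (matRep τΓ.2) hirrmat
    have hIso1 : Iso τΓ.2 (toRep μ) := by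
      have := (repEquiv_iff_iso _ _).mp hμeq
      rwa [toRep_matRep] at this
    have hcons : IsCons σ (resRep Λ (toRep μ)) :=
      hτcons.of_iso_right (iso_resRep Λ hIso1)
    obtain ⟨τ, hτL, hτiso⟩ := hLspec τΓ.1 μ σ hσirr hcons
    obtain ⟨ρ', hρ'mem, hρ'iso⟩ := exists_mem_sigmaToMat hτiso
    refine ⟨ρ', ?_, (repEquiv_iff_iso ρm ρ').mpr hρ'iso⟩
    simp only [Set.mem_iUnion, Set.mem_setOf_eq]
    exact ⟨τΓ.1, ⟨hm1, hτ1⟩, μ, hμmem, τ, hτL, hρ'mem⟩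

end DirectionB

end RigidAux

/-- For a finitely generated group `Γ` and a finite-index subgroup `Λ`,
`Λ` is rigid if and only if `Γ` is rigid. -/
theorem isRigid_iff_of_finiteIndex (Γ : Type*) [Group Γ] (hfg : Group.FG Γ)
    (Λ : Subgroup Γ) (hΛ : Λ.FiniteIndex) : IsRigid Λ ↔ IsRigid Γ := by
  haveI := hΛ
  exact ⟨RigidAux.rigid_of_rigid_subgroup Λ, RigidAux.rigid_subgroup_of_rigid Λ⟩
end

section
/- Let L₁ and L₂ be finitely generated groups, D a finitely presented group, and ρ₁ : L₁ → D, ρ₂ : L₂ → D surjective homomorphisms. Then the fibre product Γ = L₁ ×_D L₂ is finitely generated. -/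
/-- The fibre product `L₁ ×_D L₂` of two surjective homomorphisms onto `D`,
as a subgroup of `L₁ × L₂`. -/
def fiberProduct {L₁ L₂ D : Type*} [Group L₁] [Group L₂] [Group D]
    (ρ₁ : L₁ →* D) (ρ₂ : L₂ →* D) : Subgroup (L₁ × L₂) where
  carrier := {p : L₁ × L₂ | ρ₁ p.1 = ρ₂ p.2}
  one_mem' := by simp
  mul_mem' := by
    intro a b ha hb
    simp only [Set.mem_setOf_eq, Prod.fst_mul, Prod.snd_mul, map_mul] at *
    rw [ha, hb]
  inv_mem' := by
    intro a ha
    simp only [Set.mem_setOf_eq, Prod.fst_inv, Prod.snd_inv, map_inv] at *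
    rw [ha]

/-- A group is finitely presented if it is a quotient of a finitely generated
free group by the normal closure of finitely many elements. -/
def IsFinitelyPresented (D : Type*) [Group D] : Prop :=
  ∃ (m : ℕ) (S : Finset (FreeGroup (Fin m))) (φ : FreeGroup (Fin m) →* D),
    Function.Surjective φ ∧
      φ.ker = Subgroup.normalClosure (S : Set (FreeGroup (Fin m)))

theorem ker_normally_fg {L D : Type*} [Group L] [Group D]
    (hfg : Group.FG L)
    (hD : ∃ (m : ℕ) (S : Finset (FreeGroup (Fin m))) (φ : FreeGroup (Fin m) →* D),
      Function.Surjective φ ∧ φ.ker = Subgroup.normalClosure (S : Set (FreeGroup (Fin m))))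
    (ρ : L →* D) (hsurj : Function.Surjective ρ) :
    ∃ T : Set L, T.Finite ∧ Subgroup.normalClosure T = ρ.ker := by
  obtain ⟨m, S, φ, hφ, hker⟩ := hD
  obtain ⟨Z, hZ, hZfin⟩ := Group.fg_iff.mp hfg
  choose u hu using fun i : Fin m => hsurj (φ (FreeGroup.of i))
  set ψ : FreeGroup (Fin m) →* L := FreeGroup.lift u with hψ
  have hcomp : ∀ w, ρ (ψ w) = φ w := by
    intro w
    have h : ρ.comp ψ = φ := by
      apply FreeGroup.ext_hom
      intro i
      simp [hψ, hu]
    calc ρ (ψ w) = (ρ.comp ψ) w := rfl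
    _ = φ w := by rw [h]
  choose w hw using fun z : L => hφ (ρ z)
  set T : Set L := (ψ '' ↑S) ∪ ((fun z => z * (ψ (w z))⁻¹) '' Z) with hT
  refine ⟨T, (S.finite_toSet.image ψ).union (hZfin.image _), ?_⟩
  have hle : Subgroup.normalClosure T ≤ ρ.ker := by
    apply Subgroup.normalClosure_le_normal
    rintro x (⟨s, hs, rfl⟩ | ⟨z, hz, rfl⟩)
    · have hs1 : φ s = 1 := by
        rw [← MonoidHom.mem_ker, hker]
        exact Subgroup.subset_normalClosure hs
      simp [MonoidHom.mem_ker, hcomp, hs1]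
    · simp [MonoidHom.mem_ker, hcomp, hw]
  refine le_antisymm hle ?_
  intro k hk
  set N := Subgroup.normalClosure T with hN
  let π := QuotientGroup.mk' N
  have hπψ : Function.Surjective (π.comp ψ) := by
    have hrange : ∀ z ∈ Z, π z ∈ (π.comp ψ).range := by
      intro z hz
      refine ⟨w z, ?_⟩
      have hmem : z * (ψ (w z))⁻¹ ∈ N :=
        Subgroup.subset_normalClosure (Or.inr ⟨z, hz, rfl⟩)
      show π (ψ (w z)) = π z
      rw [QuotientGroup.mk'_eq_mk']
      exact ⟨(ψ (w z))⁻¹ * z, by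
        have h2 := (Subgroup.normalClosure_normal (s := T)).conj_mem _ hmem z⁻¹
        simpa [mul_assoc] using h2, by group⟩
    have hrtop : (π.comp ψ).range = ⊤ := by
      rw [eq_top_iff]
      have h2 : Subgroup.closure (↑π '' Z) = ⊤ := by
        rw [← MonoidHom.map_closure, hZ]
        exact (Subgroup.map_top_of_surjective π (QuotientGroup.mk'_surjective N))
      rw [← h2, Subgroup.closure_le]
      rintro x ⟨z, hz, rfl⟩
      exact hrange z hz
    exact MonoidHom.range_eq_top.mp hrtop
  obtain ⟨v, hv⟩ := hπψ (π k)
  have hdiff : k * (ψ v)⁻¹ ∈ N := by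
    have h1 : (ψ v)⁻¹ * k ∈ N := by
      rw [← QuotientGroup.eq]
      exact hv
    have h2 := (Subgroup.normalClosure_normal (s := T)).conj_mem _ h1 (ψ v)
    simpa [mul_assoc] using h2
  have hψv : ψ v ∈ N := by
    have hv1 : φ v = 1 := by
      have h1 := hle hdiff
      rw [MonoidHom.mem_ker, map_mul, map_inv, hk, one_mul, inv_eq_one] at h1
      rw [← hcomp, h1]
    have hv2 : v ∈ Subgroup.normalClosure (↑S : Set (FreeGroup (Fin m))) := by
      rw [← hker]; exact hv1
    have hmono : Subgroup.normalClosure (↑S : Set (FreeGroup (Fin m)))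
        ≤ (Subgroup.normalClosure (ψ '' ↑S)).comap ψ :=
      Subgroup.normalClosure_le_normal
        (fun s hs => Subgroup.subset_normalClosure ⟨s, hs, rfl⟩)
    have := hmono hv2
    exact Subgroup.normalClosure_mono (Set.subset_union_left) this
  have : (k * (ψ v)⁻¹) * ψ v ∈ N := N.mul_mem hdiff hψv
  simpa using this

/-- The fibre product of two finitely generated groups over a finitely
presented group is finitely generated. -/
theorem fg_fiberProduct {L₁ L₂ D : Type*} [Group L₁] [Group L₂] [Group D]
    (hfg₁ : Group.FG L₁) (hfg₂ : Group.FG L₂) (hD : IsFinitelyPresented D)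
    (ρ₁ : L₁ →* D) (ρ₂ : L₂ →* D)
    (hsurj₁ : Function.Surjective ρ₁) (hsurj₂ : Function.Surjective ρ₂) :
    Group.FG (fiberProduct ρ₁ ρ₂) := by
  obtain ⟨T, hTfin, hT⟩ := ker_normally_fg hfg₂ hD ρ₂ hsurj₂
  obtain ⟨S₁, hS₁, hS₁fin⟩ := Group.fg_iff.mp hfg₁
  obtain ⟨S₂, hS₂, hS₂fin⟩ := Group.fg_iff.mp hfg₂
  choose y hy using fun x : L₁ => hsurj₂ (ρ₁ x)
  choose x' hx' using fun z : L₂ => hsurj₁ (ρ₂ z)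
  set Gen : Set (L₁ × L₂) :=
    ((fun a => (a, y a)) '' S₁) ∪ ((fun b => (x' b, b)) '' S₂) ∪
      ((fun k => ((1 : L₁), k)) '' T) with hGen
  have hGenfin : Gen.Finite :=
    ((hS₁fin.image _).union (hS₂fin.image _)).union (hTfin.image _)
  rw [Group.fg_iff_subgroup_fg, Subgroup.fg_iff]
  refine ⟨Gen, ?_, hGenfin⟩
  set H := Subgroup.closure Gen with hH
  -- H ≤ fiberProduct
  have hle : H ≤ fiberProduct ρ₁ ρ₂ := by
    rw [Subgroup.closure_le]
    rintro p ((⟨a, _, rfl⟩ | ⟨b, _, rfl⟩) | ⟨k, hk, rfl⟩)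
    · exact (hy a).symm
    · exact hx' b
    · show ρ₁ 1 = ρ₂ k
      have : k ∈ ρ₂.ker := by
        rw [← hT]; exact Subgroup.subset_normalClosure hk
      simp [MonoidHom.mem_ker.mp this]
  refine le_antisymm hle ?_
  -- projections of H are full
  have hproj₁ : ∀ a : L₁, ∃ h ∈ H, h.1 = a := by
    intro a
    have : Subgroup.map (MonoidHom.fst L₁ L₂) H = ⊤ := by
      rw [hH, MonoidHom.map_closure, eq_top_iff, ← hS₁, Subgroup.closure_le]
      intro s hs
      exact Subgroup.subset_closure ⟨(s, y s), Or.inl (Or.inl ⟨s, hs, rfl⟩), rfl⟩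
    have := this ▸ Subgroup.mem_top a
    obtain ⟨h, hh, hh1⟩ := Subgroup.mem_map.mp this
    exact ⟨h, hh, hh1⟩
  have hproj₂ : ∀ b : L₂, ∃ h ∈ H, h.2 = b := by
    intro b
    have : Subgroup.map (MonoidHom.snd L₁ L₂) H = ⊤ := by
      rw [hH, MonoidHom.map_closure, eq_top_iff, ← hS₂, Subgroup.closure_le]
      intro s hs
      exact Subgroup.subset_closure ⟨(x' s, s), Or.inl (Or.inr ⟨s, hs, rfl⟩), rfl⟩
    have := this ▸ Subgroup.mem_top b
    obtain ⟨h, hh, hh1⟩ := Subgroup.mem_map.mp this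
    exact ⟨h, hh, hh1⟩
  -- K = {k | (1,k) ∈ H} contains ker ρ₂
  set K : Subgroup L₂ := H.comap (MonoidHom.inr L₁ L₂) with hK
  have hKnormal : K.Normal := by
    constructor
    intro k hk g
    obtain ⟨h, hh, rfl⟩ := hproj₂ g
    have : h * ((1 : L₁), k) * h⁻¹ ∈ H := H.mul_mem (H.mul_mem hh hk) (H.inv_mem hh)
    show ((1 : L₁), h.2 * k * h.2⁻¹) ∈ H
    have heq : h * ((1 : L₁), k) * h⁻¹ = ((1 : L₁), h.2 * k * h.2⁻¹) := by
      ext <;> simp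
    rwa [heq] at this
  have hker : ρ₂.ker ≤ K := by
    rw [← hT]
    exact Subgroup.normalClosure_le_normal
      (fun k hk => Subgroup.subset_closure (Or.inr ⟨k, hk, rfl⟩))
  -- conclude
  rintro ⟨p₁, p₂⟩ hp
  obtain ⟨h, hh, rfl⟩ := hproj₁ p₁
  have hkmem : h.2⁻¹ * p₂ ∈ ρ₂.ker := by
    rw [MonoidHom.mem_ker, map_mul, map_inv, ← (hle hh : ρ₁ h.1 = ρ₂ h.2), hp]
    group
  have h2 : ((1 : L₁), h.2⁻¹ * p₂) ∈ H := hker hkmem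
  have : h * ((1 : L₁), h.2⁻¹ * p₂) ∈ H := H.mul_mem hh h2
  have heq : h * ((1 : L₁), h.2⁻¹ * p₂) = (h.1, p₂) := by
    ext <;> simp
  rwa [heq] at this
end

section
/- Let L be a group, ρ : L → D a surjective homomorphism with kernel R, and Γ = L ×_D L the fibre product of L with itself over D. Assume that L is FAb and that for every finite-index normal subgroup L₀ of L and every finite-index subgroup R₀ of R that is normal in L, the commutator subgroup [L₀, R₀] has finite index in R₀. Then Γ is FAb. -/
private lemma commutator_finiteIndex_of_finite {G : Type*} [Group G]
    (h : Finite (Abelianization G)) : (commutator G).FiniteIndex :=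
  haveI : Finite (G ⧸ commutator G) := h
  Subgroup.finiteIndex_of_finite_quotient

private lemma commutator_subgroupOf_self {G : Type*} [Group G] (H : Subgroup G) :
    commutator ↥H = ⁅H, H⁆.subgroupOf H := by
  have h1 : ⁅H, H⁆ ≤ H := Subgroup.commutator_le.mpr fun a ha b hb => by
    rw [commutatorElement_def]
    exact H.mul_mem (H.mul_mem (H.mul_mem ha hb) (H.inv_mem ha)) (H.inv_mem hb)
  apply Subgroup.map_injective H.subtype_injective
  rw [commutator_def, Subgroup.map_commutator, ← MonoidHom.range_eq_map,
    Subgroup.range_subtype, Subgroup.subgroupOf_map_subtype, inf_eq_left.mpr h1]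

private lemma finite_abelianization_of_finiteIndex_subgroup {G : Type*} [Group G]
    (B : Subgroup G) (hB : B.FiniteIndex) (h : Finite (Abelianization ↥B)) :
    Finite (Abelianization G) := by
  set φ : G →* Abelianization G := Abelianization.of with hφdef
  have hφ : Function.Surjective φ := fun x => Quotient.inductionOn' x fun g => ⟨g, rfl⟩
  set B' : Subgroup (Abelianization G) := B.map φ with hB'
  have hfi : B'.index ≠ 0 :=
    ne_zero_of_dvd_ne_zero hB.index_ne_zero (B.index_map_dvd hφ)
  set ψ : Abelianization ↥B →* Abelianization G := Abelianization.lift (φ.comp B.subtype)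
    with hψdef
  have hsub : (B' : Set (Abelianization G)) ⊆ Set.range ψ := by
    rintro x ⟨b, hb, rfl⟩
    exact ⟨Abelianization.of ⟨b, hb⟩, Abelianization.lift_apply_of _ _⟩
  haveI hfin : Finite ↥B' := ((Set.finite_range ψ).subset hsub).to_subtype
  have hcard : Nat.card (Abelianization G) ≠ 0 := by
    rw [← B'.index_mul_card]
    exact Nat.mul_ne_zero hfi Nat.card_pos.ne'
  exact Nat.finite_of_card_ne_zero hcard

private lemma finite_abelianization_of_le {G : Type*} [Group G] {H K : Subgroup G}
    (hle : H ≤ K) (hfin : (H.subgroupOf K).FiniteIndex) (h : Finite (Abelianization ↥H)) :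
    Finite (Abelianization ↥K) := by
  have e : ↥(H.subgroupOf K) ≃* ↥H := Subgroup.subgroupOfEquivOfLe hle
  have h2 : Finite (Abelianization ↥(H.subgroupOf K)) :=
    Finite.of_equiv _ e.abelianizationCongr.symm.toEquiv
  exact finite_abelianization_of_finiteIndex_subgroup _ hfin h2

open scoped commutatorElement in
private lemma key_normal_case {L D : Type*} [Group L] [Group D]
    (ρ : L →* D)
    (hFAb : IsFAb L)
    (hcomm : ∀ L₀ : Subgroup L, L₀.Normal → L₀.FiniteIndex →
      ∀ R₀ : Subgroup L, R₀ ≤ ρ.ker → (R₀.subgroupOf ρ.ker).FiniteIndex →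
        R₀.Normal → (⁅L₀, R₀⁆.subgroupOf R₀).FiniteIndex)
    (Λ : Subgroup ↥(fiberProduct ρ ρ)) (hn : Λ.Normal) (hfi : Λ.FiniteIndex) :
    Finite (Abelianization ↥Λ) := by
  haveI := hn
  let Γ : Subgroup (L × L) := fiberProduct ρ ρ
  let fstΓ : ↥Γ →* L := (MonoidHom.fst L L).comp Γ.subtype
  let sndΓ : ↥Γ →* L := (MonoidHom.snd L L).comp Γ.subtype
  have hfsts : Function.Surjective fstΓ := fun x => ⟨⟨(x, x), rfl⟩, rfl⟩
  have hsnds : Function.Surjective sndΓ := fun x => ⟨⟨(x, x), rfl⟩, rfl⟩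
  let f : ↥Λ →* L := fstΓ.comp Λ.subtype
  let s : ↥Λ →* L := sndΓ.comp Λ.subtype
  have hfr : f.range = Λ.map fstΓ := by
    rw [MonoidHom.range_comp, Subgroup.range_subtype]
  have hsr : s.range = Λ.map sndΓ := by
    rw [MonoidHom.range_comp, Subgroup.range_subtype]
  have hL0n : f.range.Normal := hfr ▸ hn.map fstΓ hfsts
  have hL0fi : f.range.FiniteIndex := by
    rw [hfr]
    exact ⟨ne_zero_of_dvd_ne_zero hfi.index_ne_zero (Λ.index_map_dvd hfsts)⟩
  have hL0'n : s.range.Normal := hsr ▸ hn.map sndΓ hsnds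
  have hL0'fi : s.range.FiniteIndex := by
    rw [hsr]
    exact ⟨ne_zero_of_dvd_ne_zero hfi.index_ne_zero (Λ.index_map_dvd hsnds)⟩
  let K : Subgroup ↥Λ := f.ker
  let g : ↥K →* L := s.comp K.subtype
  -- `R₁ := g.range` is the set of `r` with `(1, r) ∈ Λ`.
  have hR₁ker : g.range ≤ ρ.ker := by
    rintro r ⟨k, rfl⟩
    have h1 : f (↑k : ↥Λ) = 1 := k.2
    have h2 : ρ (f (↑k : ↥Λ)) = ρ (s (↑k : ↥Λ)) := ((↑k : ↥Λ) : ↥Γ).2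
    rw [MonoidHom.mem_ker]
    show ρ (s (↑k : ↥Λ)) = 1
    rw [← h2, h1, map_one]
  have hR₁n : g.range.Normal := by
    constructor
    rintro r ⟨k, rfl⟩ x
    have hΓmem : ((x, x) : L × L) ∈ Γ := rfl
    let γ : ↥Γ := ⟨(x, x), hΓmem⟩
    have hu : γ * ↑(↑k : ↥Λ) * γ⁻¹ ∈ Λ := hn.conj_mem _ (↑k : ↥Λ).2 γ
    let u : ↥Λ := ⟨γ * ↑(↑k : ↥Λ) * γ⁻¹, hu⟩
    have huK : u ∈ K := by
      have h1 : f (↑k : ↥Λ) = 1 := k.2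
      show f u = 1
      have h2 : f u = x * f (↑k : ↥Λ) * x⁻¹ := rfl
      rw [h2, h1, mul_one, mul_inv_cancel]
    exact ⟨⟨u, huK⟩, rfl⟩
  have hR₁fi : (g.range.subgroupOf ρ.ker).FiniteIndex := by
    let ψ : ↥ρ.ker →* ↥Γ := MonoidHom.mk'
      (fun r => ⟨((1 : L), (↑r : L)),
        show ρ (1 : L) = ρ (↑r : L) from (map_one ρ).trans (MonoidHom.mem_ker.mp r.2).symm⟩)
      (fun a b => Subtype.ext (Prod.ext (one_mul (1 : L)).symm rfl))
    have hco : g.range.subgroupOf ρ.ker = Λ.comap ψ := by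
      ext r
      rw [Subgroup.mem_subgroupOf, Subgroup.mem_comap]
      constructor
      · rintro ⟨k, hk⟩
        have h1 : f (↑k : ↥Λ) = 1 := k.2
        have heq : ψ r = ((↑k : ↥Λ) : ↥Γ) := Subtype.ext (Prod.ext h1.symm hk.symm)
        rw [heq]
        exact (↑k : ↥Λ).2
      · intro hψ
        exact ⟨⟨⟨ψ r, hψ⟩, MonoidHom.mem_ker.mpr rfl⟩, rfl⟩
    have hidx : (Λ.comap ψ).index ≠ 0 := by
      rw [Subgroup.index_comap]
      exact ne_zero_of_dvd_ne_zero hfi.index_ne_zero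
        (Subgroup.relIndex_dvd_index_of_normal Λ ψ.range)
    exact ⟨by rw [hco]; exact hidx⟩
  have hC : (⁅s.range, g.range⁆.subgroupOf g.range).FiniteIndex :=
    hcomm s.range hL0'n hL0'fi g.range hR₁ker hR₁fi hR₁n
  set T : Subgroup ↥Λ := commutator ↥Λ with hT
  -- the commutator of Λ intersected with K is large
  have hCle : ⁅s.range, g.range⁆ ≤ (T ⊓ K).map s := by
    rw [Subgroup.commutator_le]
    rintro a ⟨u, rfl⟩ r ⟨k, rfl⟩
    refine ⟨⁅u, (↑k : ↥Λ)⁆, Subgroup.mem_inf.mpr ⟨?_, ?_⟩, ?_⟩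
    · exact Subgroup.commutator_mem_commutator (Subgroup.mem_top u) (Subgroup.mem_top _)
    · have h1 : f (↑k : ↥Λ) = 1 := k.2
      show f ⁅u, (↑k : ↥Λ)⁆ = 1
      rw [map_commutatorElement, h1, commutatorElement_one_right]
    · rw [map_commutatorElement]
      rfl
  have hsK : ∀ u v : ↥Λ, u ∈ K → v ∈ K → s u = s v → u = v := by
    intro u v hu hv h
    have hu1 : f u = 1 := hu
    have hv1 : f v = 1 := hv
    apply Subtype.ext; apply Subtype.ext
    exact Prod.ext (hu1.trans hv1.symm) h
  have hTK : T.relIndex K ≠ 0 := by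
    have h1 : ⁅s.range, g.range⁆.comap g ≤ T.subgroupOf K := by
      intro k hk
      rw [Subgroup.mem_comap] at hk
      obtain ⟨w, hw, hws⟩ := hCle hk
      obtain ⟨hwT, hwK⟩ := Subgroup.mem_inf.mp hw
      have heq : w = (↑k : ↥Λ) := hsK w ↑k hwK k.2 hws
      rw [Subgroup.mem_subgroupOf]
      exact heq ▸ hwT
    have h2 : (⁅s.range, g.range⁆.comap g).index ≠ 0 := by
      rw [Subgroup.index_comap]
      exact hC.index_ne_zero
    exact ne_zero_of_dvd_ne_zero h2 (Subgroup.index_dvd_of_le h1)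
  -- the sup T ⊔ K has finite index
  have hab : Finite (Abelianization ↥f.range) := hFAb f.range hL0fi
  have hcomm0 : (⁅f.range, f.range⁆.subgroupOf f.range).FiniteIndex := by
    rw [← commutator_subgroupOf_self]
    exact commutator_finiteIndex_of_finite hab
  have hU : ((⁅f.range, f.range⁆).comap f).index ≠ 0 := by
    rw [Subgroup.index_comap]
    exact hcomm0.index_ne_zero
  have hTmap : T.map f = ⁅f.range, f.range⁆ := by
    rw [hT, commutator_def, Subgroup.map_commutator, ← MonoidHom.range_eq_map]
  have hUle : (⁅f.range, f.range⁆).comap f ≤ T ⊔ K := by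
    intro x hx
    rw [Subgroup.mem_comap, ← hTmap] at hx
    obtain ⟨t, ht, htx⟩ := hx
    have hk : t⁻¹ * x ∈ K := by
      rw [MonoidHom.mem_ker, map_mul, map_inv, htx, inv_mul_cancel]
    have hxe : x = t * (t⁻¹ * x) := by rw [mul_inv_cancel_left]
    rw [hxe]
    exact Subgroup.mul_mem _ (Subgroup.mem_sup_left ht) (Subgroup.mem_sup_right hk)
  have hS : (T ⊔ K).index ≠ 0 :=
    ne_zero_of_dvd_ne_zero hU (Subgroup.index_dvd_of_le hUle)
  have hTfin : T.index ≠ 0 := by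
    rw [← Subgroup.relIndex_mul_index (le_sup_left : T ≤ T ⊔ K)]
    apply Nat.mul_ne_zero _ hS
    rw [sup_comm, Subgroup.relIndex_sup_right]
    exact hTK
  haveI : (commutator ↥Λ).FiniteIndex := ⟨hTfin⟩
  exact inferInstanceAs (Finite (↥Λ ⧸ commutator ↥Λ))

/-- If `L` is FAb and, for every finite-index normal subgroup `L₀` of `L` and
every finite-index subgroup `R₀` of `R = ker ρ` which is normal in `L`, the
commutator `[L₀, R₀]` has finite index in `R₀`, then the fibre product
`Γ = L ×_D L` is FAb. -/
theorem isFAb_fiberProduct {L D : Type*} [Group L] [Group D]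
    (ρ : L →* D) (hsurj : Function.Surjective ρ)
    (hFAb : IsFAb L)
    (hcomm : ∀ L₀ : Subgroup L, L₀.Normal → L₀.FiniteIndex →
      ∀ R₀ : Subgroup L, R₀ ≤ ρ.ker → (R₀.subgroupOf ρ.ker).FiniteIndex →
        R₀.Normal → (⁅L₀, R₀⁆.subgroupOf R₀).FiniteIndex) :
    IsFAb (fiberProduct ρ ρ) := by
  intro Λ hΛ
  haveI := hΛ
  haveI : Λ.normalCore.FiniteIndex := Subgroup.finiteIndex_normalCore Λ
  have hN : Finite (Abelianization ↥Λ.normalCore) :=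
    key_normal_case ρ hFAb hcomm Λ.normalCore inferInstance inferInstance
  exact finite_abelianization_of_le Λ.normalCore_le inferInstance hN
end

section
/- Let D be a perfect group and let 1 → C → E → D → 1 be a central extension of D (i.e., C is a central subgroup of E and E/C ≅ D) such that the abelianization E/[E,E] is finite. Then rk(C) ≤ rk(H₂(D)). -/
open scoped TensorProduct

/-- The rank of a group `G`: `dim_ℚ(A ⊗_ℤ ℚ)` where `A = G/[G,G]` is the
abelianization of `G`.  For an abelian group `G` this is exactly
`dim_ℚ(G ⊗_ℤ ℚ)`. -/
noncomputable def grpRank (G : Type*) [Group G] : Cardinal :=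
  Module.rank ℚ (ℚ ⊗[ℤ] (Additive (Abelianization G)))

/-- The rank of the second integral homology `H₂(D; ℤ)` (the Schur multiplier)
of `D`, given via Hopf's formula: for a presentation `D = F/N` with `F` free,
`H₂(D; ℤ) ≅ (N ⊓ [F,F]) / [F,N]`, realized here as the image of `N ⊓ [F,F]`
in `F/[F,N]` for the canonical presentation `F = FreeGroup D`. -/
noncomputable def schurMultiplierRank (D : Type*) [Group D] : Cardinal :=
  grpRank (Subgroup.map
    (QuotientGroup.mk' ⁅(⊤ : Subgroup (FreeGroup D)), (FreeGroup.lift (id : D → D)).ker⁆)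
    ((FreeGroup.lift (id : D → D)).ker ⊓ commutator (FreeGroup D)))

universe u
universe v
open scoped commutatorElement

section Aux

lemma aux_rank {A B : Type v} [AddCommGroup A] [AddCommGroup B] (f : A →+ B)
    (h : ∀ b : B, ∃ n : ℕ, 0 < n ∧ n • b ∈ f.range) :
    Module.rank ℚ (ℚ ⊗[ℤ] B) ≤ Module.rank ℚ (ℚ ⊗[ℤ] A) := by
  refine LinearMap.rank_le_of_surjective (f.toIntLinearMap.baseChange ℚ) ?_
  intro x
  induction x using TensorProduct.induction_on with
  | zero => exact ⟨0, map_zero _⟩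
  | tmul q b =>
    obtain ⟨n, hn, a, ha⟩ := h b
    refine ⟨(n : ℚ)⁻¹ • (q ⊗ₜ[ℤ] a), ?_⟩
    rw [map_smul, LinearMap.baseChange_tmul]
    have ha' : f.toIntLinearMap a = n • b := ha
    rw [ha', TensorProduct.tmul_smul, ← Nat.cast_smul_eq_nsmul ℚ, smul_smul,
      inv_mul_cancel₀ (by exact_mod_cast hn.ne' : (n : ℚ) ≠ 0), one_smul]
  | add x y hx hy =>
    obtain ⟨u, hu⟩ := hx
    obtain ⟨v, hv⟩ := hy
    exact ⟨u + v, by rw [map_add, hu, hv]⟩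

lemma grpRank_le_of {G H : Type v} [Group G] [Group H] (f : G →* H)
    (h : ∀ x : Abelianization H, ∃ n : ℕ, 0 < n ∧ x ^ n ∈ (Abelianization.map f).range) :
    grpRank H ≤ grpRank G := by
  refine aux_rank (MonoidHom.toAdditive (Abelianization.map f)) ?_
  intro b
  obtain ⟨n, hn, g, hg⟩ := h b.toMul
  refine ⟨n, hn, Additive.ofMul g, ?_⟩
  show Additive.ofMul (Abelianization.map f g) = n • b
  rw [hg, ofMul_pow]
  rfl

lemma grpRank_le_of_surjective {G H : Type v} [Group G] [Group H] (f : G →* H)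
    (hf : Function.Surjective f) : grpRank H ≤ grpRank G := by
  have hsurj : Function.Surjective (Abelianization.map f) := by
    intro y
    refine QuotientGroup.induction_on y (fun h => ?_)
    obtain ⟨g, rfl⟩ := hf h
    exact ⟨Abelianization.of g, rfl⟩
  refine grpRank_le_of f (fun x => ⟨1, one_pos, ?_⟩)
  rw [pow_one]
  obtain ⟨y, hy⟩ := hsurj x
  exact ⟨y, hy⟩

lemma comm_center_left {G : Type*} [Group G] {z : G} (h : ∀ g, Commute z g) (a b : G) :
    ⁅a * z, b⁆ = ⁅a, b⁆ := by
  have h1 : z * b * z⁻¹ = b := by rw [(h b).eq, mul_inv_cancel_right]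
  rw [commutatorElement_def, commutatorElement_def, mul_inv_rev]
  calc a * z * b * (z⁻¹ * a⁻¹) * b⁻¹ = a * (z * b * z⁻¹) * a⁻¹ * b⁻¹ := by
        simp only [mul_assoc]
    _ = a * b * a⁻¹ * b⁻¹ := by rw [h1]

lemma comm_center_right {G : Type*} [Group G] {z : G} (h : ∀ g, Commute z g) (a b : G) :
    ⁅a, b * z⁆ = ⁅a, b⁆ := by
  have h1 : z * a⁻¹ * z⁻¹ = a⁻¹ := by rw [(h a⁻¹).eq, mul_inv_cancel_right]
  rw [commutatorElement_def, commutatorElement_def, mul_inv_rev]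
  calc a * (b * z) * a⁻¹ * (z⁻¹ * b⁻¹) = a * b * (z * a⁻¹ * z⁻¹) * b⁻¹ := by
        simp only [mul_assoc]
    _ = a * b * a⁻¹ * b⁻¹ := by simp only [mul_assoc, h1]

end Aux

/-- If `1 → C → E → D → 1` is a central extension of a perfect group `D` such
that `E^{ab}` is finite, then `rk(C) ≤ rk(H₂(D))`. -/
theorem rank_le_schurMultiplierRank_of_centralExtension
    {E D : Type u} [Group E] [Group D]
    (hD : commutator D = ⊤)
    (C : Subgroup E) (hC : C ≤ Subgroup.center E)
    (π : E →* D) (hπ : Function.Surjective π) (hker : π.ker = C)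
    (hEab : Finite (Abelianization E)) :
    grpRank C ≤ schurMultiplierRank D := by
  classical
  set ρ : FreeGroup D →* D := FreeGroup.lift (id : D → D) with hρdef
  set N : Subgroup (FreeGroup D) := ρ.ker with hNdef
  set K : Subgroup (FreeGroup D) := ⁅(⊤ : Subgroup (FreeGroup D)), N⁆ with hKdef
  set φ : FreeGroup D →* E := FreeGroup.lift (Function.surjInv hπ) with hφdef
  have hπφ : ∀ x, π (φ x) = ρ x := by
    have : π.comp φ = ρ := FreeGroup.ext_hom _ _ (fun d => by
      simp [hφdef, hρdef, Function.surjInv_eq hπ])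
    exact fun x => DFunLike.congr_fun this x
  have hρsurj : Function.Surjective ρ := fun d => ⟨FreeGroup.of d, by simp [hρdef]⟩
  have hdecomp : ∀ e : E, ∃ x c, c ∈ C ∧ e = φ x * c := by
    intro e
    obtain ⟨x, hx⟩ := hρsurj (π e)
    refine ⟨x, (φ x)⁻¹ * e, ?_, by group⟩
    rw [← hker, MonoidHom.mem_ker, map_mul, map_inv, hπφ, hx, inv_mul_cancel]
  have hcentral : ∀ c ∈ C, ∀ g : E, Commute c g := by
    intro c hc g
    exact ((Subgroup.mem_center_iff.mp (hC hc)) g).symm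
  have hcommE : commutator E = Subgroup.map φ (commutator (FreeGroup D)) := by
    apply le_antisymm
    · rw [commutator_def, Subgroup.commutator_le]
      intro g1 _ g2 _
      obtain ⟨x1, c1, hc1, rfl⟩ := hdecomp g1
      obtain ⟨x2, c2, hc2, rfl⟩ := hdecomp g2
      rw [comm_center_left (hcentral c1 hc1), comm_center_right (hcentral c2 hc2),
        ← map_commutatorElement]
      exact Subgroup.mem_map.mpr ⟨⁅x1, x2⁆,
        Subgroup.commutator_mem_commutator (Subgroup.mem_top _) (Subgroup.mem_top _), rfl⟩
    · rw [commutator_def, commutator_def, Subgroup.map_commutator]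
      exact Subgroup.commutator_mono le_top le_top
  have hK : K ≤ φ.ker := by
    rw [hKdef, Subgroup.commutator_le]
    intro g1 _ g2 hg2
    rw [MonoidHom.mem_ker, map_commutatorElement]
    have hg2' : φ g2 ∈ C := by
      rw [← hker, MonoidHom.mem_ker, hπφ]
      exact hg2
    exact commutatorElement_eq_one_iff_commute.mpr ((hcentral _ hg2' (φ g1)).symm)
  set φ' : (FreeGroup D ⧸ K) →* E := QuotientGroup.lift K φ hK with hφ'def
  have hφ'comp : φ'.comp (QuotientGroup.mk' K) = φ := rfl
  set M : Subgroup (FreeGroup D ⧸ K) :=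
    Subgroup.map (QuotientGroup.mk' K) (N ⊓ commutator (FreeGroup D)) with hMdef
  have hM : Subgroup.map φ' M = C ⊓ commutator E := by
    rw [hMdef, Subgroup.map_map, hφ'comp]
    apply le_antisymm
    · intro e he
      obtain ⟨x, hx, rfl⟩ := Subgroup.mem_map.mp he
      obtain ⟨hxN, hxc⟩ := Subgroup.mem_inf.mp hx
      refine Subgroup.mem_inf.mpr ⟨?_, ?_⟩
      · rw [← hker]
        exact MonoidHom.mem_ker.mpr (by rw [hπφ]; exact MonoidHom.mem_ker.mp hxN)
      · rw [hcommE]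
        exact Subgroup.mem_map.mpr ⟨x, hxc, rfl⟩
    · intro e he
      obtain ⟨heC, heComm⟩ := Subgroup.mem_inf.mp he
      rw [hcommE] at heComm
      obtain ⟨x, hxc, rfl⟩ := Subgroup.mem_map.mp heComm
      refine Subgroup.mem_map.mpr ⟨x, Subgroup.mem_inf.mpr ⟨?_, hxc⟩, rfl⟩
      refine MonoidHom.mem_ker.mpr ?_
      rw [← hker] at heC
      rw [← hπφ x]
      exact MonoidHom.mem_ker.mp heC
  -- step 2 : grpRank (C ⊓ commutator E) ≤ schurMultiplierRank D
  have hschur : schurMultiplierRank D = grpRank M := rfl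
  have step2 : grpRank ↥(C ⊓ commutator E) ≤ schurMultiplierRank D := by
    rw [hschur]
    refine grpRank_le_of_surjective
      ((MulEquiv.subgroupCongr hM).toMonoidHom.comp (φ'.subgroupMap M)) ?_
    exact (MulEquiv.subgroupCongr hM).surjective.comp (φ'.subgroupMap_surjective M)
  -- step 1 : grpRank C ≤ grpRank (C ⊓ commutator E)
  have step1 : grpRank C ≤ grpRank ↥(C ⊓ commutator E) := by
    refine grpRank_le_of (Subgroup.inclusion inf_le_left) ?_
    intro x
    refine QuotientGroup.induction_on x (fun c => ?_)
    have hfin : IsOfFinOrder (Abelianization.of (c : E)) := isOfFinOrder_of_finite _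
    obtain ⟨n, hn, hpow⟩ := hfin.exists_pow_eq_one
    have hmem : (c : E) ^ n ∈ commutator E := by
      rw [← QuotientGroup.eq_one_iff ((c : E) ^ n)]
      exact_mod_cast hpow
    refine ⟨n, hn, Abelianization.of ⟨(c : E) ^ n, ⟨pow_mem c.2 n, hmem⟩⟩, ?_⟩
    rw [Abelianization.map_of]
    have h2 : (Subgroup.inclusion (inf_le_left : C ⊓ commutator E ≤ C))
        ⟨(c : E) ^ n, ⟨pow_mem c.2 n, hmem⟩⟩ = c ^ n := by
      ext; simp
    rw [h2, map_pow]
    rfl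
  exact step1.trans step2
end

section
/- Let L be a finitely generated FAb group and ρ : L → D a surjective homomorphism with kernel R onto a group D that has no proper finite-index subgroups. For a finite-index normal subgroup L₀ of L, set R₀ = R ∩ L₀. Then rk(R₀/[L₀,R₀]) ≤ rk(H₂(D)). -/
open scoped TensorProduct

open scoped Pointwise
open scoped commutatorElement

universe v

private lemma rank_le_of_virtually_surjective {A B : Type v} [AddCommGroup A] [AddCommGroup B]
    (f : A →+ B) (h : ∀ b : B, ∃ n : ℤ, n ≠ 0 ∧ ∃ a, f a = n • b) :
    Module.rank ℚ (ℚ ⊗[ℤ] B) ≤ Module.rank ℚ (ℚ ⊗[ℤ] A) := by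
  have hsurj : Function.Surjective (LinearMap.baseChange ℚ f.toIntLinearMap) := by
    intro y
    induction y using TensorProduct.induction_on with
    | zero => exact ⟨0, map_zero _⟩
    | tmul q b =>
        obtain ⟨n, hn, a, ha⟩ := h b
        have hnq : (n : ℚ) ≠ 0 := Int.cast_ne_zero.mpr hn
        refine ⟨((n : ℚ)⁻¹ * q) ⊗ₜ a, ?_⟩
        rw [LinearMap.baseChange_tmul]
        simp only [AddMonoidHom.coe_toIntLinearMap, ha, TensorProduct.tmul_smul,
          TensorProduct.smul_tmul', zsmul_eq_mul]
        rw [← mul_assoc, mul_inv_cancel₀ hnq, one_mul]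
    | add x y hx hy =>
        obtain ⟨x', hx'⟩ := hx
        obtain ⟨y', hy'⟩ := hy
        exact ⟨x' + y', by rw [map_add, hx', hy']⟩
  exact LinearMap.rank_le_of_surjective (LinearMap.baseChange ℚ f.toIntLinearMap) hsurj

private lemma grpRank_le_of_hom {G H : Type v} [Group G] [Group H] (f : G →* H)
    (h : ∀ x : H, ∃ n : ℤ, n ≠ 0 ∧ x ^ n ∈ f.range) : grpRank H ≤ grpRank G := by
  apply rank_le_of_virtually_surjective (MonoidHom.toAdditive (Abelianization.map f))
  intro b
  obtain ⟨x, hx⟩ := QuotientGroup.mk'_surjective (commutator H) (Additive.toMul b)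
  obtain ⟨n, hn, g, hg⟩ := h x
  refine ⟨n, hn, Additive.ofMul (Abelianization.of g), ?_⟩
  have h1 : (MonoidHom.toAdditive (Abelianization.map f)) (Additive.ofMul (Abelianization.of g))
      = Additive.ofMul (Abelianization.of (f g)) := by
    show Additive.ofMul ((Abelianization.map f) (Abelianization.of g)) = _
    simp
  have h2 : (n : ℤ) • b = Additive.ofMul (Abelianization.of (x ^ n)) := by
    rw [map_zpow, ofMul_zpow]
    congr 1
    rw [show Abelianization.of x = Additive.toMul b from hx]
    simp
  rw [h1, h2, hg]

private lemma grpRank_eq_of_mulEquiv {G H : Type v} [Group G] [Group H] (e : G ≃* H) :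
    grpRank G = grpRank H :=
  le_antisymm
    (grpRank_le_of_hom e.symm.toMonoidHom fun x => ⟨1, one_ne_zero, ⟨e x, by simp⟩⟩)
    (grpRank_le_of_hom e.toMonoidHom fun x => ⟨1, one_ne_zero, ⟨e.symm x, by simp⟩⟩)

private lemma commutatorElement_mul_central {M : Type*} [Group M] {z w : M}
    (hz : ∀ y : M, z * y = y * z) (hw : ∀ y : M, w * y = y * w) (a b : M) :
    ⁅a * z, b * w⁆ = ⁅a, b⁆ := by
  have h1 : ∀ x : M, (a * z) * x * (a * z)⁻¹ = a * x * a⁻¹ := by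
    intro x
    have hzx : z * x * z⁻¹ = x := by rw [hz x]; group
    calc (a*z)*x*(a*z)⁻¹ = a*(z*x*z⁻¹)*a⁻¹ := by group
    _ = a*x*a⁻¹ := by rw [hzx]
  rw [commutatorElement_def, commutatorElement_def, h1 (b * w)]
  have h2 : w * a⁻¹ = a⁻¹ * w := hw a⁻¹
  calc a*(b*w)*a⁻¹*(b*w)⁻¹ = a*b*((w*a⁻¹)*w⁻¹)*b⁻¹ := by group
  _ = a*b*((a⁻¹*w)*w⁻¹)*b⁻¹ := by rw [h2]
  _ = a*b*a⁻¹*b⁻¹ := by group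

private lemma aux_main {Γ D : Type v} [Group Γ] [Group D] (ρ₀ : Γ →* D)
    (hρ₀ : Function.Surjective ρ₀) (hfin : Finite (Abelianization Γ)) :
    grpRank ↥(Subgroup.map (QuotientGroup.mk' ⁅(⊤ : Subgroup Γ), ρ₀.ker⁆) ρ₀.ker) ≤
      schurMultiplierRank D := by
  classical
  set π : FreeGroup D →* D := FreeGroup.lift (id : D → D) with hπ
  set N : Subgroup (FreeGroup D) := π.ker with hN
  set C : Subgroup (FreeGroup D) := ⁅(⊤ : Subgroup (FreeGroup D)), N⁆ with hC
  set R' : Subgroup Γ := ρ₀.ker with hR'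
  set K' : Subgroup Γ := ⁅(⊤ : Subgroup Γ), R'⁆ with hK'
  let s : D → Γ := Function.surjInv hρ₀
  let φ : FreeGroup D →* Γ := FreeGroup.lift s
  have hφof : ∀ d, ρ₀ (φ (FreeGroup.of d)) = d := by
    intro d
    show ρ₀ ((FreeGroup.lift s) (FreeGroup.of d)) = d
    rw [FreeGroup.lift_apply_of]
    exact Function.surjInv_eq hρ₀ d
  have hcomp : ∀ w, ρ₀ (φ w) = π w := by
    intro w
    have : ρ₀.comp φ = π := FreeGroup.ext_hom _ _ (fun d => by
      simp only [MonoidHom.comp_apply]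
      rw [hφof d, hπ, FreeGroup.lift_apply_of, id_eq])
    exact DFunLike.congr_fun this w
  have hφN : ∀ w, w ∈ N → φ w ∈ R' := fun w hw => by
    rw [hR', MonoidHom.mem_ker, hcomp w]
    exact hw
  have hφC : Subgroup.map φ C ≤ K' := by
    rw [hC, hK', Subgroup.map_commutator]
    apply Subgroup.commutator_mono le_top
    rintro x ⟨w, hw, rfl⟩
    exact hφN w hw
  haveI hRn : R'.Normal := by rw [hR']; infer_instance
  haveI hKn : K'.Normal := by rw [hK']; infer_instance
  let χ : Γ →* Γ ⧸ K' := QuotientGroup.mk' K'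
  have hcentral : ∀ r ∈ R', ∀ y : Γ ⧸ K', χ r * y = y * χ r := by
    intro r hr y
    obtain ⟨g, rfl⟩ := QuotientGroup.mk'_surjective K' y
    show χ r * χ g = χ g * χ r
    rw [← map_mul, ← map_mul]
    rw [QuotientGroup.mk'_eq_mk']
    refine ⟨⁅g⁻¹, r⁻¹⁆, ?_, by group⟩
    exact Subgroup.commutator_mem_commutator (Subgroup.mem_top _) (inv_mem hr)
  have hsub : commutator Γ ≤ (Subgroup.map φ (commutator (FreeGroup D))) ⊔ K' := by
    rw [commutator_def]
    rw [Subgroup.commutator_le]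
    intro g₁ _ g₂ _
    set a₁ := φ (FreeGroup.of (ρ₀ g₁)) with ha₁d
    set a₂ := φ (FreeGroup.of (ρ₀ g₂)) with ha₂d
    have hr₁ : a₁⁻¹ * g₁ ∈ R' := by
      rw [hR', MonoidHom.mem_ker, map_mul, map_inv, ha₁d, hφof]
      group
    have hr₂ : a₂⁻¹ * g₂ ∈ R' := by
      rw [hR', MonoidHom.mem_ker, map_mul, map_inv, ha₂d, hφof]
      group
    have hca : ⁅a₁, a₂⁆ ∈ Subgroup.map φ (commutator (FreeGroup D)) := by
      refine ⟨⁅FreeGroup.of (ρ₀ g₁), FreeGroup.of (ρ₀ g₂)⁆, ?_, ?_⟩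
      · rw [commutator_def]
        exact Subgroup.commutator_mem_commutator (Subgroup.mem_top _) (Subgroup.mem_top _)
      · rw [map_commutatorElement]
    have hq : χ ⁅g₁, g₂⁆ = χ ⁅a₁, a₂⁆ := by
      have e₁ : g₁ = a₁ * (a₁⁻¹ * g₁) := by group
      have e₂ : g₂ = a₂ * (a₂⁻¹ * g₂) := by group
      rw [map_commutatorElement, map_commutatorElement]
      conv_lhs => rw [e₁, e₂]
      rw [map_mul χ a₁ (a₁⁻¹ * g₁), map_mul χ a₂ (a₂⁻¹ * g₂)]
      exact commutatorElement_mul_central (hcentral _ hr₁) (hcentral _ hr₂) _ _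
    have hk : ⁅g₁, g₂⁆ * ⁅a₁, a₂⁆⁻¹ ∈ K' := by
      have : χ (⁅g₁, g₂⁆ * ⁅a₁, a₂⁆⁻¹) = 1 := by
        rw [map_mul, map_inv, hq]
        group
      exact (QuotientGroup.eq_one_iff _).mp this
    have hdec : ⁅g₁, g₂⁆ = (⁅g₁, g₂⁆ * ⁅a₁, a₂⁆⁻¹) * ⁅a₁, a₂⁆ := by group
    rw [hdec]
    exact mul_mem (Subgroup.mem_sup_right hk) (Subgroup.mem_sup_left hca)
  have hkey : ∀ x : Γ, x ∈ commutator Γ → x ∈ R' →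
      ∃ w, w ∈ N ⊓ commutator (FreeGroup D) ∧ (φ w)⁻¹ * x ∈ K' := by
    intro x hx hxR
    have hx2 : x ∈ ((Subgroup.map φ (commutator (FreeGroup D)) : Subgroup Γ) : Set Γ) *
        (K' : Set Γ) := by
      rw [← Subgroup.mul_normal]
      exact hsub hx
    obtain ⟨c, hc, k, hk, rfl⟩ := hx2
    obtain ⟨w₀, hw₀, rfl⟩ := hc
    have hkR : k ∈ R' := by
      rw [hK'] at hk
      exact (Subgroup.commutator_le_right ⊤ R') hk
    have hφw : φ w₀ ∈ R' := by
      have h3 := mul_mem hxR (inv_mem hkR)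
      simpa using h3
    have hwN : w₀ ∈ N := by
      rw [hN, MonoidHom.mem_ker, ← hcomp]
      exact hφw
    exact ⟨w₀, ⟨hwN, hw₀⟩, by simpa using hk⟩
  let SM := Subgroup.map (QuotientGroup.mk' C) (N ⊓ commutator (FreeGroup D))
  haveI hNn : N.Normal := by rw [hN]; infer_instance
  haveI hCn : C.Normal := by rw [hC]; infer_instance
  let Φbar : (FreeGroup D ⧸ C) →* (Γ ⧸ K') :=
    QuotientGroup.map C K' φ (fun x hx => hφC ⟨x, hx, rfl⟩)
  let Q'' := Subgroup.map (QuotientGroup.mk' K') R'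
  have hg0 : ∀ x : ↥SM, Φbar ((SM.subtype) x) ∈ Q'' := by
    rintro ⟨x, w, hw, rfl⟩
    exact ⟨φ w, hφN w hw.1, rfl⟩
  let g : ↥SM →* ↥Q'' := (Φbar.comp SM.subtype).codRestrict Q'' hg0
  have hvs : ∀ x : ↥Q'', ∃ n : ℤ, n ≠ 0 ∧ x ^ n ∈ g.range := by
    rintro ⟨x, r, hrR, rfl⟩
    set n := orderOf (Abelianization.of r) with hn
    have hnpos : 0 < n := orderOf_pos _
    have hrc : r ^ n ∈ commutator Γ := by
      have h4 := pow_orderOf_eq_one (Abelianization.of r)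
      rw [← map_pow] at h4
      exact (QuotientGroup.eq_one_iff _).mp h4
    obtain ⟨w, hw, hk⟩ := hkey (r ^ n) hrc (pow_mem hrR n)
    refine ⟨(n : ℤ), by exact_mod_cast hnpos.ne', ?_⟩
    refine ⟨⟨(QuotientGroup.mk' C) w, Subgroup.mem_map_of_mem _ hw⟩, ?_⟩
    apply Subtype.ext
    show Φbar ((QuotientGroup.mk' C) w) = _
    have h5 : Φbar ((QuotientGroup.mk' C) w) = (QuotientGroup.mk' K') (φ w) := rfl
    rw [h5]
    have h6 : ((⟨(QuotientGroup.mk' K') r, ⟨r, hrR, rfl⟩⟩ : ↥Q'') ^ (n : ℤ) : ↥Q'').1 =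
        (QuotientGroup.mk' K') (r ^ n) := by
      push_cast [zpow_natCast]
      rw [← map_pow]
    rw [h6]
    apply (QuotientGroup.mk'_eq_mk' K').mpr
    exact ⟨(φ w)⁻¹ * r ^ n, hk, by group⟩
  have := grpRank_le_of_hom g hvs
  exact this

universe u

/-- Let `L` be a finitely generated FAb group and `ρ : L → D` a surjective
homomorphism with kernel `R` onto a group `D` with no proper finite-index
subgroups.  For a finite-index normal subgroup `L₀` of `L` and `R₀ = R ⊓ L₀`,
one has `rk(R₀/[L₀,R₀]) ≤ rk(H₂(D))`. -/
theorem rank_quotient_le_schurMultiplierRank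
    {L D : Type u} [Group L] [Group D]
    (hfg : Group.FG L) (hFAb : IsFAb L)
    (ρ : L →* D) (hsurj : Function.Surjective ρ)
    (hD : ∀ H : Subgroup D, H.FiniteIndex → H = ⊤)
    (L₀ : Subgroup L) [L₀.Normal] [L₀.FiniteIndex] :
    grpRank ((ρ.ker ⊓ L₀ : Subgroup L) ⧸
        (⁅L₀, ρ.ker ⊓ L₀⁆.subgroupOf (ρ.ker ⊓ L₀))) ≤
      schurMultiplierRank D := by
  classical
  set ρ₀ : ↥L₀ →* D := ρ.comp L₀.subtype with hρ₀d
  have hρ₀ : Function.Surjective ρ₀ := by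
    have h2 : (L₀.map ρ).FiniteIndex := by
      constructor
      intro h0
      have h1 : (L₀.map ρ).index ∣ L₀.index := Subgroup.index_map_dvd L₀ hsurj
      rw [h0] at h1
      exact Subgroup.FiniteIndex.index_ne_zero (zero_dvd_iff.mp h1)
    have h3 := hD _ h2
    intro d
    have hd : d ∈ L₀.map ρ := h3 ▸ Subgroup.mem_top d
    obtain ⟨l, hl, rfl⟩ := hd
    exact ⟨⟨l, hl⟩, rfl⟩
  set R' : Subgroup ↥L₀ := ρ₀.ker with hR'
  set K' : Subgroup ↥L₀ := ⁅(⊤ : Subgroup ↥L₀), R'⁆ with hK'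
  haveI hRn : R'.Normal := by rw [hR']; infer_instance
  haveI hKn : K'.Normal := by rw [hK']; infer_instance
  have hfin : Finite (Abelianization ↥L₀) := hFAb L₀ inferInstance
  have hmain := aux_main ρ₀ hρ₀ hfin
  refine le_trans (le_of_eq ?_) hmain
  -- the equivalence
  let eL : ↥(ρ.ker ⊓ L₀) ≃* ↥R' :=
    { toFun := fun x => ⟨⟨x.1, x.2.2⟩, x.2.1⟩
      invFun := fun y => ⟨y.1.1, ⟨y.2, y.1.2⟩⟩
      left_inv := fun x => rfl
      right_inv := fun y => rfl
      map_mul' := fun x y => rfl }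
  have hKmap : Subgroup.map L₀.subtype K' = ⁅L₀, ρ.ker ⊓ L₀⁆ := by
    rw [hK', Subgroup.map_commutator]
    congr 1
    · rw [← MonoidHom.range_eq_map, Subgroup.range_subtype]
    · rw [hR', hρ₀d, ← MonoidHom.comap_ker]
      exact Subgroup.subgroupOf_map_subtype _ _
  haveI : (ρ.ker ⊓ L₀).Normal := inferInstance
  haveI : (⁅L₀, ρ.ker ⊓ L₀⁆ : Subgroup L).Normal := inferInstance
  have he : Subgroup.map eL.toMonoidHom (⁅L₀, ρ.ker ⊓ L₀⁆.subgroupOf (ρ.ker ⊓ L₀)) =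
      K'.subgroupOf R' := by
    ext y
    rw [Subgroup.mem_map_equiv, Subgroup.mem_subgroupOf, Subgroup.mem_subgroupOf, ← hKmap]
    have : ((eL.symm y : ↥(ρ.ker ⊓ L₀)) : L) = L₀.subtype y.1 := rfl
    rw [this]
    exact Subgroup.mem_map_iff_mem (Subgroup.subtype_injective _)
  let e1 : ((ρ.ker ⊓ L₀ : Subgroup L) ⧸ (⁅L₀, ρ.ker ⊓ L₀⁆.subgroupOf (ρ.ker ⊓ L₀))) ≃*
      (↥R' ⧸ K'.subgroupOf R') := QuotientGroup.congr _ _ eL he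
  let h2 : ↥R' →* ↥L₀ ⧸ K' := (QuotientGroup.mk' K').comp R'.subtype
  have hker2 : h2.ker = K'.subgroupOf R' := by
    rw [← MonoidHom.comap_ker, QuotientGroup.ker_mk']
    rfl
  have hrange2 : h2.range = Subgroup.map (QuotientGroup.mk' K') R' := by
    rw [MonoidHom.range_comp, Subgroup.range_subtype]
  let e2 : (↥R' ⧸ K'.subgroupOf R') ≃* ↥(Subgroup.map (QuotientGroup.mk' K') R') :=
    ((QuotientGroup.quotientMulEquivOfEq hker2.symm).trans
      (QuotientGroup.quotientKerEquivRange h2)).trans (MulEquiv.subgroupCongr hrange2)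
  exact grpRank_eq_of_mulEquiv (e1.trans e2)
end

section
/- Let L be a finitely generated FAb group and R a normal subgroup of L such that the quotient L/R has no proper finite-index subgroups. Assume that for every finite-index normal subgroup L₂ of L, the commutator subgroup [L₂, R] has finite index in R. Then for every finite-index normal subgroup L₁ of L and every finite-index subgroup R₁ of R that is normal in L, the commutator subgroup [L₁, R₁] has finite index in R₁. -/
/-- Let `L` be a finitely generated FAb group and `R` a normal subgroup such
that `L/R` has no proper finite-index subgroups, and suppose `[L₂, R]` has
finite index in `R` for every finite-index normal subgroup `L₂` of `L`.  Then
for every finite-index normal subgroup `L₁` of `L` and every finite-index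
subgroup `R₁` of `R` normal in `L`, the commutator `[L₁, R₁]` has finite
index in `R₁`. -/
theorem commutator_finiteIndex_of_finiteIndex
    {L : Type*} [Group L] (hfg : Group.FG L) (hFAb : IsFAb L)
    (R : Subgroup L) [R.Normal]
    (hD : ∀ H : Subgroup (L ⧸ R), H.FiniteIndex → H = ⊤)
    (hmax : ∀ L₂ : Subgroup L, L₂.Normal → L₂.FiniteIndex →
      (⁅L₂, R⁆.subgroupOf R).FiniteIndex) :
    ∀ L₁ : Subgroup L, L₁.Normal → L₁.FiniteIndex →
      ∀ R₁ : Subgroup L, R₁ ≤ R → (R₁.subgroupOf R).FiniteIndex → R₁.Normal →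
        (⁅L₁, R₁⁆.subgroupOf R₁).FiniteIndex := by
  intro L₁ hL₁n hL₁f R₁ hR₁R hR₁f hR₁n
  haveI := hL₁n; haveI := hL₁f; haveI := hR₁n; haveI := hR₁f
  classical
  -- the image of `R` in `L ⧸ R₁` is a finite normal subgroup
  set f : ↥R →* L ⧸ R₁ := (QuotientGroup.mk' R₁).comp R.subtype with hf
  have hker : f.ker = R₁.subgroupOf R := by
    ext x
    simp [hf, MonoidHom.mem_ker, QuotientGroup.eq_one_iff, Subgroup.mem_subgroupOf]
  haveI hfinRbar : Finite f.range := by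
    have h1 : f.ker.index ≠ 0 := by
      rw [hker]; exact hR₁f.index_ne_zero
    rw [Subgroup.index_ker] at h1
    exact Nat.finite_of_card_ne_zero h1
  have hrange : f.range = R.map (QuotientGroup.mk' R₁) := by
    rw [hf, MonoidHom.range_comp, Subgroup.range_subtype]
  haveI hRbarn : f.range.Normal := by
    rw [hrange]
    exact Subgroup.Normal.map ‹R.Normal› _ (QuotientGroup.mk'_surjective R₁)
  haveI : Finite (MulAut f.range) :=
    Finite.of_injective (fun e => (e : f.range → f.range)) DFunLike.coe_injective
  -- the kernel of the conjugation action of `L` on this finite group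
  set g : L →* MulAut f.range :=
    (MulAut.conjNormal (H := f.range)).comp (QuotientGroup.mk' R₁) with hg
  haveI : Finite g.range := Subtype.finite
  set N : Subgroup L := g.ker with hN
  haveI : N.Normal := MonoidHom.normal_ker g
  haveI : N.FiniteIndex := Subgroup.finiteIndex_ker g
  have hNR : ⁅N, R⁆ ≤ R₁ := by
    rw [Subgroup.commutator_le]
    intro l hl r hr
    have hmem : QuotientGroup.mk' R₁ r ∈ f.range := by
      rw [hrange]; exact ⟨r, hr, rfl⟩
    have h1 : g l = 1 := hl
    have h2 : ((g l) ⟨QuotientGroup.mk' R₁ r, hmem⟩ : L ⧸ R₁) =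
        QuotientGroup.mk' R₁ l * QuotientGroup.mk' R₁ r * (QuotientGroup.mk' R₁ l)⁻¹ := by
      rw [hg]; exact MulAut.conjNormal_apply _ _
    rw [h1] at h2
    simp only [MulAut.one_apply] at h2
    have h3 : QuotientGroup.mk' R₁ (l * r * l⁻¹ * r⁻¹) = 1 := by
      simp only [map_mul, map_inv]
      rw [← h2]
      group
    rwa [← MonoidHom.mem_ker, QuotientGroup.ker_mk'] at h3
  -- L₂ = L₁ ⊓ N and its derived subgroup L₃
  set L₂ : Subgroup L := L₁ ⊓ N with hL₂
  haveI : L₂.Normal := Subgroup.normal_inf_normal L₁ N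
  haveI : L₂.FiniteIndex := inferInstance
  have hL₂R : ⁅L₂, R⁆ ≤ R₁ :=
    le_trans (Subgroup.commutator_mono inf_le_right le_rfl) hNR
  -- FAb gives that the derived subgroup of L₂ has finite index
  haveI hAb : Finite (Abelianization L₂) := hFAb L₂ inferInstance
  haveI : (commutator L₂).FiniteIndex :=
    @Subgroup.finiteIndex_of_finite_quotient _ _ (commutator L₂) hAb
  have hL₃eq : (commutator L₂).map L₂.subtype = ⁅L₂, L₂⁆ := by
    rw [commutator_def, Subgroup.map_commutator, ← MonoidHom.range_eq_map,
      Subgroup.range_subtype]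
  haveI hL₃f : (⁅L₂, L₂⁆ : Subgroup L).FiniteIndex := by
    rw [← hL₃eq]
    constructor
    rw [Subgroup.index_map_subtype]
    exact mul_ne_zero Subgroup.FiniteIndex.index_ne_zero Subgroup.FiniteIndex.index_ne_zero
  haveI hL₃n : (⁅L₂, L₂⁆ : Subgroup L).Normal := Subgroup.commutator_normal L₂ L₂
  have hmax' : ((⁅⁅L₂, L₂⁆, R⁆ : Subgroup L).subgroupOf R).FiniteIndex :=
    hmax ⁅L₂, L₂⁆ hL₃n hL₃f
  -- three subgroups lemma in the quotient by ⁅L₁, R₁⁆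
  set K : Subgroup L := ⁅L₁, R₁⁆ with hK
  haveI : K.Normal := Subgroup.commutator_normal L₁ R₁
  set π : L →* L ⧸ K := QuotientGroup.mk' K with hπ
  have hmapK : K.map π = ⊥ := by
    rw [Subgroup.map_eq_bot_iff, hπ, QuotientGroup.ker_mk']
  have hsub1 : ⁅L₂.map π, R.map π⁆ ≤ R₁.map π := by
    rw [← Subgroup.map_commutator]
    exact Subgroup.map_mono hL₂R
  have hsub2 : L₂.map π ≤ L₁.map π := Subgroup.map_mono inf_le_left
  have hbot : ⁅L₁.map π, R₁.map π⁆ = ⊥ := by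
    rw [← Subgroup.map_commutator, ← hK, hmapK]
  have h1 : ⁅⁅L₂.map π, R.map π⁆, L₂.map π⁆ = ⊥ := by
    rw [← le_bot_iff, ← hbot, Subgroup.commutator_comm (L₁.map π)]
    exact Subgroup.commutator_mono hsub1 hsub2
  have h2 : ⁅⁅R.map π, L₂.map π⁆, L₂.map π⁆ = ⊥ := by
    rwa [Subgroup.commutator_comm (R.map π)]
  have h3 : ⁅⁅L₂.map π, L₂.map π⁆, R.map π⁆ = ⊥ :=
    Subgroup.commutator_commutator_eq_bot_of_rotate h1 h2
  have h4 : (⁅⁅L₂, L₂⁆, R⁆ : Subgroup L) ≤ K := by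
    have h5 : (⁅⁅L₂, L₂⁆, R⁆ : Subgroup L).map π = ⊥ := by
      rw [Subgroup.map_commutator, Subgroup.map_commutator]
      exact h3
    rw [Subgroup.map_eq_bot_iff, hπ, QuotientGroup.ker_mk'] at h5
    exact h5
  -- index chase
  have hKR₁ : K ≤ R₁ := Subgroup.commutator_le_right L₁ R₁
  set H : Subgroup L := ⁅⁅L₂, L₂⁆, R⁆ with hH
  have hHR : H.relIndex R ≠ 0 := hmax'.index_ne_zero
  have hHR₁ : H ≤ R₁ := le_trans h4 hKR₁
  have hmul : H.relIndex R₁ * R₁.relIndex R = H.relIndex R :=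
    Subgroup.relIndex_mul_relIndex H R₁ R hHR₁ hR₁R
  have hHR₁ne : H.relIndex R₁ ≠ 0 := by
    intro h0
    rw [← hmul, h0, zero_mul] at hHR
    exact hHR rfl
  have hmul2 : H.relIndex K * K.relIndex R₁ = H.relIndex R₁ :=
    Subgroup.relIndex_mul_relIndex H K R₁ h4 hKR₁
  constructor
  show K.relIndex R₁ ≠ 0
  intro h0
  rw [← hmul2, h0, mul_zero] at hHR₁ne
  exact hHR₁ne rfl
end

section
/- Let L be a finitely generated FAb group and R a normal subgroup of L such that the quotient D = L/R has no proper finite-index subgroups, and assume that for every finite-index normal subgroup L₂ of L, the commutator subgroup [L₂, R] has finite index in R. Then the fibre product Γ = L ×_D L (over the quotient map L → D) is FAb. -/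
open Subgroup Pointwise
open scoped commutatorElement

section Helpers

variable {G Q : Type*} [Group G] [Group Q]

lemma finiteIndex_comap (f : G →* Q) (K : Subgroup Q) (h : K.FiniteIndex) :
    (K.comap f).FiniteIndex := by
  constructor
  rw [Subgroup.index_comap]
  intro h0
  exact h.index_ne_zero (Subgroup.index_eq_zero_of_relIndex_eq_zero h0)

lemma finite_range_of_ker_finiteIndex (f : G →* Q) (h : f.ker.FiniteIndex) :
    Finite f.range := by
  haveI := h
  have : Finite (G ⧸ f.ker) := Subgroup.finite_quotient_of_finiteIndex
  exact Finite.of_equiv _ (QuotientGroup.quotientKerEquivRange f).toEquiv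

lemma commutator_finiteIndex_of_finiteAb (h : Finite (Abelianization G)) :
    (commutator G).FiniteIndex := by
  have h1 : Finite (G ⧸ commutator G) := h
  exact Subgroup.finiteIndex_of_finite_quotient

lemma ker_finiteIndex_of_finiteAb (f : G →* Q) (hcomm : ∀ x y : Q, x * y = y * x)
    (h : Finite (Abelianization G)) : f.ker.FiniteIndex := by
  haveI := commutator_finiteIndex_of_finiteAb h
  have hle : commutator G ≤ f.ker := by
    rw [commutator_def, Subgroup.commutator_le]
    intro g₁ _ g₂ _
    rw [MonoidHom.mem_ker, map_commutatorElement, commutatorElement_def,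
      hcomm (f g₁) (f g₂)]
    group
  exact Subgroup.finiteIndex_of_le hle

lemma normal_of_comm {A : Type*} [Group A] (hcomm : ∀ x y : A, x * y = y * x)
    (K : Subgroup A) : K.Normal := by
  constructor
  intro n hn g
  have : g * n * g⁻¹ = n := by rw [hcomm g n, mul_assoc, mul_inv_cancel, mul_one]
  rw [this]; exact hn

lemma finite_sup_of_comm {A : Type*} [Group A] (hcomm : ∀ x y : A, x * y = y * x)
    (H K : Subgroup A) (hH : Finite H) (hK : Finite K) : Finite ↥(H ⊔ K) := by
  haveI : K.Normal := normal_of_comm hcomm K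
  have h1 : (H : Set A).Finite := Set.toFinite _
  have h2 : (K : Set A).Finite := Set.toFinite _
  have h3 : (↑(H ⊔ K) : Set A) = (H : Set A) * (K : Set A) := Subgroup.mul_normal H K
  have h4 : ((H : Set A) * (K : Set A)).Finite := h1.mul h2
  rw [← h3] at h4
  exact h4.to_subtype

lemma finite_finsetSup {A : Type*} [Group A] (hcomm : ∀ x y : A, x * y = y * x)
    {ι : Type*} [DecidableEq ι] (s : Finset ι)
    (f : ι → Subgroup A) (hf : ∀ i, Finite (f i)) : Finite ↥(s.sup f) := by
  classical
  induction s using Finset.induction_on with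
  | empty =>
      rw [Finset.sup_empty]
      have : ((⊥ : Subgroup A) : Set A).Finite := by
        rw [Subgroup.coe_bot]; exact Set.finite_singleton 1
      exact this.to_subtype
  | insert _ _ _ ih =>
      rw [Finset.sup_insert]
      exact finite_sup_of_comm hcomm _ _ (hf _) ih

lemma commutator_mem_of_normal_left {Λ : Subgroup G} (hΛ : Λ.Normal) {a : G}
    (ha : a ∈ Λ) (b : G) : ⁅a, b⁆ ∈ Λ := by
  have h1 : a * (b * a⁻¹ * b⁻¹) ∈ Λ := Λ.mul_mem ha (hΛ.conj_mem a⁻¹ (Λ.inv_mem ha) b)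
  have h2 : ⁅a, b⁆ = a * (b * a⁻¹ * b⁻¹) := by
    simp only [commutatorElement_def]; group
  rw [h2]; exact h1

lemma finite_ab_of_subgroup (H : Subgroup G) (hfi : H.FiniteIndex)
    (hab : Finite (Abelianization ↥H)) : Finite (Abelianization G) := by
  have h1 : (commutator ↥H).FiniteIndex := commutator_finiteIndex_of_finiteAb hab
  set K := (commutator ↥H).map H.subtype with hKdef
  have hKH : K ≤ H := by
    rw [hKdef]
    intro x hx
    obtain ⟨y, _, rfl⟩ := hx
    exact y.2
  have hK : K.FiniteIndex := by
    constructor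
    intro h0
    rw [← Subgroup.relIndex_mul_index hKH] at h0
    rcases Nat.mul_eq_zero.mp h0 with h0 | h0
    · have heq : K.subgroupOf H = commutator ↥H :=
        Subgroup.comap_map_eq_self_of_injective H.subtype_injective _
      rw [Subgroup.relIndex, heq] at h0
      exact h1.index_ne_zero h0
    · exact hfi.index_ne_zero h0
  have hKle : K ≤ commutator G := by
    rw [hKdef]
    rw [_root_.commutator_def, _root_.commutator_def, Subgroup.map_commutator]
    exact Subgroup.commutator_mono le_top le_top
  haveI : (commutator G).FiniteIndex := @Subgroup.finiteIndex_of_le _ _ _ _ hK hKle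
  exact Subgroup.finite_quotient_of_finiteIndex

end Helpers

section KeyLemma

variable {L : Type*} [Group L]

lemma key_lemma (hFAb : IsFAb L) (R : Subgroup L) [R.Normal]
    (hmax : ∀ L₂ : Subgroup L, L₂.Normal → L₂.FiniteIndex →
      (⁅L₂, R⁆.subgroupOf R).FiniteIndex)
    (L₂ S : Subgroup L) (hL₂n : L₂.Normal) (hL₂f : L₂.FiniteIndex)
    (hSR : S ≤ R) (hSn : S.Normal) (hKS : ⁅L₂, R⁆ ≤ S) :
    ((⁅L₂ ⊔ S, S⁆).subgroupOf S).FiniteIndex := by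
  classical
  haveI := hL₂n; haveI := hSn; haveI := hL₂f
  set M : Subgroup L := L₂ ⊔ S with hMdef
  haveI hMn : M.Normal := Subgroup.sup_normal L₂ S
  haveI hMf : M.FiniteIndex := Subgroup.finiteIndex_of_le le_sup_left
  -- ⁅M, R⁆ ≤ S
  have hMR : ⁅M, R⁆ ≤ S := by
    rw [Subgroup.commutator_le]
    intro g hg r hr
    have hgm : g ∈ (L₂ : Set L) * (S : Set L) := by
      rw [← Subgroup.mul_normal]; exact hg
    obtain ⟨x, hx, s, hs, rfl⟩ := hgm
    have h1 : ⁅s, r⁆ ∈ S := by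
      have he : ⁅s, r⁆ = s * (r * s⁻¹ * r⁻¹) := by
        simp only [commutatorElement_def]; group
      rw [he]
      exact S.mul_mem hs (hSn.conj_mem s⁻¹ (S.inv_mem hs) r)
    have h2 : ⁅x, r⁆ ∈ S := hKS (Subgroup.commutator_mem_commutator hx hr)
    have h3 : ⁅x * s, r⁆ = x * ⁅s, r⁆ * x⁻¹ * ⁅x, r⁆ := by
      simp only [commutatorElement_def]; group
    rw [h3]
    exact S.mul_mem (hSn.conj_mem _ h1 x) h2
  set Km : Subgroup L := ⁅M, R⁆ with hKmdef
  have hKmR : (Km.subgroupOf R).FiniteIndex := hmax M hMn hMf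
  have hKmS : Km ≤ S := hMR
  set W : Subgroup L := ⁅M, S⁆ with hWdef
  haveI hWn : W.Normal := Subgroup.commutator_normal M S
  have hWS : W ≤ S := le_trans (Subgroup.commutator_mono le_rfl hSR) hMR
  set W' : Subgroup ↥S := W.subgroupOf S with hW'def
  haveI hW'n : W'.Normal := hWn.subgroupOf S
  -- the quotient is commutative
  have hAcomm : ∀ a b : ↥S ⧸ W', a * b = b * a := by
    intro a b
    refine QuotientGroup.induction_on a fun x => QuotientGroup.induction_on b fun y => ?_
    show QuotientGroup.mk (x * y) = QuotientGroup.mk (y * x)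
    rw [QuotientGroup.eq, Subgroup.mem_subgroupOf]
    have hc : (((x * y)⁻¹ * (y * x) : ↥S) : L) = ⁅((y : L))⁻¹, ((x : L))⁻¹⁆ := by
      push_cast
      simp only [commutatorElement_def]; group
    rw [hc]
    exact Subgroup.commutator_mem_commutator (le_sup_right (α := Subgroup L) (S.inv_mem y.2))
      (S.inv_mem x.2)
  let π : ↥S →* ↥S ⧸ W' := QuotientGroup.mk' W'
  have hcomm_mem : ∀ (g : ↥M) (t : ↥R), ⁅(g : L), (t : L)⁆ ∈ S := fun g t =>
    hMR (Subgroup.commutator_mem_commutator g.2 t.2)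
  -- the homomorphisms f_t
  have hff_mul : ∀ (t : ↥R) (g h : ↥M),
      π ⟨⁅((g * h : ↥M) : L), (t : L)⁆, hcomm_mem (g * h) t⟩ =
        π ⟨⁅(g : L), (t : L)⁆, hcomm_mem g t⟩ * π ⟨⁅(h : L), (t : L)⁆, hcomm_mem h t⟩ := by
    intro t g h
    rw [← map_mul]
    show QuotientGroup.mk _ = QuotientGroup.mk _
    rw [QuotientGroup.eq, Subgroup.mem_subgroupOf]
    have hb : ⁅(h : L), (t : L)⁆ ∈ S := hcomm_mem h t
    have ha : ⁅(g : L), (t : L)⁆ ∈ S := hcomm_mem g t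
    have hc1 : ⁅(g : L), ⁅(h : L), (t : L)⁆⁻¹⁆ ∈ W :=
      Subgroup.commutator_mem_commutator g.2 (S.inv_mem hb)
    have hc2 : ⁅(g : L), (t : L)⁆⁻¹ * ⁅(g : L), ⁅(h : L), (t : L)⁆⁻¹⁆ * ⁅(g : L), (t : L)⁆
        ∈ W := by
      have h4 := hWn.conj_mem _ hc1 (⁅(g : L), (t : L)⁆⁻¹)
      simpa using h4
    have hc3 : ⁅⁅(g : L), (t : L)⁆⁻¹, ⁅(h : L), (t : L)⁆⁻¹⁆ ∈ W :=
      Subgroup.commutator_mem_commutator (le_sup_right (α := Subgroup L) (S.inv_mem ha))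
        (S.inv_mem hb)
    have hcoe : (((⟨⁅((g * h : ↥M) : L), (t : L)⁆, hcomm_mem (g * h) t⟩ : ↥S)⁻¹ *
        (⟨⁅(g : L), (t : L)⁆, ha⟩ * ⟨⁅(h : L), (t : L)⁆, hb⟩ : ↥S) : ↥S) : L) =
        (⁅(g : L), (t : L)⁆⁻¹ * ⁅(g : L), ⁅(h : L), (t : L)⁆⁻¹⁆ * ⁅(g : L), (t : L)⁆) *
          ⁅⁅(g : L), (t : L)⁆⁻¹, ⁅(h : L), (t : L)⁆⁻¹⁆ := by
      push_cast
      simp only [commutatorElement_def]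
      group
    rw [hcoe]
    exact W.mul_mem hc2 hc3
  let ff : ↥R → (↥M →* ↥S ⧸ W') := fun t =>
    MonoidHom.mk' (fun g => π ⟨⁅(g : L), (t : L)⁆, hcomm_mem g t⟩) (hff_mul t)
  have hffrange : ∀ t : ↥R, Finite (ff t).range := fun t =>
    finite_range_of_ker_finiteIndex (ff t)
      (ker_finiteIndex_of_finiteAb (ff t) hAcomm (hFAb M hMf))
  -- finitely many coset representatives
  haveI := hKmR
  haveI hSsubRfi : (S.subgroupOf R).FiniteIndex :=
    @Subgroup.finiteIndex_of_le _ _ _ _ hKmR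
      (Subgroup.comap_mono hKmS : Km.subgroupOf R ≤ S.subgroupOf R)
  haveI : Finite (↥R ⧸ S.subgroupOf R) := Subgroup.finite_quotient_of_finiteIndex
  letI : Fintype (↥R ⧸ S.subgroupOf R) := Fintype.ofFinite _
  set B : Subgroup (↥S ⧸ W') :=
    Finset.univ.sup (fun i : ↥R ⧸ S.subgroupOf R => (ff (Quotient.out i)).range) with hBdef
  have hBfin : Finite ↥B := by
    rw [hBdef]
    exact finite_finsetSup hAcomm Finset.univ _ (fun i => hffrange _)
  set Dsub : Subgroup L := (B.comap π).map S.subtype with hDdef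
  have hWD : W ≤ Dsub := by
    intro w hw
    refine ⟨⟨w, hWS hw⟩, ?_, rfl⟩
    have h1 : π ⟨w, hWS hw⟩ = 1 := by
      show QuotientGroup.mk _ = 1
      rw [QuotientGroup.eq_one_iff]
      exact Subgroup.mem_subgroupOf.mpr hw
    show π ⟨w, hWS hw⟩ ∈ B
    rw [h1]; exact B.one_mem
  have hKmD : Km ≤ Dsub := by
    rw [hKmdef, Subgroup.commutator_le]
    intro g hg r hr
    set i : ↥R ⧸ S.subgroupOf R := QuotientGroup.mk (⟨r, hr⟩ : ↥R) with hidef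
    set t : ↥R := Quotient.out i with htdef
    have hmk : (QuotientGroup.mk t : ↥R ⧸ S.subgroupOf R) = QuotientGroup.mk (⟨r, hr⟩ : ↥R) := by
      rw [htdef, hidef, QuotientGroup.out_eq']
    have hs : (⟨r, hr⟩ : ↥R)⁻¹ * t ∈ S.subgroupOf R := by
      rw [← QuotientGroup.eq]
      exact hmk.symm
    set s : ↥R := (⟨r, hr⟩ : ↥R)⁻¹ * t with hsdef
    have hsS : (s : L) ∈ S := Subgroup.mem_subgroupOf.mp hs
    have hrts : r = (t : L) * ((s : L))⁻¹ := by
      have h6 : (⟨r, hr⟩ : ↥R) = t * s⁻¹ := by rw [hsdef]; group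
      have h7 := congrArg (fun x : ↥R => (x : L)) h6
      simpa using h7
    have h1 : ⁅g, (t : L)⁆ ∈ Dsub := by
      refine ⟨⟨⁅g, (t : L)⁆, hMR (Subgroup.commutator_mem_commutator hg t.2)⟩, ?_, rfl⟩
      show π _ ∈ B
      have hrange : π ⟨⁅g, (t : L)⁆, hMR (Subgroup.commutator_mem_commutator hg t.2)⟩
          ∈ (ff t).range := ⟨⟨g, hg⟩, rfl⟩
      exact Finset.le_sup (f := fun j : ↥R ⧸ S.subgroupOf R => (ff (Quotient.out j)).range)
        (Finset.mem_univ i) hrange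
    have h2 : (t : L) * ⁅g, ((s : L))⁻¹⁆ * ((t : L))⁻¹ ∈ W :=
      hWn.conj_mem _ (Subgroup.commutator_mem_commutator hg (S.inv_mem hsS)) (t : L)
    have h3 : ⁅g, r⁆ = ⁅g, (t : L)⁆ * ((t : L) * ⁅g, ((s : L))⁻¹⁆ * ((t : L))⁻¹) := by
      rw [hrts]
      simp only [commutatorElement_def]
      group
    rw [h3]
    exact Dsub.mul_mem h1 (hWD h2)
  have h5 : Km.subgroupOf S ≤ B.comap π := by
    intro x hx
    rw [Subgroup.mem_subgroupOf] at hx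
    have hxd := hKmD hx
    rw [Subgroup.mem_map] at hxd
    obtain ⟨y, hy, hyx⟩ := hxd
    have hyx2 : y = x := Subtype.ext hyx
    exact hyx2 ▸ hy
  have hKmSfi : (Km.subgroupOf S).FiniteIndex := by
    constructor
    intro h0
    have h8 := Subgroup.relIndex_mul_relIndex Km S R hKmS hSR
    rw [show Km.relIndex S = (Km.subgroupOf S).index from rfl, h0, zero_mul] at h8
    exact hKmR.index_ne_zero ((show Km.relIndex R = (Km.subgroupOf R).index from rfl) ▸ h8.symm)
  haveI hBcfi : (B.comap π).FiniteIndex := @Subgroup.finiteIndex_of_le _ _ _ _ hKmSfi h5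
  haveI hBfi : B.FiniteIndex := by
    constructor
    rw [← Subgroup.index_comap_of_surjective B (QuotientGroup.mk'_surjective W')]
    exact hBcfi.index_ne_zero
  haveI : Finite ((↥S ⧸ W') ⧸ B) := Subgroup.finite_quotient_of_finiteIndex
  haveI : Finite ↥B := hBfin
  have hAfin : Finite (↥S ⧸ W') :=
    Finite.of_equiv _ (Subgroup.groupEquivQuotientProdSubgroup (s := B)).symm
  exact ⟨Subgroup.index_ne_zero_of_finite⟩

end KeyLemma

section Main

lemma finite_ab_of_mulEquiv {X Y : Type*} [Group X] [Group Y] (e : X ≃* Y)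
    (h : Finite (Abelianization Y)) : Finite (Abelianization X) := by
  have fsurj : Function.Surjective (Abelianization.map e.symm.toMonoidHom) := by
    intro q
    refine QuotientGroup.induction_on q fun x => ?_
    refine ⟨Abelianization.of (e x), ?_⟩
    show Abelianization.map e.symm.toMonoidHom (Abelianization.of (e x)) = Abelianization.of x
    rw [Abelianization.map_of]
    simp
  exact Finite.of_surjective _ fsurj

theorem main_abstract
    {L : Type*} [Group L] (hFAb : IsFAb L)
    (R : Subgroup L) [R.Normal]
    (hmax : ∀ L₂ : Subgroup L, L₂.Normal → L₂.FiniteIndex →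
      (⁅L₂, R⁆.subgroupOf R).FiniteIndex)
    (P : Subgroup (L × L))
    (hmemP : ∀ p : L × L, p ∈ P ↔ QuotientGroup.mk' R p.1 = QuotientGroup.mk' R p.2) :
    IsFAb ↥P := by
  classical
  intro Λ0 hΛ0
  haveI := hΛ0
  set Λ : Subgroup ↥P := Λ0.normalCore with hΛdef
  haveI hΛfi : Λ.FiniteIndex := Subgroup.finiteIndex_normalCore _
  haveI hΛn : Λ.Normal := Subgroup.normalCore_normal Λ0
  have hΛle : Λ ≤ Λ0 := Subgroup.normalCore_le Λ0
  suffices hQfin : Finite (Abelianization ↥Λ) by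
    have hfi' : (Λ.subgroupOf Λ0).FiniteIndex := by
      constructor
      intro h0
      have h8 := Subgroup.relIndex_mul_index hΛle
      rw [show Λ.relIndex Λ0 = (Λ.subgroupOf Λ0).index from rfl, h0, zero_mul] at h8
      exact hΛfi.index_ne_zero h8.symm
    have hab : Finite (Abelianization ↥(Λ.subgroupOf Λ0)) :=
      finite_ab_of_mulEquiv (Subgroup.subgroupOfEquivOfLe hΛle) hQfin
    exact finite_ab_of_subgroup (Λ.subgroupOf Λ0) hfi' hab
  -- the diagonal and second-factor homomorphisms
  let δ : L →* ↥P := ((MonoidHom.id L).prod (MonoidHom.id L)).codRestrict P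
    (fun x => (hmemP _).mpr rfl)
  let j : ↥R →* ↥P := ((1 : ↥R →* L).prod R.subtype).codRestrict P
    (fun r => (hmemP _).mpr (by
      show QuotientGroup.mk' R 1 = QuotientGroup.mk' R (r : L)
      rw [map_one, QuotientGroup.mk'_apply]
      exact ((QuotientGroup.eq_one_iff (r : L)).mpr r.2).symm))
  have hδcoe : ∀ x : L, ((δ x : ↥P) : L × L) = (x, x) := fun x => rfl
  have hjcoe : ∀ r : ↥R, ((j r : ↥P) : L × L) = (1, (r : L)) := fun r => rfl
  set L₂ : Subgroup L := Λ.comap δ with hL₂def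
  set S'r : Subgroup ↥R := Λ.comap j with hS'rdef
  set S'L : Subgroup L := S'r.map R.subtype with hS'Ldef
  have hL₂fi : L₂.FiniteIndex := finiteIndex_comap δ Λ hΛfi
  have hS'rfi : S'r.FiniteIndex := finiteIndex_comap j Λ hΛfi
  have hL₂n : L₂.Normal := by
    constructor
    intro n hn g
    have hn' : δ n ∈ Λ := Subgroup.mem_comap.mp hn
    have he : δ (g * n * g⁻¹) = δ g * δ n * (δ g)⁻¹ := by
      rw [map_mul, map_mul, map_inv]
    exact Subgroup.mem_comap.mpr (he ▸ hΛn.conj_mem _ hn' (δ g))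
  have hS'Lle : S'L ≤ R := Subgroup.map_subtype_le S'r
  have hS'Ln : S'L.Normal := by
    constructor
    intro n hn g
    obtain ⟨m, hm, rfl⟩ := Subgroup.mem_map.mp hn
    have hmemR : g * (m : L) * g⁻¹ ∈ R :=
      (inferInstance : R.Normal).conj_mem _ m.2 g
    refine Subgroup.mem_map.mpr ⟨⟨g * (m : L) * g⁻¹, hmemR⟩, ?_, rfl⟩
    have key : j ⟨g * (m : L) * g⁻¹, hmemR⟩ = δ g * j m * (δ g)⁻¹ := by
      apply Subtype.ext
      show ((1 : L), g * (m : L) * g⁻¹) = ((δ g * j m * (δ g)⁻¹ : ↥P) : L × L)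
      simp only [Subgroup.coe_mul, Subgroup.coe_inv, hδcoe, hjcoe, Prod.mk_mul_mk,
        Prod.inv_mk, Prod.mk.injEq]
      refine ⟨by group, trivial⟩
    have hm' : j m ∈ Λ := Subgroup.mem_comap.mp hm
    exact Subgroup.mem_comap.mpr (key ▸ hΛn.conj_mem _ hm' (δ g))
  have hKS : ⁅L₂, R⁆ ≤ S'L := by
    rw [Subgroup.commutator_le]
    intro x hx r hr
    have hmemR : ⁅x, r⁆ ∈ R := by
      have he : ⁅x, r⁆ = (x * r * x⁻¹) * r⁻¹ := by
        exact commutatorElement_def _ _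
      rw [he]
      exact R.mul_mem ((inferInstance : R.Normal).conj_mem r hr x) (R.inv_mem hr)
    refine Subgroup.mem_map.mpr ⟨⟨⁅x, r⁆, hmemR⟩, ?_, rfl⟩
    have key : j ⟨⁅x, r⁆, hmemR⟩ = ⁅δ x, j ⟨r, hr⟩⁆ := by
      apply Subtype.ext
      show ((1 : L), ⁅x, r⁆) = ((⁅δ x, j ⟨r, hr⟩⁆ : ↥P) : L × L)
      simp only [commutatorElement_def, Subgroup.coe_mul, Subgroup.coe_inv, hδcoe, hjcoe,
        Prod.mk_mul_mk, Prod.inv_mk, Prod.mk.injEq]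
      refine ⟨by group, trivial⟩
    have hx' : δ x ∈ Λ := Subgroup.mem_comap.mp hx
    exact Subgroup.mem_comap.mpr (key ▸ commutator_mem_of_normal_left hΛn hx' (j ⟨r, hr⟩))
  -- apply the key lemma
  have hW := key_lemma hFAb R hmax L₂ S'L hL₂n hL₂fi hS'Lle hS'Ln hKS
  set W : Subgroup L := ⁅L₂ ⊔ S'L, S'L⁆ with hWdef
  -- j-images of W lie in the commutator subgroup of Λ
  have hWA : ∀ m : ↥R, (m : L) ∈ W → j m ∈ ⁅Λ, Λ⁆ := by
    have hWT : W ≤ (((⁅Λ, Λ⁆ : Subgroup ↥P).comap j).map R.subtype) := by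
      rw [hWdef, Subgroup.commutator_le]
      intro g hg s hs
      have hgm : g ∈ (L₂ : Set L) * (S'L : Set L) := by
        haveI := hS'Ln
        rw [← Subgroup.mul_normal]; exact hg
      obtain ⟨x, hx, s₀, hs₀, rfl⟩ := hgm
      obtain ⟨m₀, hm₀, rfl⟩ := Subgroup.mem_map.mp hs₀
      obtain ⟨ms, hms, rfl⟩ := Subgroup.mem_map.mp hs
      have hmemR : ⁅x * (m₀ : L), (ms : L)⁆ ∈ R := by
        have he : ⁅x * (m₀ : L), (ms : L)⁆ =
            ((x * (m₀ : L)) * (ms : L) * (x * (m₀ : L))⁻¹) * ((ms : L))⁻¹ := by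
          exact commutatorElement_def _ _
        rw [he]
        exact R.mul_mem ((inferInstance : R.Normal).conj_mem _ ms.2 _) (R.inv_mem ms.2)
      refine Subgroup.mem_map.mpr ⟨⟨_, hmemR⟩, ?_, rfl⟩
      have ha : δ x * j m₀ ∈ Λ :=
        Λ.mul_mem (Subgroup.mem_comap.mp hx) (Subgroup.mem_comap.mp hm₀)
      have hb : j ms ∈ Λ := Subgroup.mem_comap.mp hms
      have key : j ⟨⁅x * (m₀ : L), (ms : L)⁆, hmemR⟩ = ⁅δ x * j m₀, j ms⁆ := by
        apply Subtype.ext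
        show ((1 : L), ⁅x * (m₀ : L), (ms : L)⁆) = ((⁅δ x * j m₀, j ms⁆ : ↥P) : L × L)
        simp only [commutatorElement_def, Subgroup.coe_mul, Subgroup.coe_inv, hδcoe, hjcoe,
          Prod.mk_mul_mk, Prod.inv_mk, Prod.mk.injEq]
        refine ⟨by group, trivial⟩
      exact Subgroup.mem_comap.mpr (key ▸ Subgroup.commutator_mem_commutator ha hb)
    intro m hm
    obtain ⟨m', hm', hmm⟩ := Subgroup.mem_map.mp (hWT hm)
    have : m' = m := Subtype.ext hmm
    exact Subgroup.mem_comap.mp (this ▸ hm')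
  -- abelianization of Λ
  have hcommΛ : (⁅Λ, Λ⁆ : Subgroup ↥P).subgroupOf Λ = commutator ↥Λ := by
    rw [_root_.commutator_def]
    have h1 : (⁅Λ, Λ⁆ : Subgroup ↥P) =
        Subgroup.map Λ.subtype ⁅(⊤ : Subgroup ↥Λ), (⊤ : Subgroup ↥Λ)⁆ := by
      rw [Subgroup.map_commutator]
      congr 1 <;> rw [← MonoidHom.range_eq_map, Λ.range_subtype]
    rw [h1]
    exact Subgroup.comap_map_eq_self_of_injective Λ.subtype_injective _
  have hofker : ∀ u : ↥Λ, (u : ↥P) ∈ (⁅Λ, Λ⁆ : Subgroup ↥P) →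
      (Abelianization.of : ↥Λ →* Abelianization ↥Λ) u = 1 := by
    intro u hu
    have h2 : u ∈ commutator ↥Λ := hcommΛ ▸ Subgroup.mem_subgroupOf.mpr hu
    exact MonoidHom.mem_ker.mp
      (Abelianization.commutator_subset_ker (Abelianization.of : ↥Λ →* Abelianization ↥Λ) h2)
  -- homomorphisms into the abelianization of Λ
  let ρ : ↥L₂ →* ↥Λ := (δ.comp L₂.subtype).codRestrict Λ (fun x => Subgroup.mem_comap.mp x.2)
  let σ : ↥S'r →* ↥Λ := (j.comp S'r.subtype).codRestrict Λ (fun m => Subgroup.mem_comap.mp m.2)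
  let α : ↥L₂ →* Abelianization ↥Λ := (Abelianization.of).comp ρ
  let γ : ↥S'r →* Abelianization ↥Λ := (Abelianization.of).comp σ
  have hαr : Finite α.range := finite_range_of_ker_finiteIndex α
    (ker_finiteIndex_of_finiteAb α (fun a b => mul_comm a b) (hFAb L₂ hL₂fi))
  let e : ↥S'r ≃* ↥S'L := Subgroup.equivMapOfInjective S'r R.subtype R.subtype_injective
  have hγker : γ.ker.FiniteIndex := by
    have hle : (W.subgroupOf S'L).comap e.toMonoidHom ≤ γ.ker := by
      intro m hm
      have hmW : ((m : ↥R) : L) ∈ W := by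
        have h1 := Subgroup.mem_subgroupOf.mp (Subgroup.mem_comap.mp hm)
        have h1c : ((e.toMonoidHom m : ↥S'L) : L) = ((m : ↥R) : L) := rfl
        rwa [h1c] at h1
      have h2 : j (m : ↥R) ∈ (⁅Λ, Λ⁆ : Subgroup ↥P) := hWA _ hmW
      show γ m = 1
      exact hofker (σ m) h2
    have hcfi : ((W.subgroupOf S'L).comap e.toMonoidHom).FiniteIndex := by
      constructor
      rw [Subgroup.index_comap_of_surjective _ e.surjective]
      exact hW.index_ne_zero
    exact @Subgroup.finiteIndex_of_le _ _ _ _ hcfi hle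
  have hγr : Finite γ.range := finite_range_of_ker_finiteIndex γ hγker
  set Q₀ : Subgroup (Abelianization ↥Λ) := α.range ⊔ γ.range with hQ₀def
  have hQ₀fin : Finite ↥Q₀ := finite_sup_of_comm (fun a b => mul_comm a b) _ _ hαr hγr
  -- the subgroup Ξ has finite index in P
  set Ξ : Subgroup ↥P := L₂.map δ ⊔ S'r.map j with hΞdef
  have hΞΛ : Ξ ≤ Λ := sup_le (Subgroup.map_le_iff_le_comap.mpr le_rfl)
    (Subgroup.map_le_iff_le_comap.mpr le_rfl)
  haveI := hL₂fi; haveI := hS'rfi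
  haveI : Finite (L ⧸ L₂) := Subgroup.finite_quotient_of_finiteIndex
  haveI : Finite (↥R ⧸ S'r) := Subgroup.finite_quotient_of_finiteIndex
  have hFsurj : Function.Surjective (fun pq : (L ⧸ L₂) × (↥R ⧸ S'r) =>
      (QuotientGroup.mk (δ (Quotient.out pq.1) * j (Quotient.out pq.2)) : ↥P ⧸ Ξ)) := by
    intro c
    refine QuotientGroup.induction_on c fun z => ?_
    obtain ⟨⟨x, y⟩, hz⟩ := z
    have hz' : (QuotientGroup.mk x : L ⧸ R) = QuotientGroup.mk y := by
      have h0 := (hmemP (x, y)).mp hz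
      simpa [QuotientGroup.mk'_apply] using h0
    have hxy : x⁻¹ * y ∈ R := QuotientGroup.eq.mp hz'
    set p : L ⧸ L₂ := QuotientGroup.mk x with hp
    set u : L := Quotient.out p with hudef
    have hc1 : x⁻¹ * u ∈ L₂ := by
      have h1 : (QuotientGroup.mk x : L ⧸ L₂) = QuotientGroup.mk u :=
        (QuotientGroup.out_eq' p).symm
      exact QuotientGroup.eq.mp h1
    have hr₀ : u⁻¹ * (x * y⁻¹) * u ∈ R := by
      have h2 : x * y⁻¹ ∈ R := by
        have h3 : x * (x⁻¹ * y)⁻¹ * x⁻¹ ∈ R :=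
          (inferInstance : R.Normal).conj_mem _ (R.inv_mem hxy) x
        have h4 : x * (x⁻¹ * y)⁻¹ * x⁻¹ = x * y⁻¹ := by group
        rwa [h4] at h3
      have h5 := (inferInstance : R.Normal).conj_mem _ h2 u⁻¹
      simpa using h5
    set r₀ : ↥R := ⟨u⁻¹ * (x * y⁻¹) * u, hr₀⟩ with hr₀def
    set q : ↥R ⧸ S'r := QuotientGroup.mk r₀⁻¹ with hqdef
    set v : ↥R := Quotient.out q with hvdef
    have hw : r₀ * v ∈ S'r := by
      have h6 : (QuotientGroup.mk (r₀⁻¹) : ↥R ⧸ S'r) = QuotientGroup.mk v :=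
        (QuotientGroup.out_eq' q).symm
      have h7 := QuotientGroup.eq.mp h6
      simpa using h7
    refine ⟨(p, q), ?_⟩
    show (QuotientGroup.mk (δ u * j v) : ↥P ⧸ Ξ) = QuotientGroup.mk ⟨(x, y), hz⟩
    have hr₀coe : ((r₀ : ↥R) : L) = u⁻¹ * (x * y⁻¹) * u := rfl
    have hzf : (⟨(x, y), hz⟩ : ↥P)⁻¹ * (δ u * j v) = δ (x⁻¹ * u) * j (r₀ * v) := by
      apply Subtype.ext
      show ((⟨(x, y), hz⟩ : ↥P)⁻¹ * (δ u * j v) : ↥P).1 = (δ (x⁻¹ * u) * j (r₀ * v) : ↥P).1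
      simp only [Subgroup.coe_mul, Subgroup.coe_inv, hδcoe, hjcoe]
      show (x, y)⁻¹ * ((u, u) * (1, (v : L))) =
        (x⁻¹ * u, x⁻¹ * u) * (1, ((r₀ * v : ↥R) : L))
      have h9 : ((r₀ * v : ↥R) : L) = (u⁻¹ * (x * y⁻¹) * u) * (v : L) := by
        rw [Subgroup.coe_mul, hr₀coe]
      rw [h9, Prod.inv_mk, Prod.mk_mul_mk, Prod.mk_mul_mk, Prod.mk_mul_mk, Prod.mk.injEq]
      refine ⟨by group, by group⟩
    have hξ : δ (x⁻¹ * u) * j (r₀ * v) ∈ Ξ :=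
      Ξ.mul_mem ((le_sup_left : L₂.map δ ≤ L₂.map δ ⊔ S'r.map j)
          (Subgroup.mem_map_of_mem δ hc1))
        ((le_sup_right : S'r.map j ≤ L₂.map δ ⊔ S'r.map j) (Subgroup.mem_map_of_mem j hw))
    rw [QuotientGroup.eq]
    have h10 : (δ u * j v)⁻¹ * (⟨(x, y), hz⟩ : ↥P) =
        ((⟨(x, y), hz⟩ : ↥P)⁻¹ * (δ u * j v))⁻¹ := by group
    rw [h10, hzf]
    exact Ξ.inv_mem hξ
  have hΞfi : Ξ.FiniteIndex := by
    have hfin : Finite (↥P ⧸ Ξ) := Finite.of_surjective _ hFsurj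
    exact Subgroup.finiteIndex_of_finite_quotient
  have hΞΛfi : (Ξ.subgroupOf Λ).FiniteIndex := by
    constructor
    intro h0
    have h8 := Subgroup.relIndex_mul_index hΞΛ
    rw [show Ξ.relIndex Λ = (Ξ.subgroupOf Λ).index from rfl, h0, zero_mul] at h8
    exact hΞfi.index_ne_zero h8.symm
  have hle2 : Ξ.subgroupOf Λ ≤
      Q₀.comap (Abelianization.of : ↥Λ →* Abelianization ↥Λ) := by
    have hΞZ : Ξ ≤
        (Q₀.comap (Abelianization.of : ↥Λ →* Abelianization ↥Λ)).map Λ.subtype := by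
      rw [hΞdef]
      refine sup_le ?_ ?_
      · intro w hw
        obtain ⟨x, hx, rfl⟩ := Subgroup.mem_map.mp hw
        refine Subgroup.mem_map.mpr ⟨⟨δ x, Subgroup.mem_comap.mp hx⟩, ?_, rfl⟩
        refine Subgroup.mem_comap.mpr ?_
        have hmem : Abelianization.of (⟨δ x, Subgroup.mem_comap.mp hx⟩ : ↥Λ) ∈ α.range :=
          ⟨⟨x, hx⟩, rfl⟩
        exact (le_sup_left : α.range ≤ α.range ⊔ γ.range) hmem
      · intro w hw
        obtain ⟨m, hm, rfl⟩ := Subgroup.mem_map.mp hw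
        refine Subgroup.mem_map.mpr ⟨⟨j m, Subgroup.mem_comap.mp hm⟩, ?_, rfl⟩
        refine Subgroup.mem_comap.mpr ?_
        have hmem : Abelianization.of (⟨j m, Subgroup.mem_comap.mp hm⟩ : ↥Λ) ∈ γ.range :=
          ⟨⟨m, hm⟩, rfl⟩
        exact (le_sup_right : γ.range ≤ α.range ⊔ γ.range) hmem
    intro u hu
    obtain ⟨u', hu', huu⟩ := Subgroup.mem_map.mp (hΞZ (Subgroup.mem_subgroupOf.mp hu))
    have heq : u' = u := Subtype.ext huu
    exact heq ▸ hu'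
  haveI hQcfi : (Q₀.comap (Abelianization.of : ↥Λ →* Abelianization ↥Λ)).FiniteIndex :=
    @Subgroup.finiteIndex_of_le _ _ _ _ hΞΛfi hle2
  have hofsurj : Function.Surjective (Abelianization.of : ↥Λ →* Abelianization ↥Λ) :=
    fun q => QuotientGroup.induction_on q fun g => ⟨g, rfl⟩
  haveI hQ₀fi : Q₀.FiniteIndex := by
    constructor
    rw [← Subgroup.index_comap_of_surjective Q₀ hofsurj]
    exact hQcfi.index_ne_zero
  haveI : Finite ((Abelianization ↥Λ) ⧸ Q₀) := Subgroup.finite_quotient_of_finiteIndex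
  haveI : Finite ↥Q₀ := hQ₀fin
  exact Finite.of_equiv _ (Subgroup.groupEquivQuotientProdSubgroup (s := Q₀)).symm

end Main

/-- Let `L` be a finitely generated FAb group and `R` a normal subgroup such
that `D = L/R` has no proper finite-index subgroups, and suppose `[L₂, R]`
has finite index in `R` for every finite-index normal subgroup `L₂` of `L`.
Then the fibre product `Γ = L ×_D L` over the quotient map is FAb. -/
theorem isFAb_fiberProduct_of_commutator_finiteIndex
    {L : Type*} [Group L] (hfg : Group.FG L) (hFAb : IsFAb L)
    (R : Subgroup L) [R.Normal]
    (hD : ∀ H : Subgroup (L ⧸ R), H.FiniteIndex → H = ⊤)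
    (hmax : ∀ L₂ : Subgroup L, L₂.Normal → L₂.FiniteIndex →
      (⁅L₂, R⁆.subgroupOf R).FiniteIndex) :
    IsFAb (fiberProduct (QuotientGroup.mk' R) (QuotientGroup.mk' R)) := by
  exact main_abstract hFAb R hmax (fiberProduct (QuotientGroup.mk' R) (QuotientGroup.mk' R))
    (fun p => Iff.rfl)
end

section
/- Let E be a finitely generated FAb group and C a central subgroup of E such that the quotient D = E/C has no proper finite-index subgroups. Then the intersection of all finite-index subgroups of E has finite index in E; that is, the profinite completion of E is finite. -/
/-- A subgroup contained in the center is normal. -/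
theorem normal_of_le_center {E : Type*} [Group E] {C : Subgroup E}
    (hC : C ≤ Subgroup.center E) : C.Normal :=
  ⟨fun n hn g => by
    rw [Subgroup.mem_center_iff.mp (hC hn) g, mul_assoc, mul_inv_cancel, mul_one]
    exact hn⟩

open scoped commutatorElement

private lemma comm_central_left {E : Type*} [Group E] {c : E}
    (hc : ∀ g : E, g * c = c * g) (k m : E) : ⁅k * c, m⁆ = ⁅k, m⁆ := by
  have h1 : ∀ g : E, c * g = g * c := fun g => (hc g).symm
  calc ⁅k * c, m⁆ = k * c * m * (c⁻¹ * k⁻¹) * m⁻¹ := by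
        rw [commutatorElement_def, mul_inv_rev]
    _ = k * (m * c) * (c⁻¹ * k⁻¹) * m⁻¹ := by rw [mul_assoc k c m, h1 m]
    _ = ⁅k, m⁆ := by group

private lemma comm_central_right {E : Type*} [Group E] {c : E}
    (hc : ∀ g : E, g * c = c * g) (k m : E) : ⁅k, m * c⁆ = ⁅k, m⁆ := by
  have hcinv : ∀ g : E, g * c⁻¹ = c⁻¹ * g := fun g => by
    calc g * c⁻¹ = c⁻¹ * (g * c) * c⁻¹ := by rw [hc g]; group
      _ = c⁻¹ * g := by group
  calc ⁅k, m * c⁆ = k * (m * c) * k⁻¹ * (c⁻¹ * m⁻¹) := by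
        rw [commutatorElement_def, mul_inv_rev]
    _ = k * (c * m) * k⁻¹ * (c⁻¹ * m⁻¹) := by rw [hc m]
    _ = k * c * (m * k⁻¹ * c⁻¹) * m⁻¹ := by group
    _ = k * c * (c⁻¹ * (m * k⁻¹)) * m⁻¹ := by rw [hcinv (m * k⁻¹)]
    _ = ⁅k, m⁆ := by group

/-- Let `E` be a finitely generated FAb group and `C` a central subgroup such
that `E/C` has no proper finite-index subgroups.  Then the intersection of
all finite-index subgroups of `E` has finite index in `E` (equivalently, the
profinite completion of `E` is finite). -/
theorem finiteIndex_iInf_of_central_quotient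
    {E : Type*} [Group E] (hfg : Group.FG E) (hFAb : IsFAb E)
    (C : Subgroup E) (hC : C ≤ Subgroup.center E)
    (hD : haveI : C.Normal := normal_of_le_center hC
      ∀ H : Subgroup (E ⧸ C), H.FiniteIndex → H = ⊤) :
    (⨅ K ∈ {K : Subgroup E | K.FiniteIndex}, K).FiniteIndex := by
  haveI : C.Normal := normal_of_le_center hC
  -- E has finite abelianization
  have htop : (⊤ : Subgroup E).FiniteIndex := ⟨by simp [Subgroup.index_top]⟩
  have hfin : Finite (Abelianization E) := by
    have := hFAb ⊤ htop
    exact Finite.of_equiv _ (Subgroup.topEquiv.abelianizationCongr).toEquiv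
  -- hence the commutator subgroup has finite index
  haveI : Finite (E ⧸ commutator E) := hfin
  haveI hcfi : (commutator E).FiniteIndex := Subgroup.finiteIndex_of_finite_quotient
  -- the commutator subgroup is contained in every finite-index subgroup
  have hle : commutator E ≤ ⨅ K ∈ {K : Subgroup E | K.FiniteIndex}, K := by
    refine le_iInf fun K => le_iInf fun hK => ?_
    -- the image of K in E ⧸ C has finite index, hence is ⊤
    set π := QuotientGroup.mk' C
    have hsurj : Function.Surjective π := QuotientGroup.mk'_surjective C
    have hmapfi : (K.map π).FiniteIndex := by
      constructor
      intro h0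
      exact hK.index_ne_zero (Nat.eq_zero_of_zero_dvd (h0 ▸ K.index_map_dvd hsurj))
    have hmap : K.map π = ⊤ := hD _ hmapfi
    -- so every element of E is (element of K) * (central element)
    have key : ∀ a : E, ∃ k ∈ K, ∃ c ∈ C, a = k * c := by
      intro a
      have : π a ∈ K.map π := hmap ▸ Subgroup.mem_top _
      obtain ⟨k, hk, hka⟩ := this
      have hk' : π k = π a := hka
      rw [QuotientGroup.mk'_eq_mk'] at hk'
      obtain ⟨z, hz, hzz⟩ := hk'
      exact ⟨k, hk, z, hz, hzz.symm⟩
    rw [commutator_eq_closure, Subgroup.closure_le]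
    rintro x ⟨a, b, rfl⟩
    obtain ⟨k, hk, c, hc', rfl⟩ := key a
    obtain ⟨k', hk', c'', hc'', rfl⟩ := key b
    have h1 : ∀ g : E, g * c = c * g := Subgroup.mem_center_iff.mp (hC hc')
    have h2 : ∀ g : E, g * c'' = c'' * g := Subgroup.mem_center_iff.mp (hC hc'')
    have : ⁅k * c, k' * c''⁆ = ⁅k, k'⁆ := by
      rw [comm_central_right h2, comm_central_left h1]
    rw [SetLike.mem_coe, this]
    rw [commutatorElement_def]
    exact K.mul_mem (K.mul_mem (K.mul_mem hk hk') (K.inv_mem hk)) (K.inv_mem hk')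
  exact Subgroup.finiteIndex_of_le hle
end
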